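/- arXiv:1307.2808 — 7 statements merged into one kernel-verified Lean document; each statement's English description precedes it below -/
import Mathlib

section
/- Consider an FTMed instance in which all points lie on the real line, i.e., F ∪ C ⊆ ℝ and d(a,b) = |a − b|. Then the LP relaxation always has an integral optimal solution: for every feasible fractional solution (x,y) of the LP relaxation, there exists a set S ⊆ F with |S| ≤ k and |S| ≥ r_j for all j such that ∑_{j∈C} (sum of the r_j smallest values among {d(j,i) : i ∈ S}) ≤ ∑_{j∈C}∑_{i∈F} d(i,j)·x_{ij}. -/
open scoped BigOperators

/-- A fault-tolerant k-median instance: facilities `F` and clients `C` in a metric space,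
requirements `req j ≥ 1` for clients, and a budget `k ≥ max_j req j`. -/
structure FTMedInstance (X : Type*) [MetricSpace X] where
  F : Finset X
  C : Finset X
  req : X → ℕ
  k : ℕ
  req_pos : ∀ j ∈ C, 0 < req j
  req_le_k : ∀ j ∈ C, req j ≤ k

namespace FTMedInstance

variable {X : Type*} [MetricSpace X]

/-- Sum of the `r` smallest values among the multiset `{d(j,i) : i ∈ S}`. -/
noncomputable def kSmallestSum (j : X) (S : Finset X) (r : ℕ) : ℝ :=
  (((S.val.map fun i => dist j i).sort (· ≤ ·)).take r).sum

/-- Cost of the integral solution `S`: each client is served by its `req j` closest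
facilities of `S`. -/
noncomputable def cost (I : FTMedInstance X) (S : Finset X) : ℝ :=
  ∑ j ∈ I.C, kSmallestSum j S (I.req j)

/-- Feasibility for the natural LP relaxation of fault-tolerant k-median. -/
def LPFeasible (I : FTMedInstance X) (x : X → X → ℝ) (y : X → ℝ) : Prop :=
  (∀ i ∈ I.F, ∀ j ∈ I.C, 0 ≤ x i j ∧ x i j ≤ 1) ∧
  (∀ i ∈ I.F, 0 ≤ y i ∧ y i ≤ 1) ∧
  (∀ i ∈ I.F, ∀ j ∈ I.C, x i j ≤ y i) ∧
  (∀ j ∈ I.C, ∑ i ∈ I.F, x i j = (I.req j : ℝ)) ∧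
  (∑ i ∈ I.F, y i ≤ (I.k : ℝ))

/-- Objective value of the LP relaxation. -/
noncomputable def LPObj (I : FTMedInstance X) (x : X → X → ℝ) : ℝ :=
  ∑ j ∈ I.C, ∑ i ∈ I.F, dist i j * x i j

end FTMedInstance

namespace FTMedLine

open MeasureTheory Finset

/-- prefix sums of `y` along the list `l`. -/
def Yp (l : List ℝ) (y : ℝ → ℝ) (t : ℕ) : ℝ := ((l.take t).map y).sum

/-- quantile index. -/
noncomputable def idxp (l : List ℝ) (y : ℝ → ℝ) (u : ℝ) : ℕ :=
  sInf {t : ℕ | u ≤ Yp l y (t + 1)}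

/-- quantile point. -/
noncomputable def posp (l : List ℝ) (y : ℝ → ℝ) (u : ℝ) : ℝ := l.getD (idxp l y u) 0

/-- step function: distance from `j` to the quantile point. -/
noncomputable def hstep (l : List ℝ) (y : ℝ → ℝ) (j u : ℝ) : ℝ := dist j (posp l y u)

variable {l : List ℝ} {y : ℝ → ℝ}

lemma Yp_succ {t : ℕ} (ht : t < l.length) :
    Yp l y (t + 1) = Yp l y t + y (l.getD t 0) := by
  simp only [Yp, List.take_succ, List.map_append, List.sum_append,
    List.getElem?_eq_getElem ht, List.getD_eq_getElem l 0 ht]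
  simp

lemma Yp_eq_top {t : ℕ} (ht : l.length ≤ t) : Yp l y t = Yp l y l.length := by
  simp [Yp, List.take_of_length_le ht, List.take_length]

lemma Yp_mono (hy0 : ∀ p ∈ l, 0 ≤ y p) : Monotone (Yp l y) := by
  apply monotone_nat_of_le_succ
  intro t
  by_cases ht : t < l.length
  · rw [Yp_succ ht]
    have : 0 ≤ y (l.getD t 0) := hy0 _ (List.getD_eq_getElem l 0 ht ▸ List.getElem_mem ht)
    linarith
  · rw [Yp_eq_top (le_of_not_gt ht), Yp_eq_top (by omega : l.length ≤ t + 1)]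

lemma Yp_le_top (hy0 : ∀ p ∈ l, 0 ≤ y p) (t : ℕ) : Yp l y t ≤ Yp l y l.length := by
  by_cases ht : t ≤ l.length
  · exact Yp_mono hy0 ht
  · exact le_of_eq (Yp_eq_top (by omega))

lemma Yp_zero : Yp l y 0 = 0 := rfl

lemma idx_eq (hy0 : ∀ p ∈ l, 0 ≤ y p) {t : ℕ} {u : ℝ}
    (h1 : Yp l y t < u) (h2 : u ≤ Yp l y (t + 1)) : idxp l y u = t := by
  unfold idxp
  apply le_antisymm
  · exact Nat.sInf_le h2
  · apply le_csInf ⟨t, h2⟩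
    intro m hm
    by_contra hmt
    have hmem : u ≤ Yp l y (m + 1) := hm
    have : Yp l y (m + 1) ≤ Yp l y t := Yp_mono hy0 (by omega)
    linarith

lemma idx_spec (hy0 : ∀ p ∈ l, 0 ≤ y p) {u : ℝ} (h0 : 0 < u)
    (hn : u ≤ Yp l y l.length) :
    idxp l y u < l.length ∧ Yp l y (idxp l y u) < u ∧ u ≤ Yp l y (idxp l y u + 1) := by
  have hn1 : 1 ≤ l.length := by
    by_contra h
    have : l.length = 0 := by omega
    rw [this] at hn
    simp [Yp] at hn
    linarith
  have hwit : u ≤ Yp l y ((l.length - 1) + 1) := by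
    rwa [(by omega : l.length - 1 + 1 = l.length)]
  have hne : {t : ℕ | u ≤ Yp l y (t + 1)}.Nonempty := ⟨l.length - 1, hwit⟩
  have hmem : u ≤ Yp l y (idxp l y u + 1) := Nat.sInf_mem hne
  have hle : idxp l y u ≤ l.length - 1 := Nat.sInf_le hwit
  refine ⟨by omega, ?_, hmem⟩
  rcases Nat.eq_zero_or_pos (idxp l y u) with h0' | hpos
  · rw [h0']; simpa [Yp] using h0
  · have : idxp l y u - 1 ∉ {t : ℕ | u ≤ Yp l y (t + 1)} :=
      Nat.notMem_of_lt_sInf (show idxp l y u - 1 < idxp l y u by omega)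
    have h' : ¬ (u ≤ Yp l y (idxp l y u - 1 + 1)) := this
    rw [(by omega : idxp l y u - 1 + 1 = idxp l y u)] at h'
    linarith

lemma idx_eq_zero_iff (hy0 : ∀ p ∈ l, 0 ≤ y p) {u : ℝ} :
    idxp l y u = 0 ↔ (u ≤ Yp l y 1 ∨ Yp l y l.length < u) := by
  constructor
  · intro h
    rcases Nat.sInf_eq_zero.mp h with h0 | hemp
    · exact Or.inl h0
    · right
      have h0 : ¬ (u ≤ Yp l y (0 + 1)) := fun hcon =>
        absurd (hemp ▸ (Set.mem_setOf.mpr hcon : (0:ℕ) ∈ {t : ℕ | u ≤ Yp l y (t + 1)}))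
          (Set.notMem_empty _)
      rcases Nat.eq_zero_or_pos l.length with hl0 | hl1
      · have hY0 : Yp l y l.length = 0 := by rw [hl0]; rfl
        have hY1 : Yp l y 1 = Yp l y l.length := (Yp_eq_top (by omega))
        rw [hY1, hY0] at h0
        linarith [not_le.mp h0]
      · have hw : ¬ (u ≤ Yp l y ((l.length - 1) + 1)) := fun hcon =>
          absurd (hemp ▸ (Set.mem_setOf.mpr hcon :
            (l.length - 1) ∈ {t : ℕ | u ≤ Yp l y (t + 1)})) (Set.notMem_empty _)
        rw [(by omega : l.length - 1 + 1 = l.length)] at hw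
        linarith [not_le.mp hw]
  · intro h
    rcases h with h | h
    · exact Nat.sInf_eq_zero.mpr (Or.inl h)
    · apply Nat.sInf_eq_zero.mpr
      right
      apply Set.eq_empty_iff_forall_notMem.mpr
      intro t ht
      have : Yp l y (t + 1) ≤ Yp l y l.length := Yp_le_top hy0 _
      exact absurd ht (by simp only [Set.mem_setOf]; push_neg; linarith)

lemma idx_eq_succ_iff (hy0 : ∀ p ∈ l, 0 ≤ y p) {u : ℝ} {t : ℕ} :
    idxp l y u = t + 1 ↔ (Yp l y (t + 1) < u ∧ u ≤ Yp l y (t + 2)) := by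
  constructor
  · intro h
    have hne : {s : ℕ | u ≤ Yp l y (s + 1)}.Nonempty := by
      rcases Set.eq_empty_or_nonempty {s : ℕ | u ≤ Yp l y (s + 1)} with he | hne
      · exfalso
        have : idxp l y u = 0 := by unfold idxp; rw [he]; exact Nat.sInf_empty
        omega
      · exact hne
    have hmem : u ≤ Yp l y (idxp l y u + 1) := Nat.sInf_mem hne
    rw [h] at hmem
    have hnot : t ∉ {s : ℕ | u ≤ Yp l y (s + 1)} :=
      Nat.notMem_of_lt_sInf (show t < idxp l y u by omega)
    have : ¬ (u ≤ Yp l y (t + 1)) := hnot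
    exact ⟨by linarith, hmem⟩
  · intro ⟨h1, h2⟩
    exact idx_eq hy0 h1 h2

lemma measurable_idxp (hy0 : ∀ p ∈ l, 0 ≤ y p) : Measurable (idxp l y) := by
  apply measurable_to_countable'
  intro t
  cases t with
  | zero =>
      have : idxp l y ⁻¹' {0} = Set.Iic (Yp l y 1) ∪ Set.Ioi (Yp l y l.length) := by
        ext u
        simp only [Set.mem_preimage, Set.mem_singleton_iff, Set.mem_union, Set.mem_Iic,
          Set.mem_Ioi]
        exact idx_eq_zero_iff hy0
      rw [this]
      exact (measurableSet_Iic).union measurableSet_Ioi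
  | succ t =>
      have : idxp l y ⁻¹' {t + 1} = Set.Ioc (Yp l y (t + 1)) (Yp l y (t + 2)) := by
        ext u
        simp only [Set.mem_preimage, Set.mem_singleton_iff, Set.mem_Ioc]
        exact idx_eq_succ_iff hy0
      rw [this]
      exact measurableSet_Ioc

lemma measurable_hstep (hy0 : ∀ p ∈ l, 0 ≤ y p) (j : ℝ) :
    Measurable (hstep l y j) := by
  have : hstep l y j = (fun t : ℕ => dist j (l.getD t 0)) ∘ (idxp l y) := rfl
  rw [this]
  exact (measurable_from_nat).comp (measurable_idxp hy0)

lemma hstep_bound (j : ℝ) : ∃ Cb : ℝ, ∀ u, ‖hstep l y j u‖ ≤ Cb := by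
  refine ⟨|j| + (l.map fun p => |p|).sum, fun u => ?_⟩
  have habs : ∀ L : List ℝ, 0 ≤ (L.map fun p => |p|).sum := by
    intro L
    apply List.sum_nonneg
    intro a ha
    rcases List.mem_map.mp ha with ⟨p, _, rfl⟩
    exact abs_nonneg p
  have hq : |l.getD (idxp l y u) 0| ≤ (l.map fun p => |p|).sum := by
    by_cases hi : idxp l y u < l.length
    · rw [List.getD_eq_getElem l 0 hi]
      exact List.single_le_sum (fun a ha => by
          rcases List.mem_map.mp ha with ⟨p, _, rfl⟩; exact abs_nonneg p) _
        (List.mem_map.mpr ⟨_, List.getElem_mem hi, rfl⟩)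
    · rw [List.getD_eq_default l 0 (by omega)]
      simpa using habs l
  have : hstep l y j u = |j - l.getD (idxp l y u) 0| := by
    simp [hstep, posp, Real.dist_eq]
  rw [Real.norm_eq_abs, this, abs_abs]
  calc |j - l.getD (idxp l y u) 0| ≤ |j| + |l.getD (idxp l y u) 0| := abs_sub _ _
    _ ≤ _ := by linarith

lemma integrableOn_hstep (hy0 : ∀ p ∈ l, 0 ≤ y p) (j : ℝ) {s : Set ℝ}
    (hs : volume s ≠ ⊤) : IntegrableOn (hstep l y j) s volume := by
  obtain ⟨Cb, hCb⟩ := hstep_bound (l := l) (y := y) j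
  exact Measure.integrableOn_of_bounded hs
    ((measurable_hstep hy0 j).aestronglyMeasurable) (ae_of_all _ fun a => hCb a)

lemma intervalIntegrable_hstep (hy0 : ∀ p ∈ l, 0 ≤ y p) (j u v : ℝ) :
    IntervalIntegrable (hstep l y j) volume u v := by
  rw [intervalIntegrable_iff]
  exact integrableOn_hstep hy0 j (by
    rw [Set.uIoc, Real.volume_Ioc]; exact ENNReal.ofReal_ne_top)

lemma hstep_constant (hy0 : ∀ p ∈ l, 0 ≤ y p) {t : ℕ} (ht : t < l.length) {u : ℝ}
    (hu : u ∈ Set.Ioc (Yp l y t) (Yp l y (t + 1))) {j : ℝ} :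
    hstep l y j u = dist j (l.getD t 0) := by
  have : idxp l y u = t := idx_eq hy0 hu.1 hu.2
  simp [hstep, posp, this]

lemma posp_ne (hl : l.Pairwise (· < ·)) (hy0 : ∀ p ∈ l, 0 ≤ y p)
    (hy1 : ∀ p ∈ l, y p ≤ 1) {u v : ℝ} (h0 : 0 < u) (huv : u + 1 ≤ v)
    (hv : v ≤ Yp l y l.length) : posp l y u ≠ posp l y v := by
  intro heq
  have h0v : 0 < v := by linarith
  have huY : u ≤ Yp l y l.length := by linarith
  obtain ⟨hu1, hu2, hu3⟩ := idx_spec hy0 h0 huY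
  obtain ⟨hv1, hv2, hv3⟩ := idx_spec hy0 h0v hv
  have hnodup : l.Nodup := hl.nodup
  rw [posp, posp, List.getD_eq_getElem l 0 hu1, List.getD_eq_getElem l 0 hv1] at heq
  have hidx : idxp l y u = idxp l y v := (List.Nodup.getElem_inj_iff hnodup).mp heq
  rw [← hidx] at hv3
  have hYsucc : Yp l y (idxp l y u + 1) = Yp l y (idxp l y u) + y (l.getD (idxp l y u) 0) :=
    Yp_succ hu1
  have hy1' : y (l.getD (idxp l y u) 0) ≤ 1 :=
    hy1 _ (List.getD_eq_getElem l 0 hu1 ▸ List.getElem_mem hu1)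
  linarith

lemma posp_mem (hy0 : ∀ p ∈ l, 0 ≤ y p) {u : ℝ} (h0 : 0 < u)
    (hn : u ≤ Yp l y l.length) : posp l y u ∈ l := by
  obtain ⟨h1, _, _⟩ := idx_spec hy0 h0 hn
  rw [posp, List.getD_eq_getElem l 0 h1]
  exact List.getElem_mem h1

lemma sum_mul_telescope (d G : ℕ → ℝ) (n : ℕ) :
    ∑ t ∈ Finset.range n, d t * (G (t + 1) - G t)
      = (∑ t ∈ Finset.range n, (d t - d (t + 1)) * G (t + 1)) + d n * G n - d 0 * G 0 := by
  induction n with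
  | zero => simp
  | succ n ih => rw [Finset.sum_range_succ, Finset.sum_range_succ, ih]; ring

lemma map_sum_range (L : List ℝ) (f : ℝ → ℝ) :
    (L.map f).sum = ∑ t ∈ Finset.range L.length, f (L.getD t 0) := by
  induction L with
  | nil => simp
  | cons a L ih =>
      rw [List.map_cons, List.sum_cons, List.length_cons, Finset.sum_range_succ', ih]
      simp only [List.getD_cons_succ, List.getD_cons_zero]
      ring

lemma take_sum_le_of_sublist : ∀ {L' L : List ℝ}, List.Sublist L' L → L.Pairwise (· ≤ ·) →
    (L.take L'.length).sum ≤ L'.sum := by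
  intro L' L h
  induction h with
  | slnil => simp
  | @cons L' L a h ih =>
      intro hs
      have hsL : L.Pairwise (· ≤ ·) := hs.of_cons
      have ihL := ih hsL
      cases L' with
      | nil => simp
      | cons b M =>
          have hlen : M.length + 1 ≤ L.length := by
            simpa using h.length_le
          have hmlt : M.length < L.length := hlen
          rw [List.length_cons, List.take_succ_cons, List.sum_cons]
          have htake : (L.take (M.length + 1)).sum
              = (L.take M.length).sum + L[M.length] := List.sum_take_succ L M.length hmlt
          have ha : a ≤ L[M.length] :=
            (List.pairwise_cons.mp hs).1 _ (List.getElem_mem hmlt)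
          rw [List.length_cons, htake] at ihL
          linarith
  | @cons_cons L' L a h ih =>
      intro hs
      rw [List.length_cons, List.take_succ_cons, List.sum_cons, List.sum_cons]
      exact add_le_add_right (ih hs.of_cons) a

lemma kSmallestSum_le (j : ℝ) (S T : Finset ℝ) (hT : T ⊆ S) {r : ℕ} (hr : T.card = r) :
    FTMedInstance.kSmallestSum j S r ≤ ∑ i ∈ T, dist j i := by
  classical
  set msS := S.val.map (fun i => dist j i) with hmsS
  set msT := T.val.map (fun i => dist j i) with hmsT
  have hle : msT ≤ msS := Multiset.map_le_map (Finset.val_le_iff.mpr hT)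
  set L := msS.sort (· ≤ ·) with hL
  set L' := msT.sort (· ≤ ·) with hL'
  have hsub : List.Subperm L' L := Multiset.coe_le.mp (by
    rw [hL, hL', Multiset.sort_eq, Multiset.sort_eq]; exact hle)
  have hsubl : List.Sublist L' L :=
    List.sublist_of_subperm_of_pairwise hsub (Multiset.pairwise_sort _ _)
      (Multiset.pairwise_sort _ _)
  have hlen : L'.length = r := by
    rw [hL', Multiset.length_sort, hmsT, Multiset.card_map]
    exact hr
  have hkey := take_sum_le_of_sublist hsubl (Multiset.pairwise_sort _ _)
  rw [hlen] at hkey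
  refine le_trans hkey ?_
  have h1 : (L' : Multiset ℝ) = msT := Multiset.sort_eq _ _
  have h2 : L'.sum = msT.sum := by rw [← h1]; simp
  have h3 : (∑ i ∈ T, dist j i) = msT.sum := rfl
  rw [h3, ← h2]

lemma filter_range_eq_range {n : ℕ} {p : ℕ → Prop} [DecidablePred p]
    (hdc : ∀ s t, s ≤ t → t < n → p t → p s) :
    (Finset.range n).filter p = Finset.range (((Finset.range n).filter p).card) := by
  set A := (Finset.range n).filter p with hA
  ext t
  simp only [Finset.mem_range]
  constructor
  · intro ht
    have htn : t < n := Finset.mem_range.mp (Finset.mem_filter.mp ht).1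
    have hpt : p t := (Finset.mem_filter.mp ht).2
    have hsub : Finset.range (t + 1) ⊆ A := by
      intro s hs
      rw [Finset.mem_range] at hs
      exact Finset.mem_filter.mpr ⟨Finset.mem_range.mpr (by omega),
        hdc s t (by omega) htn hpt⟩
    have := Finset.card_le_card hsub
    rw [Finset.card_range] at this
    omega
  · intro ht
    by_contra hc
    have hsub : A ⊆ Finset.range t := by
      intro s hs
      rw [Finset.mem_range]
      by_contra hst
      push_neg at hst
      have hsn : s < n := Finset.mem_range.mp (Finset.mem_filter.mp hs).1
      have hps : p s := (Finset.mem_filter.mp hs).2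
      exact hc (Finset.mem_filter.mpr ⟨Finset.mem_range.mpr (by omega),
        hdc t s hst hsn hps⟩)
    have := Finset.card_le_card hsub
    rw [Finset.card_range] at this
    omega

lemma map_sum_sub (L : List ℝ) (f g : ℝ → ℝ) :
    (L.map fun p => f p - g p).sum = (L.map f).sum - (L.map g).sum := by
  induction L with
  | nil => simp
  | cons a L ih => simp [ih]; ring

lemma Yp_sub (xj : ℝ → ℝ) (t : ℕ) :
    Yp l (fun p => y p - xj p) t = Yp l y t - Yp l xj t := by
  simp only [Yp, ← List.map_take]
  exact map_sum_sub _ _ _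

lemma bathtub (hl : l.Pairwise (· < ·)) (hy0 : ∀ p ∈ l, 0 ≤ y p) (j : ℝ)
    (xj : ℝ → ℝ) (hx0 : ∀ p ∈ l, 0 ≤ xj p) (hxy : ∀ p ∈ l, xj p ≤ y p)
    (r : ℝ) (hr0 : 0 ≤ r) (hrs : (l.map xj).sum = r) :
    ∃ a, 0 ≤ a ∧ a + r ≤ Yp l y l.length ∧
      (∫ u in a..(a + r), hstep l y j u) ≤ (l.map fun p => dist j p * xj p).sum := by
  classical
  set n := l.length with hn
  -- basic index monotonicity
  have hlle : l.Pairwise (· ≤ ·) := hl.imp le_of_lt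
  have hmon : ∀ s t : ℕ, s ≤ t → t < n → l.getD s 0 ≤ l.getD t 0 := by
    intro s t hst htn
    rw [List.getD_eq_getElem l 0 (by omega), List.getD_eq_getElem l 0 htn]
    exact hlle.rel_get_of_le (a := ⟨s, by omega⟩) (b := ⟨t, htn⟩) hst
  -- the split index
  set b := ((Finset.range n).filter fun t => l.getD t 0 < j).card with hb
  have hbrange : (Finset.range n).filter (fun t => l.getD t 0 < j) = Finset.range b := by
    rw [hb]
    exact filter_range_eq_range (fun s t hst htn hpt => lt_of_le_of_lt (hmon s t hst htn) hpt)
  have hbn : b ≤ n := by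
    rw [hb]
    exact le_trans (Finset.card_le_card (Finset.filter_subset _ _)) (le_of_eq (Finset.card_range n))
  have hsplit1 : ∀ t, t < b → l.getD t 0 < j := by
    intro t ht
    have : t ∈ (Finset.range n).filter (fun t => l.getD t 0 < j) := by
      rw [hbrange]; exact Finset.mem_range.mpr ht
    exact (Finset.mem_filter.mp this).2
  have hsplit2 : ∀ t, b ≤ t → t < n → j ≤ l.getD t 0 := by
    intro t hbt htn
    by_contra hcon
    push_neg at hcon
    have : t ∈ (Finset.range n).filter (fun t => l.getD t 0 < j) :=
      Finset.mem_filter.mpr ⟨Finset.mem_range.mpr htn, hcon⟩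
    rw [hbrange, Finset.mem_range] at this
    omega
  -- prefix sums
  set X : ℕ → ℝ := Yp l xj with hX
  set Y : ℕ → ℝ := Yp l y with hY
  have hXmono : Monotone X := Yp_mono hx0
  have hYmono : Monotone Y := Yp_mono hy0
  have hZ : ∀ s t : ℕ, s ≤ t → X t - X s ≤ Y t - Y s := by
    intro s t hst
    have hmono' : Monotone (Yp l (fun p => y p - xj p)) :=
      Yp_mono (fun p hp => by linarith [hxy p hp])
    have h1 := hmono' hst
    rw [Yp_sub xj s, Yp_sub xj t] at h1
    simp only [hX, hY]
    linarith
  have hX0 : X 0 = 0 := rfl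
  have hY0 : Y 0 = 0 := rfl
  have hXn : X n = r := by
    rw [← hrs]
    show ((l.take l.length).map xj).sum = (l.map xj).sum
    rw [List.take_length]
  have hXnonneg : ∀ t, 0 ≤ X t := fun t => hX0 ▸ hXmono (Nat.zero_le t)
  have hXler : ∀ t, X t ≤ r := by
    intro t
    rw [← hXn]
    by_cases htn : t ≤ n
    · exact hXmono htn
    · exact le_of_eq (Yp_eq_top (by omega))
  -- the interval left endpoint
  set a := Y b - X b with ha
  have ha0 : 0 ≤ a := by
    have := hZ 0 b (Nat.zero_le b)
    rw [hX0, hY0] at this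
    simp only [ha]
    linarith
  have harY : a + r ≤ Y n := by
    have := hZ b n hbn
    rw [hXn] at this
    simp only [ha]
    linarith
  -- the clipped prefix function
  set W : ℕ → ℝ := fun t => min (max (Y t - a) 0) r with hW
  have hWmono : Monotone W := by
    intro s t hst
    exact min_le_min (max_le_max (by linarith [hYmono hst]) le_rfl) le_rfl
  have hW0 : W 0 = 0 := by
    simp only [hW]
    rw [hY0]
    rw [max_eq_right (by linarith), min_eq_left hr0]
  have hWn : W n = r := by
    simp only [hW]
    rw [max_eq_left (by linarith), min_eq_right (by linarith)]
  have hWler : ∀ t, W t ≤ r := fun t => min_le_right _ _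
  have hWnonneg : ∀ t, 0 ≤ W t := fun t => le_min (le_max_right _ _) hr0
  -- comparison of X and W
  have hXWle : ∀ t, t ≤ b → W t ≤ X t := by
    intro t htb
    have h1 : Y t - a ≤ X t := by
      have := hZ t b htb
      simp only [ha]
      linarith
    calc W t ≤ max (Y t - a) 0 := min_le_left _ _
      _ ≤ X t := max_le h1 (hXnonneg t)
  have hXWge : ∀ t, b ≤ t → X t ≤ W t := by
    intro t hbt
    have h1 : X t ≤ Y t - a := by
      have := hZ b t hbt
      simp only [ha]
      linarith
    exact le_min (le_trans h1 (le_max_left _ _)) (hXler t)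
  have hGb : X b - W b = 0 := by
    have := hXWle b le_rfl
    have := hXWge b le_rfl
    linarith
  -- distances
  set d : ℕ → ℝ := fun t => dist j (l.getD t 0) with hd
  have hdleft : ∀ s t, s ≤ t → t < b → d t ≤ d s := by
    intro s t hst htb
    have hs : l.getD s 0 < j := hsplit1 s (by omega)
    have ht : l.getD t 0 < j := hsplit1 t htb
    have := hmon s t hst (by omega)
    simp only [hd]
    rw [Real.dist_eq, Real.dist_eq, abs_of_nonneg (by linarith), abs_of_nonneg (by linarith)]
    linarith
  have hdright : ∀ s t, b ≤ s → s ≤ t → t < n → d s ≤ d t := by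
    intro s t hbs hst htn
    have hs : j ≤ l.getD s 0 := hsplit2 s hbs (by omega)
    have ht : j ≤ l.getD t 0 := hsplit2 t (by omega) htn
    have := hmon s t hst htn
    simp only [hd]
    rw [Real.dist_eq, Real.dist_eq, abs_of_nonpos (by linarith), abs_of_nonpos (by linarith)]
    linarith
  -- the sign condition
  set G : ℕ → ℝ := fun t => X t - W t with hG
  have hsign : ∀ t ∈ Finset.range n, 0 ≤ (d t - d (t + 1)) * G (t + 1) := by
    intro t htn'
    have htn : t < n := Finset.mem_range.mp htn'
    rcases lt_trichotomy (t + 1) b with hc | hc | hc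
    · have h1 : d (t + 1) ≤ d t := hdleft t (t + 1) (by omega) hc
      have h2 : 0 ≤ G (t + 1) := by
        simp only [hG]
        linarith [hXWle (t + 1) (by omega)]
      exact mul_nonneg (by linarith) h2
    · have : G (t + 1) = 0 := by simp only [hG]; rw [hc]; exact hGb
      rw [this, mul_zero]
    · -- b ≤ t
      rcases Nat.lt_or_ge (t + 1) n with h' | h'
      · have h1 : d t ≤ d (t + 1) := hdright t (t + 1) (by omega) (by omega) h'
        have h2 : G (t + 1) ≤ 0 := by
          simp only [hG]
          linarith [hXWge (t + 1) (by omega)]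
        nlinarith [h1, h2]
      · -- t + 1 = n
        have ht1n : t + 1 = n := by omega
        have : G (t + 1) = 0 := by
          simp only [hG]
          rw [ht1n, hXn, hWn]
          ring
        rw [this, mul_zero]
  -- Abel summation
  have habel := sum_mul_telescope d G n
  have hG0 : G 0 = 0 := by simp only [hG]; rw [hX0, hW0]; ring
  have hGn : G n = 0 := by simp only [hG]; rw [hXn, hWn]; ring
  rw [hG0, hGn, mul_zero, mul_zero, sub_zero, add_zero] at habel
  have hsum_nonneg : 0 ≤ ∑ t ∈ Finset.range n, (d t - d (t + 1)) * G (t + 1) :=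
    Finset.sum_nonneg hsign
  have habel' : 0 ≤ ∑ t ∈ Finset.range n, d t * (G (t + 1) - G t) := by
    rw [habel]; exact hsum_nonneg
  -- rewrite the telescoped sum
  have hXsucc : ∀ t, t < n → X (t + 1) - X t = xj (l.getD t 0) := by
    intro t htn
    simp only [hX]
    rw [Yp_succ htn]
    ring
  have hkey : ∑ t ∈ Finset.range n, d t * (W (t + 1) - W t)
      ≤ ∑ t ∈ Finset.range n, d t * (X (t + 1) - X t) := by
    have : ∀ t ∈ Finset.range n,
        d t * (G (t + 1) - G t) = d t * (X (t + 1) - X t) - d t * (W (t + 1) - W t) := by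
      intro t _
      simp only [hG]
      ring
    rw [Finset.sum_congr rfl this, Finset.sum_sub_distrib] at habel'
    linarith
  have hlist : (l.map fun p => dist j p * xj p).sum
      = ∑ t ∈ Finset.range n, d t * (X (t + 1) - X t) := by
    rw [map_sum_range]
    apply Finset.sum_congr rfl
    intro t htn
    rw [hXsucc t (Finset.mem_range.mp htn)]
  -- the integral decomposition
  set E : ℕ → ℝ := fun t => a + W t with hE
  have hEmono : Monotone E := fun s t hst => by
    simp only [hE]; linarith [hWmono hst]
  have hpiece : ∀ t, t < n →
      (∫ u in (E t)..(E (t + 1)), hstep l y j u) = d t * (W (t + 1) - W t) := by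
    intro t htn
    rcases eq_or_lt_of_le (hEmono (Nat.le_succ t)) with heq | hlt
    · rw [← heq, intervalIntegral.integral_same]
      have : W (t + 1) - W t = 0 := by
        have : E (t + 1) - E t = 0 := by rw [← heq]; ring
        simp only [hE] at this
        linarith
      rw [this, mul_zero]
    · -- nonempty piece
      have hWlt : W t < W (t + 1) := by
        simp only [hE] at hlt
        linarith
      have hWtr : W t < r := lt_of_lt_of_le hWlt (hWler _)
      have hWt_eq : W t = max (Y t - a) 0 := by
        simp only [hW]
        rcases min_cases (max (Y t - a) 0) r with ⟨h1, _⟩ | ⟨h1, h2⟩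
        · exact h1
        · exfalso
          simp only [hW] at hWtr
          rw [h1] at hWtr
          exact lt_irrefl _ hWtr
      have hWt1_pos : 0 < W (t + 1) := lt_of_le_of_lt (hWnonneg t) hWlt
      have hWt1_le : W (t + 1) ≤ Y (t + 1) - a := by
        have h1 : W (t + 1) ≤ max (Y (t + 1) - a) 0 := min_le_left _ _
        rcases max_cases (Y (t + 1) - a) 0 with ⟨h2, _⟩ | ⟨h2, _⟩
        · rwa [h2] at h1
        · rw [h2] at h1
          linarith
      have hsubset : Set.Ioc (E t) (E (t + 1)) ⊆ Set.Ioc (Y t) (Y (t + 1)) := by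
        apply Set.Ioc_subset_Ioc
        · simp only [hE]
          rw [hWt_eq]
          have : Y t - a ≤ max (Y t - a) 0 := le_max_left _ _
          linarith
        · simp only [hE]
          linarith
      have hconst : Set.EqOn (hstep l y j) (fun _ => d t) (Set.Ioc (E t) (E (t + 1))) := by
        intro u hu
        exact hstep_constant hy0 htn (hsubset hu)
      rw [intervalIntegral.integral_of_le (le_of_lt hlt),
        MeasureTheory.setIntegral_congr_fun measurableSet_Ioc hconst,
        MeasureTheory.setIntegral_const, measureReal_def, Real.volume_Ioc,
        ENNReal.toReal_ofReal (by linarith)]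
      simp only [hE]
      rw [smul_eq_mul]
      ring
  have hadj : ∑ t ∈ Finset.range n, (∫ u in (E t)..(E (t + 1)), hstep l y j u)
      = ∫ u in (E 0)..(E n), hstep l y j u :=
    intervalIntegral.sum_integral_adjacent_intervals
      (fun k _ => intervalIntegrable_hstep hy0 j _ _)
  have hE0 : E 0 = a := by simp only [hE]; rw [hW0]; ring
  have hEn : E n = a + r := by simp only [hE]; rw [hWn]
  refine ⟨a, ha0, harY, ?_⟩
  rw [hE0, hEn] at hadj
  have hint : (∫ u in a..(a + r), hstep l y j u)
      = ∑ t ∈ Finset.range n, d t * (W (t + 1) - W t) := by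
    rw [← hadj]
    exact Finset.sum_congr rfl fun t htn => hpiece t (Finset.mem_range.mp htn)
  rw [hint, hlist]
  exact hkey

lemma count_lattice {a θ : ℝ} {r K : ℕ} (ha : 0 ≤ a) (hθ0 : 0 < θ) (hθ1 : θ ≤ 1)
    (hK : a + r ≤ K) :
    ((Finset.range K).filter fun m : ℕ => ((m : ℝ) + θ ∈ Set.Ioc a (a + (r:ℝ)))).card = r := by
  classical
  have hfl : (-1 : ℤ) ≤ ⌊a - θ⌋ := by
    rw [Int.le_floor]
    push_cast
    linarith
  have key : ∀ m : ℕ, ((m : ℝ) + θ ∈ Set.Ioc a (a + (r:ℝ)))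
      ↔ (⌊a - θ⌋ < (m : ℤ) ∧ (m : ℤ) ≤ ⌊a - θ⌋ + r) := by
    intro m
    rw [Set.mem_Ioc]
    constructor
    · intro ⟨h1, h2⟩
      constructor
      · rw [Int.floor_lt]; push_cast; linarith
      · have : ((m : ℤ) : ℝ) ≤ (a - θ) + (r : ℤ) := by push_cast; linarith
        have := Int.le_floor.mpr this
        rwa [Int.floor_add_intCast] at this
      
    · intro ⟨h1, h2⟩
      constructor
      · have := Int.floor_lt.mp h1
        push_cast at this
        linarith
      · have h2' : (m : ℤ) ≤ ⌊(a - θ) + (r : ℤ)⌋ := by rwa [Int.floor_add_intCast]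
        have := Int.le_floor.mp h2'
        push_cast at this
        linarith
  have him : ((Finset.range K).filter fun m : ℕ => ((m : ℝ) + θ ∈ Set.Ioc a (a + (r:ℝ))))
      = (Finset.Ioc ⌊a - θ⌋ (⌊a - θ⌋ + r)).image Int.toNat := by
    ext m
    simp only [Finset.mem_filter, Finset.mem_range, Finset.mem_image, Finset.mem_Ioc]
    constructor
    · intro ⟨_, hm⟩
      exact ⟨(m : ℤ), (key m).mp hm, Int.toNat_natCast m⟩
    · intro ⟨z, hz, hzm⟩
      have hz0 : 0 ≤ z := by omega
      have hzm' : z = (m : ℤ) := by omega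
      rw [hzm'] at hz
      have hmem := (key m).mpr hz
      refine ⟨?_, hmem⟩
      have := (Set.mem_Ioc.mp hmem).2
      have hK : (m : ℝ) < K := by linarith
      exact_mod_cast hK
  rw [him, Finset.card_image_of_injOn (fun z1 hz1 z2 hz2 he => by
    simp only [Finset.coe_Ioc, Set.mem_Ioc] at hz1 hz2
    omega), Int.card_Ioc]
  omega

lemma intervalIntegrable_of_bdd {f : ℝ → ℝ} (hf : Measurable f) {Cb : ℝ}
    (hbd : ∀ u, ‖f u‖ ≤ Cb) (u v : ℝ) : IntervalIntegrable f volume u v := by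
  rw [intervalIntegrable_iff]
  exact Measure.integrableOn_of_bounded
    (by rw [Set.uIoc, Real.volume_Ioc]; exact ENNReal.ofReal_ne_top)
    hf.aestronglyMeasurable (ae_of_all _ hbd)

lemma periodize (hy0 : ∀ p ∈ l, 0 ≤ y p) (j : ℝ) {a b : ℝ} {K : ℕ}
    (ha : 0 ≤ a) (hab : a ≤ b) (hb : b ≤ K) :
    (∫ θ in Set.Ioc (0:ℝ) 1,
        ∑ m ∈ Finset.range K, (Set.Ioc a b).indicator (hstep l y j) ((m : ℝ) + θ))
      = ∫ u in a..b, hstep l y j u := by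
  set g : ℝ → ℝ := (Set.Ioc a b).indicator (hstep l y j) with hg
  obtain ⟨Cb, hCb⟩ := hstep_bound (l := l) (y := y) j
  have hgm : Measurable g := (measurable_hstep hy0 j).indicator measurableSet_Ioc
  have hgb : ∀ u, ‖g u‖ ≤ Cb := by
    intro u
    rw [hg]
    by_cases hu : u ∈ Set.Ioc a b
    · rw [Set.indicator_of_mem hu]; exact hCb u
    · rw [Set.indicator_of_notMem hu]
      simpa using le_trans (norm_nonneg _) (hCb u)
  have hgint : ∀ u v : ℝ, IntervalIntegrable g volume u v := fun u v =>
    intervalIntegrable_of_bdd hgm hgb u v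
  have h1 : (∫ θ in Set.Ioc (0:ℝ) 1, ∑ m ∈ Finset.range K, g ((m:ℝ) + θ))
      = ∫ θ in (0:ℝ)..1, ∑ m ∈ Finset.range K, g ((m:ℝ) + θ) :=
    (intervalIntegral.integral_of_le zero_le_one).symm
  have h2 : (∫ θ in (0:ℝ)..1, ∑ m ∈ Finset.range K, g ((m:ℝ) + θ))
      = ∑ m ∈ Finset.range K, ∫ θ in (0:ℝ)..1, g ((m:ℝ) + θ) := by
    apply intervalIntegral.integral_finset_sum
    intro m _
    apply intervalIntegrable_of_bdd (hgm.comp (measurable_const.add measurable_id))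
      (fun θ => hgb ((m:ℝ) + θ))
  have h3 : ∀ m : ℕ, (∫ θ in (0:ℝ)..1, g ((m:ℝ) + θ))
      = ∫ u in ((m:ℝ))..((m:ℝ)+1), g u := by
    intro m
    have := intervalIntegral.integral_comp_add_left (a := (0:ℝ)) (b := 1) (f := g) ((m:ℝ))
    simpa using this
  have h4 : ∑ m ∈ Finset.range K, (∫ u in ((m:ℝ))..((m:ℝ)+1), g u)
      = ∫ u in (0:ℝ)..(K:ℝ), g u := by
    have hadj := intervalIntegral.sum_integral_adjacent_intervals
      (a := fun m : ℕ => (m:ℝ)) (μ := volume) (f := g) (n := K) (fun k _ => hgint _ _)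
    push_cast at hadj
    exact hadj
  have h5 : (∫ u in (0:ℝ)..(K:ℝ), g u) = ∫ u in Set.Ioc (0:ℝ) (K:ℝ), g u :=
    intervalIntegral.integral_of_le (by exact_mod_cast Nat.cast_nonneg K)
  have h6 : (∫ u in Set.Ioc (0:ℝ) (K:ℝ), g u) = ∫ u in Set.Ioc a b, hstep l y j u := by
    rw [hg, setIntegral_indicator measurableSet_Ioc,
      Set.inter_eq_right.mpr (Set.Ioc_subset_Ioc ha hb)]
  have h7 : (∫ u in Set.Ioc a b, hstep l y j u) = ∫ u in a..b, hstep l y j u :=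
    (intervalIntegral.integral_of_le hab).symm
  rw [h1, h2, Finset.sum_congr rfl (fun m _ => h3 m), h4, h5, h6, h7]

end FTMedLine


open FTMedLine MeasureTheory in
/-- FTMed on a line metric: the LP relaxation always has an integral optimal solution.
For every feasible fractional solution there is an integral solution of no greater cost. -/
theorem ftmed_line_integral_optimal
    (I : FTMedInstance ℝ) (x : ℝ → ℝ → ℝ) (y : ℝ → ℝ) (hfeas : I.LPFeasible x y) :
    ∃ S : Finset ℝ, S ⊆ I.F ∧ (∀ j ∈ I.C, I.req j ≤ S.card) ∧ S.card ≤ I.k ∧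
      I.cost S ≤ I.LPObj x := by
  classical
  obtain ⟨hx01, hy01, hxyf, hxr, hyk⟩ := hfeas
  rcases I.C.eq_empty_or_nonempty with hC | ⟨j₀, hj₀⟩
  · refine ⟨∅, by simp, by simp [hC], by simp, ?_⟩
    rw [FTMedInstance.cost, FTMedInstance.LPObj, hC]
    simp
  set l := I.F.sort (· ≤ ·) with hldef
  have hl : l.Pairwise (· < ·) := (Finset.sortedLT_sort _).pairwise
  have hmeml : ∀ p : ℝ, p ∈ l ↔ p ∈ I.F := fun p => Finset.mem_sort _
  have hy0 : ∀ p ∈ l, 0 ≤ y p := fun p hp => (hy01 p ((hmeml p).1 hp)).1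
  have hy1 : ∀ p ∈ l, y p ≤ 1 := fun p hp => (hy01 p ((hmeml p).1 hp)).2
  have hsum : ∀ f : ℝ → ℝ, (l.map f).sum = ∑ i ∈ I.F, f i := by
    intro f
    have h1 : (l : Multiset ℝ) = I.F.val := Finset.sort_eq _ _
    have h2 : (∑ i ∈ I.F, f i) = (Multiset.map f I.F.val).sum := rfl
    rw [h2, ← h1, Multiset.map_coe, Multiset.sum_coe]
  have hYtop : Yp l y l.length = ∑ i ∈ I.F, y i := by
    show ((l.take l.length).map y).sum = _
    rw [List.take_length, hsum y]
  have hYnk : Yp l y l.length ≤ (I.k : ℝ) := by rw [hYtop]; exact hyk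
  -- per-client bathtub intervals
  have hbath : ∀ j ∈ I.C, ∃ a : ℝ, 0 ≤ a ∧ a + (I.req j : ℝ) ≤ Yp l y l.length ∧
      (∫ u in a..(a + (I.req j : ℝ)), hstep l y j u)
        ≤ (l.map fun p => dist j p * x p j).sum := by
    intro j hj
    apply bathtub hl hy0 j (fun p => x p j)
      (fun p hp => (hx01 p ((hmeml p).1 hp) j hj).1)
      (fun p hp => hxyf p ((hmeml p).1 hp) j hj)
      ((I.req j : ℝ)) (by positivity)
      (by rw [hsum]; exact hxr j hj)
  choose! A hA0 hAr hAint using hbath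
  -- the averaged function
  set G : ℝ → ℝ := fun θ => ∑ j ∈ I.C, ∑ m ∈ Finset.range I.k,
      (Set.Ioc (A j) (A j + (I.req j : ℝ))).indicator (hstep l y j) ((m : ℝ) + θ) with hGdef
  -- integrability of each client's term
  have hterm : ∀ j ∈ I.C, IntegrableOn (fun θ => ∑ m ∈ Finset.range I.k,
      (Set.Ioc (A j) (A j + (I.req j : ℝ))).indicator (hstep l y j) ((m : ℝ) + θ))
      (Set.Ioc (0:ℝ) 1) volume := by
    intro j hj
    obtain ⟨Cb, hCb⟩ := hstep_bound (l := l) (y := y) j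
    have hgm : Measurable ((Set.Ioc (A j) (A j + (I.req j : ℝ))).indicator (hstep l y j)) :=
      (measurable_hstep hy0 j).indicator measurableSet_Ioc
    have hgb : ∀ u, ‖(Set.Ioc (A j) (A j + (I.req j : ℝ))).indicator (hstep l y j) u‖ ≤ Cb := by
      intro u
      by_cases hu : u ∈ Set.Ioc (A j) (A j + (I.req j : ℝ))
      · rw [Set.indicator_of_mem hu]; exact hCb u
      · rw [Set.indicator_of_notMem hu]
        simpa using le_trans (norm_nonneg _) (hCb u)
    apply Measure.integrableOn_of_bounded (M := (I.k : ℝ) * Cb)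
    · rw [Real.volume_Ioc]; exact ENNReal.ofReal_ne_top
    · apply Measurable.aestronglyMeasurable
      apply Finset.measurable_sum
      intro m _
      exact hgm.comp (measurable_const.add measurable_id)
    · apply ae_of_all
      intro θ
      calc ‖∑ m ∈ Finset.range I.k,
            (Set.Ioc (A j) (A j + (I.req j : ℝ))).indicator (hstep l y j) ((m : ℝ) + θ)‖
          ≤ ∑ m ∈ Finset.range I.k,
            ‖(Set.Ioc (A j) (A j + (I.req j : ℝ))).indicator (hstep l y j) ((m : ℝ) + θ)‖ :=
            norm_sum_le _ _
        _ ≤ ∑ _m ∈ Finset.range I.k, Cb := Finset.sum_le_sum (fun m _ => hgb _)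
        _ = (I.k : ℝ) * Cb := by rw [Finset.sum_const, Finset.card_range, nsmul_eq_mul]
  have hGI : IntegrableOn G (Set.Ioc (0:ℝ) 1) volume := by
    rw [hGdef]
    exact integrable_finset_sum _ hterm
  -- bound the integral of G by the LP objective
  have hGle : (∫ θ in Set.Ioc (0:ℝ) 1, G θ) ≤ I.LPObj x := by
    have hswap : (∫ θ in Set.Ioc (0:ℝ) 1, G θ)
        = ∑ j ∈ I.C, ∫ θ in Set.Ioc (0:ℝ) 1, ∑ m ∈ Finset.range I.k,
          (Set.Ioc (A j) (A j + (I.req j : ℝ))).indicator (hstep l y j) ((m : ℝ) + θ) := by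
      rw [hGdef]
      exact integral_finset_sum _ hterm
    rw [hswap, FTMedInstance.LPObj]
    apply Finset.sum_le_sum
    intro j hj
    have hper := periodize (K := I.k) hy0 j (hA0 j hj)
      (by linarith [(Nat.cast_nonneg (I.req j) : (0:ℝ) ≤ (I.req j : ℝ))])
      (le_trans (hAr j hj) hYnk)
    rw [hper]
    refine le_trans (hAint j hj) ?_
    rw [hsum]
    apply le_of_eq
    apply Finset.sum_congr rfl
    intro i _
    rw [dist_comm]
  -- choose a good θ
  have hvol0 : volume (Set.Ioc (0:ℝ) 1) = 1 := by
    rw [Real.volume_Ioc]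
    norm_num
  obtain ⟨θ, hθmem, hθle⟩ := exists_le_setAverage (μ := volume) (s := Set.Ioc (0:ℝ) 1)
    (by rw [hvol0]; exact one_ne_zero) (by rw [hvol0]; exact ENNReal.one_ne_top) hGI
  have havg : (⨍ θ in Set.Ioc (0:ℝ) 1, G θ ∂volume) = ∫ θ in Set.Ioc (0:ℝ) 1, G θ := by
    rw [setAverage_eq, measureReal_def, hvol0]
    simp
  have hGθ : G θ ≤ I.LPObj x := le_trans (havg ▸ hθle) hGle
  obtain ⟨hθ0, hθ1⟩ := Set.mem_Ioc.mp hθmem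
  -- the integral solution
  set S : Finset ℝ := ((Finset.range I.k).filter fun m : ℕ =>
      ((m : ℝ) + θ ≤ Yp l y l.length)).image (fun m : ℕ => posp l y ((m : ℝ) + θ)) with hSdef
  have hpos : ∀ m : ℕ, (0:ℝ) < (m : ℝ) + θ := fun m => by
    have : (0:ℝ) ≤ (m : ℝ) := Nat.cast_nonneg m
    linarith
  have hSF : S ⊆ I.F := by
    intro p hp
    obtain ⟨m, hm, rfl⟩ := Finset.mem_image.mp hp
    exact (hmeml _).1 (posp_mem hy0 (hpos m) (Finset.mem_filter.mp hm).2)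
  have hinj : ∀ m1 ∈ (Finset.range I.k).filter
        (fun m : ℕ => ((m : ℝ) + θ ≤ Yp l y l.length)),
      ∀ m2 ∈ (Finset.range I.k).filter
        (fun m : ℕ => ((m : ℝ) + θ ≤ Yp l y l.length)),
      posp l y ((m1 : ℝ) + θ) = posp l y ((m2 : ℝ) + θ) → m1 = m2 := by
    intro m1 h1 m2 h2 he
    by_contra hne
    have key : ∀ m m' : ℕ, m < m' → ((m' : ℝ) + θ ≤ Yp l y l.length) →
        posp l y ((m : ℝ) + θ) ≠ posp l y ((m' : ℝ) + θ) := by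
      intro m m' hmm' hm'Y
      apply posp_ne hl hy0 hy1 (hpos m) ?_ hm'Y
      have : (m : ℝ) + 1 ≤ (m' : ℝ) := by exact_mod_cast hmm'
      linarith
    rcases Nat.lt_trichotomy m1 m2 with h | h | h
    · exact key m1 m2 h (Finset.mem_filter.mp h2).2 he
    · exact hne h
    · exact key m2 m1 h (Finset.mem_filter.mp h1).2 he.symm
  have hScard : S.card ≤ I.k := by
    refine le_trans Finset.card_image_le (le_trans (Finset.card_filter_le _ _) ?_)
    rw [Finset.card_range]
  -- per-client bounds
  have hclient : ∀ j ∈ I.C, (I.req j ≤ S.card) ∧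
      FTMedInstance.kSmallestSum j S (I.req j) ≤ ∑ m ∈ Finset.range I.k,
        (Set.Ioc (A j) (A j + (I.req j : ℝ))).indicator (hstep l y j) ((m : ℝ) + θ) := by
    intro j hj
    set MJ := (Finset.range I.k).filter
      (fun m : ℕ => ((m : ℝ) + θ ∈ Set.Ioc (A j) (A j + ((I.req j : ℕ) : ℝ)))) with hMJ
    have hMJcard : MJ.card = I.req j :=
      count_lattice (hA0 j hj) hθ0 hθ1 (le_trans (hAr j hj) hYnk)
    have hMJsub : MJ ⊆ (Finset.range I.k).filter
        (fun m : ℕ => ((m : ℝ) + θ ≤ Yp l y l.length)) := by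
      intro m hm
      obtain ⟨hmr, hmc⟩ := Finset.mem_filter.mp hm
      refine Finset.mem_filter.mpr ⟨hmr, ?_⟩
      have := (Set.mem_Ioc.mp hmc).2
      linarith [hAr j hj]
    set T := MJ.image (fun m : ℕ => posp l y ((m : ℝ) + θ)) with hT
    have hinj' : Set.InjOn (fun m : ℕ => posp l y ((m : ℝ) + θ)) ↑MJ :=
      fun a ha b hb hab =>
        hinj a (hMJsub (Finset.mem_coe.mp ha)) b (hMJsub (Finset.mem_coe.mp hb)) hab
    have hTcard : T.card = I.req j := by
      rw [hT, Finset.card_image_of_injOn hinj', hMJcard]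
    have hTS : T ⊆ S := by
      rw [hT, hSdef]
      exact Finset.image_subset_image hMJsub
    refine ⟨by rw [← hTcard]; exact Finset.card_le_card hTS, ?_⟩
    calc FTMedInstance.kSmallestSum j S (I.req j) ≤ ∑ i ∈ T, dist j i :=
          kSmallestSum_le j S T hTS hTcard
      _ = ∑ m ∈ MJ, dist j (posp l y ((m : ℝ) + θ)) := Finset.sum_image (fun a ha b hb hab =>
            hinj a (hMJsub ha) b (hMJsub hb) hab)
      _ = ∑ m ∈ MJ, (Set.Ioc (A j) (A j + (I.req j : ℝ))).indicator
            (hstep l y j) ((m : ℝ) + θ) := by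
          apply Finset.sum_congr rfl
          intro m hm
          rw [Set.indicator_of_mem (Finset.mem_filter.mp hm).2]
          rfl
      _ = ∑ m ∈ Finset.range I.k, (Set.Ioc (A j) (A j + (I.req j : ℝ))).indicator
            (hstep l y j) ((m : ℝ) + θ) := by
          apply (Finset.sum_subset (Finset.filter_subset _ _) ?_)
          intro m hmr hmn
          have : ¬ ((m : ℝ) + θ ∈ Set.Ioc (A j) (A j + ((I.req j : ℕ) : ℝ))) := by
            intro hc
            exact hmn (Finset.mem_filter.mpr ⟨hmr, hc⟩)
          exact Set.indicator_of_notMem this _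
  refine ⟨S, hSF, fun j hj => (hclient j hj).1, hScard, ?_⟩
  calc I.cost S = ∑ j ∈ I.C, FTMedInstance.kSmallestSum j S (I.req j) := rfl
    _ ≤ G θ := Finset.sum_le_sum (fun j hj => (hclient j hj).2)
    _ ≤ I.LPObj x := hGθ
end

section
/- Consider an FTMed instance in which the metric d on F ∪ C is an ultrametric, i.e., d(a,c) ≤ max{d(a,b), d(b,c)} for all points a,b,c (this is the metric induced on the leaves of a hierarchically well separated tree with all facilities and clients located at leaves). Then the LP relaxation always has an integral optimal solution: for every feasible fractional solution (x,y) of the LP relaxation, there exists a set S ⊆ F with |S| ≤ k and |S| ≥ r_j for all j such that ∑_{j∈C} (sum of the r_j smallest values among {d(j,i) : i ∈ S}) ≤ ∑_{j∈C}∑_{i∈F} d(i,j)·x_{ij}. -/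
open scoped BigOperators

open Finset in
private lemma ftaux_exists_sorted_enum {X τ : Type*} [DecidableEq X] [LinearOrder τ] :
    ∀ (n : ℕ) (F : Finset X) (key : X → τ), F.card = n →
      (∀ a ∈ F, ∀ b ∈ F, key a = key b → a = b) →
      ∃ L : List X, L.Nodup ∧ (∀ i, i ∈ L ↔ i ∈ F) ∧ L.length = n ∧
        L.Pairwise (fun a b => key a < key b)
  | 0, F, key, hc, _ => ⟨[], by simp, by simp [Finset.card_eq_zero.mp hc], rfl, by simp⟩
  | (n+1), F, key, hc, hinj => by
    have hne : F.Nonempty := by rw [← Finset.card_pos, hc]; omega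
    obtain ⟨a, haF, hmin⟩ := F.exists_min_image key hne
    obtain ⟨L', hnd, hmem, hlen, hpw⟩ := ftaux_exists_sorted_enum n (F.erase a) key
      (by rw [Finset.card_erase_of_mem haF, hc]; omega)
      (fun b hb c hc' h => hinj b (Finset.mem_of_mem_erase hb) c (Finset.mem_of_mem_erase hc') h)
    refine ⟨a :: L', ?_, ?_, by simp [hlen], ?_⟩
    · refine List.nodup_cons.mpr ⟨fun hmem' => ?_, hnd⟩
      exact (Finset.notMem_erase a F) ((hmem a).mp hmem')
    · intro i
      simp only [List.mem_cons, hmem, Finset.mem_erase]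
      constructor
      · rintro (rfl | ⟨-, h⟩) <;> [exact haF; exact h]
      · intro hiF
        by_cases hia : i = a
        · exact Or.inl hia
        · exact Or.inr ⟨hia, hiF⟩
    · refine List.pairwise_cons.mpr ⟨fun b hb => ?_, hpw⟩
      have hbF : b ∈ F.erase a := (hmem b).mp hb
      have h1 : key a ≤ key b := hmin b (Finset.mem_of_mem_erase hbF)
      rcases lt_or_eq_of_le h1 with h | h
      · exact h
      · exact absurd (hinj a haF b (Finset.mem_of_mem_erase hbF) h)
          (Ne.symm (Finset.ne_of_mem_erase hbF))

private lemma ftaux_exists_good_order {X : Type*} [MetricSpace X] [DecidableEq X]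
    (F C : Finset X)
    (hultra : ∀ a ∈ F ∪ C, ∀ b ∈ F ∪ C, ∀ c ∈ F ∪ C, dist a c ≤ max (dist a b) (dist b c)) :
    ∃ L : List X, L.Nodup ∧ (∀ i, i ∈ L ↔ i ∈ F) ∧ L.length = F.card ∧
      ∀ (m1 m2 m3 : ℕ) (a b c : X), m1 ≤ m2 → m2 ≤ m3 → L[m1]? = some a → L[m2]? = some b →
        L[m3]? = some c → dist a b ≤ dist a c := by
  classical
  set L0 : List X := F.toList with hL0
  have hL0mem : ∀ z, z ∈ L0 ↔ z ∈ F := fun z => Finset.mem_toList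
  letI : WellFoundedLT (Fin L0.length) := inferInstance
  letI : LinearOrder (Lex (Fin L0.length → ℝ)) := Pi.Lex.linearOrder
  set key : X → Lex (Fin L0.length → ℝ) := fun i => toLex (fun π => dist (L0.get π) i) with hkey
  have hinj : ∀ a ∈ F, ∀ b ∈ F, key a = key b → a = b := by
    intro a ha b hb h
    obtain ⟨π, hπ⟩ := List.mem_iff_get.mp ((hL0mem a).mpr ha)
    have h' : ∀ π, dist (L0.get π) a = dist (L0.get π) b := fun π => congrFun (congrArg ofLex h) π
    have := h' π
    rw [hπ, dist_self] at this
    exact dist_eq_zero.mp this.symm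
  obtain ⟨L, hnd, hmem, hlen, hpw⟩ := ftaux_exists_sorted_enum F.card F key rfl hinj
  refine ⟨L, hnd, hmem, hlen, ?_⟩
  intro m1 m2 m3 a b c h12 h23 ha hb hc
  have hm3 : m3 < L.length := by
    by_contra h
    simp [List.getElem?_eq_none (le_of_not_gt h)] at hc
  have hm2 : m2 < L.length := lt_of_le_of_lt h23 hm3
  have hm1 : m1 < L.length := lt_of_le_of_lt h12 hm2
  have ha' : a = L[m1] := by rw [List.getElem?_eq_getElem hm1] at ha; exact (Option.some_inj.mp ha).symm
  have hb' : b = L[m2] := by rw [List.getElem?_eq_getElem hm2] at hb; exact (Option.some_inj.mp hb).symm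
  have hc' : c = L[m3] := by rw [List.getElem?_eq_getElem hm3] at hc; exact (Option.some_inj.mp hc).symm
  have haF : a ∈ F := (hmem a).mp (ha' ▸ List.getElem_mem hm1)
  have hbF : b ∈ F := (hmem b).mp (hb' ▸ List.getElem_mem hm2)
  have hcF : c ∈ F := (hmem c).mp (hc' ▸ List.getElem_mem hm3)
  have hau : a ∈ F ∪ C := Finset.mem_union_left _ haF
  have hbu : b ∈ F ∪ C := Finset.mem_union_left _ hbF
  have hcu : c ∈ F ∪ C := Finset.mem_union_left _ hcF
  rcases eq_or_lt_of_le h12 with rfl | h12'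
  · have hab : a = b := by rw [ha] at hb; exact Option.some_inj.mp hb
    rw [← hab, dist_self]
    exact dist_nonneg
  rcases eq_or_lt_of_le h23 with rfl | h23'
  · have hbc : b = c := by rw [hb] at hc; exact Option.some_inj.mp hc
    rw [hbc]
  by_contra hcon
  push_neg at hcon
  -- hcon : dist a c < dist a b
  have pw := List.pairwise_iff_getElem.mp hpw
  have hab : ∃ π : Fin L0.length, (∀ j, j < π → dist (L0.get j) a = dist (L0.get j) b) ∧
      dist (L0.get π) a < dist (L0.get π) b := by
    have h := pw m1 m2 hm1 hm2 h12'
    rw [← ha', ← hb'] at h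
    exact h
  have hbc : ∃ π : Fin L0.length, (∀ j, j < π → dist (L0.get j) b = dist (L0.get j) c) ∧
      dist (L0.get π) b < dist (L0.get π) c := by
    have h := pw m2 m3 hm2 hm3 h23'
    rw [← hb', ← hc'] at h
    exact h
  have hRbc : dist b c = dist a b := by
    have t1 := le_max_iff.mp (hultra a hau c hcu b hbu)
    have t2 := le_max_iff.mp (hultra c hcu a hau b hbu)
    have c1 : dist c b = dist b c := dist_comm c b
    have c2 : dist c a = dist a c := dist_comm c a
    rcases t1 with t|t <;> rcases t2 with t'|t' <;> linarith
  have key_facts : ∀ z ∈ F ∪ C,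
      (dist z a < dist a b → dist z b = dist a b ∧ dist z c < dist a b) ∧
      (dist z a = dist a b → dist z c = dist a b ∧ dist z b ≤ dist a b) ∧
      (dist a b < dist z a → dist z b = dist z a ∧ dist z c = dist z a) := by
    intro z hz
    have t1 := le_max_iff.mp (hultra z hz a hau b hbu)
    have t2 := le_max_iff.mp (hultra a hau z hz b hbu)
    have t3 := le_max_iff.mp (hultra z hz a hau c hcu)
    have t4 := le_max_iff.mp (hultra z hz b hbu a hau)
    have t5 := le_max_iff.mp (hultra z hz c hcu a hau)
    have c1 : dist a z = dist z a := dist_comm a z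
    have c2 : dist b a = dist a b := dist_comm b a
    have c3 : dist c a = dist a c := dist_comm c a
    refine ⟨?_, ?_, ?_⟩ <;> intro h
    · constructor
      · rcases t1 with t|t <;> rcases t2 with t'|t' <;> linarith
      · rcases t3 with t|t <;> linarith
    · constructor
      · rcases t3 with t|t <;> rcases t5 with t'|t' <;> linarith
      · rcases t1 with t|t <;> linarith
    · constructor
      · rcases t1 with t|t <;> rcases t4 with t'|t' <;> linarith
      · rcases t3 with t|t <;> rcases t5 with t'|t' <;> linarith
  obtain ⟨π1, hπ1eq, hπ1lt⟩ := hab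
  obtain ⟨π2, hπ2eq, hπ2lt⟩ := hbc
  have hπ1lt' : dist (L0.get π1) a < dist (L0.get π1) b := hπ1lt
  have hπ2lt' : dist (L0.get π2) b < dist (L0.get π2) c := hπ2lt
  have hz1u : L0.get π1 ∈ F ∪ C := Finset.mem_union_left _ ((hL0mem _).mp (L0.get_mem _))
  have hz2u : L0.get π2 ∈ F ∪ C := Finset.mem_union_left _ ((hL0mem _).mp (L0.get_mem _))
  obtain ⟨kf1a, kf1b, kf1c⟩ := key_facts (L0.get π1) hz1u
  obtain ⟨kf2a, kf2b, kf2c⟩ := key_facts (L0.get π2) hz2u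
  have hz1a : dist (L0.get π1) a < dist a b := by
    rcases lt_trichotomy (dist (L0.get π1) a) (dist a b) with h|h|h
    · exact h
    · have := (kf1b h).2
      linarith
    · have := (kf1c h).1
      linarith
  have hz1b : dist (L0.get π1) b = dist a b := (kf1a hz1a).1
  have hz1c : dist (L0.get π1) c < dist a b := (kf1a hz1a).2
  have hz2a : dist (L0.get π2) a = dist a b := by
    rcases lt_trichotomy (dist (L0.get π2) a) (dist a b) with h|h|h
    · obtain ⟨e1, e2⟩ := kf2a h
      linarith
    · exact h
    · obtain ⟨e1, e2⟩ := kf2c h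
      linarith
  have hz2c : dist (L0.get π2) c = dist a b := (kf2b hz2a).1
  rcases lt_trichotomy π1 π2 with hππ | hππ | hππ
  · have heq : dist (L0.get π1) b = dist (L0.get π1) c := hπ2eq π1 hππ
    linarith
  · rw [hππ] at hπ1lt' hz1a
    linarith
  · have heq : dist (L0.get π2) a = dist (L0.get π2) b := hπ1eq π2 hππ
    linarith


noncomputable def ftNxt (A : Finset ℝ) (top : ℝ) (v : ℝ) : ℝ :=
  if h : (A.filter (fun u => v < u)).Nonempty then (A.filter (fun u => v < u)).min' h else top

lemma ftNxt_ge (A : Finset ℝ) (top v : ℝ) (h1 : v ≤ top) : v ≤ ftNxt A top v := by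
  unfold ftNxt
  split_ifs with h
  · have h2 := Finset.min'_mem _ h
    have h3 := (Finset.mem_filter.mp h2).2
    linarith
  · exact h1

lemma ftaux_tele (A : Finset ℝ) (top : ℝ) (htop : ∀ u ∈ A, u ≤ top) (a : ℝ) (ha : a ∈ A) :
    ∑ v ∈ A.filter (fun v => a ≤ v), (ftNxt A top v - v) = top - a := by
  classical
  suffices H : ∀ (N : ℕ) (a : ℝ), a ∈ A → (A.filter (fun v => a ≤ v)).card ≤ N →
      ∑ v ∈ A.filter (fun v => a ≤ v), (ftNxt A top v - v) = top - a from
    H (A.filter (fun v => a ≤ v)).card a ha le_rfl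
  intro N
  induction N with
  | zero =>
    intro a ha hcard
    exfalso
    have : a ∈ A.filter (fun v => a ≤ v) := Finset.mem_filter.mpr ⟨ha, le_rfl⟩
    have := Finset.card_pos.mpr ⟨a, this⟩
    omega
  | succ N ih =>
    intro a ha hcard
    by_cases hB : (A.filter (fun u => a < u)).Nonempty
    · have ha'A : (A.filter (fun u => a < u)).min' hB ∈ A :=
        (Finset.mem_filter.mp ((A.filter (fun u => a < u)).min'_mem hB)).1
      have haa' : a < (A.filter (fun u => a < u)).min' hB :=
        (Finset.mem_filter.mp ((A.filter (fun u => a < u)).min'_mem hB)).2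
      set a' := (A.filter (fun u => a < u)).min' hB with ha'
      have hnxt : ftNxt A top a = a' := by rw [ftNxt, dif_pos hB]
      have hsplit : A.filter (fun v => a ≤ v) = insert a (A.filter (fun v => a' ≤ v)) := by
        ext v
        simp only [Finset.mem_insert, Finset.mem_filter]
        constructor
        · rintro ⟨hvA, hav⟩
          rcases eq_or_lt_of_le hav with h|h
          · exact Or.inl h.symm
          · exact Or.inr ⟨hvA, (A.filter (fun u => a < u)).min'_le v (Finset.mem_filter.mpr ⟨hvA, h⟩)⟩
        · rintro (rfl | ⟨hvA, h⟩)
          · exact ⟨ha, le_refl _⟩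
          · exact ⟨hvA, le_trans (le_of_lt haa') h⟩
      have hnotmem : a ∉ A.filter (fun v => a' ≤ v) := by
        simp only [Finset.mem_filter]; rintro ⟨-, h⟩; linarith
      have hcard' : (A.filter (fun v => a' ≤ v)).card ≤ N := by
        have : (A.filter (fun v => a ≤ v)).card = (A.filter (fun v => a' ≤ v)).card + 1 := by
          rw [hsplit, Finset.card_insert_of_notMem hnotmem]
        omega
      rw [hsplit, Finset.sum_insert hnotmem, hnxt, ih a' ha'A hcard']
      ring
    · have hsing : A.filter (fun v => a ≤ v) = {a} := by
        ext v
        simp only [Finset.mem_filter, Finset.mem_singleton]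
        constructor
        · rintro ⟨hvA, hav⟩
          rcases eq_or_lt_of_le hav with h|h
          · exact h.symm
          · exact absurd ⟨v, Finset.mem_filter.mpr ⟨hvA, h⟩⟩ hB
        · rintro rfl; exact ⟨ha, le_refl _⟩
      have hnxt : ftNxt A top a = top := by rw [ftNxt, dif_neg hB]
      rw [hsing, Finset.sum_singleton, hnxt]

lemma ftaux_sorted_getD_le {l : List ℝ} (hs : l.Pairwise (· ≤ ·)) {s : ℕ} (hsl : s < l.length)
    (v : ℝ) : l.getD s 0 ≤ v ↔ s < l.countP (fun u => decide (u ≤ v)) := by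
  classical
  have hmono : ∀ (i j : ℕ) (hi : i < l.length) (hj : j < l.length), i ≤ j → l[i] ≤ l[j] := by
    intro i j hi hj hij
    rcases eq_or_lt_of_le hij with rfl|h
    · exact le_refl _
    · exact List.pairwise_iff_getElem.mp hs i j hi hj h
  rw [List.getD_eq_getElem l 0 hsl]
  constructor
  · intro h
    have h1 : l = l.take (s+1) ++ l.drop (s+1) := (List.take_append_drop _ _).symm
    have h2 : (l.take (s+1)).countP (fun u => decide (u ≤ v)) = (l.take (s+1)).length := by
      rw [List.countP_eq_length]
      intro u hu
      obtain ⟨i, hi, hieq⟩ := List.mem_iff_getElem.mp hu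
      have hilen : i < l.length := by
        have := hi
        rw [List.length_take] at this
        omega
      have his : i ≤ s := by
        have := hi
        rw [List.length_take] at this
        omega
      rw [List.getElem_take] at hieq
      rw [← hieq]
      simpa using le_trans (hmono i s hilen hsl his) h
    have h3 : (l.take (s+1)).length = s + 1 := by
      rw [List.length_take]; omega
    calc s < s + 1 := Nat.lt_succ_self s
    _ = (l.take (s+1)).countP (fun u => decide (u ≤ v)) := by rw [h2, h3]
    _ ≤ l.countP (fun u => decide (u ≤ v)) := by
        conv_rhs => rw [h1]
        rw [List.countP_append]
        omega
  · intro h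
    by_contra hlt
    push_neg at hlt
    have h1 : l = l.take s ++ l.drop s := (List.take_append_drop _ _).symm
    have h2 : (l.drop s).countP (fun u => decide (u ≤ v)) = 0 := by
      rw [List.countP_eq_zero]
      intro u hu
      obtain ⟨i, hi, hieq⟩ := List.mem_iff_getElem.mp hu
      rw [List.getElem_drop] at hieq
      have hilen : s + i < l.length := by
        have := hi
        rw [List.length_drop] at this
        omega
      have : l[s] ≤ u := by rw [← hieq]; exact hmono s (s+i) hsl hilen (by omega)
      simp only [decide_eq_true_eq]
      intro hc
      linarith
    have h3 : l.countP (fun u => decide (u ≤ v)) ≤ s := by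
      conv_lhs => rw [h1]
      rw [List.countP_append, h2]
      have := List.countP_le_length (l := l.take s) (p := fun u => decide (u ≤ v))
      have h4 : (l.take s).length ≤ s := by rw [List.length_take]; omega
      omega
    omega

lemma ftaux_count_min (r N : ℕ) : ((Finset.range r).filter (fun s => s < N)).card = min r N := by
  have : (Finset.range r).filter (fun s => s < N) = Finset.range (min r N) := by
    ext s
    simp only [Finset.mem_filter, Finset.mem_range]
    omega
  rw [this, Finset.card_range]

lemma ftaux_sum_take (l : List ℝ) (r : ℕ) (hr : r ≤ l.length) :
    (l.take r).sum = ∑ s ∈ Finset.range r, l.getD s 0 := by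
  induction r with
  | zero => simp
  | succ m ih =>
    have hm : m < l.length := lt_of_lt_of_le (Nat.lt_succ_self m) hr
    rw [List.take_succ, List.sum_append, ih (le_of_lt hm), Finset.sum_range_succ]
    rw [List.getD_eq_getElem l 0 hm, List.getElem?_eq_getElem hm]
    simp

/-- FTMed on an ultrametric: main theorem. -/
theorem ftmed_ultrametric_integral_optimal {X : Type*} [MetricSpace X] [DecidableEq X]
    (I : FTMedInstance X)
    (hultra : ∀ a ∈ I.F ∪ I.C, ∀ b ∈ I.F ∪ I.C, ∀ c ∈ I.F ∪ I.C,
      dist a c ≤ max (dist a b) (dist b c))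
    (x : X → X → ℝ) (y : X → ℝ) (hfeas : I.LPFeasible x y) :
    ∃ S : Finset X, S ⊆ I.F ∧ (∀ j ∈ I.C, I.req j ≤ S.card) ∧ S.card ≤ I.k ∧
      I.cost S ≤ I.LPObj x := by
  classical
  obtain ⟨hx01, hy01, hxy, hxsum, hysum⟩ := hfeas
  by_cases hC : I.C = ∅
  · refine ⟨∅, by simp, ?_, by simp, ?_⟩
    · intro j hj; rw [hC] at hj; simp at hj
    · rw [FTMedInstance.cost, FTMedInstance.LPObj, hC]; simp
  obtain ⟨j0, hj0⟩ := Finset.nonempty_iff_ne_empty.mpr hC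
  have hFne : I.F.Nonempty := by
    rw [Finset.nonempty_iff_ne_empty]
    intro h
    have h1 := hxsum j0 hj0
    rw [h] at h1
    simp only [Finset.sum_empty] at h1
    have h2 := I.req_pos j0 hj0
    have : (0:ℝ) < (I.req j0 : ℝ) := by exact_mod_cast h2
    linarith
  obtain ⟨L, hnd, hmem, hlen, hord⟩ := ftaux_exists_good_order I.F I.C hultra
  set n := L.length with hn
  set Lg : ℕ → X := fun m => L.getD m j0 with hLg
  have hLgeq' : ∀ (m : ℕ) (hm : m < n), Lg m = L[m] := by
    intro m hm
    rw [hLg]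
    simp only
    rw [List.getD_eq_getElem?_getD, List.getElem?_eq_getElem hm]
    rfl
  have hLgF : ∀ m, m < n → Lg m ∈ I.F := by
    intro m hm
    rw [hLgeq' m hm]
    exact (hmem _).mp (List.getElem_mem hm)
  have hLgsome : ∀ m, m < n → L[m]? = some (Lg m) := by
    intro m hm
    rw [List.getElem?_eq_getElem hm, hLgeq' m hm]
  have hordg : ∀ m1 m2 m3, m1 ≤ m2 → m2 ≤ m3 → m3 < n →
      dist (Lg m1) (Lg m2) ≤ dist (Lg m1) (Lg m3) := by
    intro m1 m2 m3 h12 h23 h3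
    exact hord m1 m2 m3 _ _ _ h12 h23 (hLgsome m1 (by omega)) (hLgsome m2 (by omega))
      (hLgsome m3 h3)
  have hidx : ∀ i ∈ I.F, L.idxOf i < n ∧ Lg (L.idxOf i) = i := by
    intro i hi
    have h1 : i ∈ L := (hmem i).mpr hi
    have h2 : L.idxOf i < n := List.idxOf_lt_length_iff.mpr h1
    refine ⟨h2, ?_⟩
    rw [hLgeq' _ h2]
    exact List.getElem_idxOf h2
  have hidx' : ∀ m, m < n → L.idxOf (Lg m) = m := by
    intro m hm
    rw [hLgeq' _ hm]
    exact List.Nodup.idxOf_getElem hnd m hm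
  -- prefix sums
  set Yp : ℕ → ℝ := fun m => ((L.take m).map y).sum with hYp
  have hYp0 : Yp 0 = 0 := by simp [hYp]
  have hYpsucc : ∀ m, m < n → Yp (m+1) = Yp m + y (Lg m) := by
    intro m hm
    rw [hYp]
    simp only
    rw [List.take_succ, List.getElem?_eq_getElem hm, List.map_append, List.sum_append,
      hLgeq' m hm]
    simp
  have hYptot : Yp n = ∑ i ∈ I.F, y i := by
    have h1 : I.F = L.toFinset := by
      ext i
      rw [List.mem_toFinset]
      exact (hmem i).symm
    rw [hYp]
    simp only [hn, List.take_length]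
    rw [h1, List.sum_toFinset y hnd]
  have hYpdiff : ∀ a b : ℕ, a ≤ b → b ≤ n → Yp b - Yp a = ∑ m ∈ Finset.Ico a b, y (Lg m) := by
    intro a b hab hbn
    have h1 : ∀ m ∈ Finset.Ico a b, y (Lg m) = Yp (m+1) - Yp m := by
      intro m hm
      have := Finset.mem_Ico.mp hm
      rw [hYpsucc m (by omega)]
      ring
    rw [Finset.sum_congr rfl h1, Finset.sum_Ico_eq_sub _ hab,
      Finset.sum_range_sub (fun m => Yp m), Finset.sum_range_sub (fun m => Yp m)]
    ring
  -- floors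
  set Nf : ℝ → ℕ → ℤ := fun t m => ⌊Yp m + t⌋ with hNf
  have hstep : ∀ t : ℝ, 0 ≤ t → ∀ m, m < n → Nf t m ≤ Nf t (m+1) ∧ Nf t (m+1) ≤ Nf t m + 1 := by
    intro t ht m hm
    have h0 := (hy01 (Lg m) (hLgF m hm)).1
    have h1 := (hy01 (Lg m) (hLgF m hm)).2
    rw [hNf]
    simp only
    rw [hYpsucc m hm]
    constructor
    · exact Int.floor_le_floor (by linarith)
    · have : Yp m + y (Lg m) + t ≤ (Yp m + t) + (1:ℤ) := by push_cast; linarith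
      calc ⌊Yp m + y (Lg m) + t⌋ ≤ ⌊(Yp m + t) + (1:ℤ)⌋ := Int.floor_le_floor this
      _ = ⌊Yp m + t⌋ + 1 := Int.floor_add_intCast _ _
  -- the rounded sets
  set SS : ℝ → Finset X := fun t =>
    I.F.filter (fun i => Nf t (L.idxOf i) < Nf t (L.idxOf i + 1)) with hSS
  have hSsub : ∀ t, SS t ⊆ I.F := fun t => Finset.filter_subset _ _
  -- counting lemma
  have hcount : ∀ t : ℝ, 0 ≤ t → ∀ (P : X → Prop) [DecidablePred P] (a b : ℕ), a ≤ b → b ≤ n →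
      (∀ m, m < n → (P (Lg m) ↔ (a ≤ m ∧ m < b))) →
      (((SS t).filter P).card : ℤ) = Nf t b - Nf t a := by
    intro t ht P hdP a b hab hbn hP
    have hbij : ((SS t).filter P).card =
        ((Finset.Ico a b).filter (fun m => Nf t m < Nf t (m+1))).card := by
      apply Finset.card_bij (fun i _ => L.idxOf i)
      · intro i hi
        obtain ⟨hiS, hiP⟩ := Finset.mem_filter.mp hi
        obtain ⟨hiF, hisel⟩ := Finset.mem_filter.mp hiS
        obtain ⟨hilt, hieq⟩ := hidx i hiF
        have := (hP _ hilt).mp (by rw [hieq]; exact hiP)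
        exact Finset.mem_filter.mpr ⟨Finset.mem_Ico.mpr this, hisel⟩
      · intro i1 hi1 i2 hi2 heq
        obtain ⟨hi1S, _⟩ := Finset.mem_filter.mp hi1
        obtain ⟨hi1F, _⟩ := Finset.mem_filter.mp hi1S
        obtain ⟨hi2S, _⟩ := Finset.mem_filter.mp hi2
        obtain ⟨hi2F, _⟩ := Finset.mem_filter.mp hi2S
        rw [← (hidx i1 hi1F).2, ← (hidx i2 hi2F).2, heq]
      · intro m hm
        obtain ⟨hmI, hmsel⟩ := Finset.mem_filter.mp hm
        obtain ⟨hma, hmb⟩ := Finset.mem_Ico.mp hmI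
        have hmn : m < n := by omega
        refine ⟨Lg m, ?_, hidx' m hmn⟩
        refine Finset.mem_filter.mpr ⟨Finset.mem_filter.mpr ⟨hLgF m hmn, ?_⟩, ?_⟩
        · rw [hidx' m hmn]; exact hmsel
        · exact (hP m hmn).mpr ⟨hma, hmb⟩
    rw [hbij]
    have hite : ∀ m ∈ Finset.Ico a b,
        (if Nf t m < Nf t (m+1) then (1:ℤ) else 0) = Nf t (m+1) - Nf t m := by
      intro m hm
      have hmn : m < n := by
        have := Finset.mem_Ico.mp hm
        omega
      obtain ⟨hs1, hs2⟩ := hstep t ht m hmn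
      split_ifs with h
      · omega
      · omega
    calc (((Finset.Ico a b).filter (fun m => Nf t m < Nf t (m+1))).card : ℤ)
        = ∑ m ∈ Finset.Ico a b, (if Nf t m < Nf t (m+1) then (1:ℤ) else 0) := by
          rw [Finset.card_filter]
          push_cast
          rfl
      _ = ∑ m ∈ Finset.Ico a b, (Nf t (m+1) - Nf t m) := Finset.sum_congr rfl hite
      _ = Nf t b - Nf t a := by
          rw [Finset.sum_Ico_eq_sub _ hab, Finset.sum_range_sub (fun m => Nf t m),
            Finset.sum_range_sub (fun m => Nf t m)]
          ring
  -- ball intervals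
  have hball : ∀ j ∈ I.C, ∀ v : ℝ, (∃ i ∈ I.F, dist j i ≤ v) →
      ∃ a b : ℕ, a ≤ b ∧ b ≤ n ∧
        (∀ m, m < n → (dist j (Lg m) ≤ v ↔ (a ≤ m ∧ m < b))) ∧
        Yp b - Yp a = ∑ i ∈ I.F.filter (fun i => dist j i ≤ v), y i := by
    intro j hj v hex
    have hjU : j ∈ I.F ∪ I.C := Finset.mem_union_right _ hj
    set M := (Finset.range n).filter (fun m => dist j (Lg m) ≤ v) with hM
    have hMne : M.Nonempty := by
      obtain ⟨i, hiF, hiv⟩ := hex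
      obtain ⟨hlt, heq⟩ := hidx i hiF
      exact ⟨L.idxOf i, Finset.mem_filter.mpr ⟨Finset.mem_range.mpr hlt, by rw [heq]; exact hiv⟩⟩
    set a := M.min' hMne with ha
    set bm := M.max' hMne with hbm
    have haM : a ∈ M := M.min'_mem hMne
    have hbM : bm ∈ M := M.max'_mem hMne
    have han : a < n := Finset.mem_range.mp (Finset.mem_filter.mp haM).1
    have hbn : bm < n := Finset.mem_range.mp (Finset.mem_filter.mp hbM).1
    have hav : dist j (Lg a) ≤ v := (Finset.mem_filter.mp haM).2
    have hbv : dist j (Lg bm) ≤ v := (Finset.mem_filter.mp hbM).2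
    have hab : a ≤ bm := M.min'_le bm hbM
    have hiff : ∀ m, m < n → (dist j (Lg m) ≤ v ↔ (a ≤ m ∧ m < bm + 1)) := by
      intro m hm
      constructor
      · intro hmv
        have hmM : m ∈ M := Finset.mem_filter.mpr ⟨Finset.mem_range.mpr hm, hmv⟩
        have h1 := M.min'_le m hmM
        have h2 := M.le_max' m hmM
        omega
      · rintro ⟨h1, h2⟩
        have h2' : m ≤ bm := by omega
        have hmU : Lg m ∈ I.F ∪ I.C := Finset.mem_union_left _ (hLgF m hm)
        have haU : Lg a ∈ I.F ∪ I.C := Finset.mem_union_left _ (hLgF a han)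
        have hbU : Lg bm ∈ I.F ∪ I.C := Finset.mem_union_left _ (hLgF bm hbn)
        have t1 := le_max_iff.mp (hultra j hjU (Lg a) haU (Lg m) hmU)
        have t2 : dist (Lg a) (Lg m) ≤ dist (Lg a) (Lg bm) := hordg a m bm h1 h2' hbn
        have t3 := le_max_iff.mp (hultra (Lg a) haU j hjU (Lg bm) hbU)
        have c1 : dist (Lg a) j = dist j (Lg a) := dist_comm _ _
        rcases t1 with t|t
        · linarith
        · rcases t3 with t'|t' <;> linarith
    refine ⟨a, bm + 1, by omega, by omega, hiff, ?_⟩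
    rw [hYpdiff a (bm+1) (by omega) (by omega)]
    refine Finset.sum_bij' (i := fun m _ => Lg m) (j := fun i _ => L.idxOf i)
      ?_ ?_ ?_ ?_ ?_
    · intro m hm
      have hmn : m < n := by
        have := Finset.mem_Ico.mp hm
        omega
      refine Finset.mem_filter.mpr ⟨hLgF m hmn, ?_⟩
      have := Finset.mem_Ico.mp hm
      exact (hiff m hmn).mpr (by omega)
    · intro i hi
      obtain ⟨hiF, hiv⟩ := Finset.mem_filter.mp hi
      obtain ⟨hlt, heq⟩ := hidx i hiF
      have := (hiff _ hlt).mp (by rw [heq]; exact hiv)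
      exact Finset.mem_Ico.mpr this
    · intro m hm
      have hmn : m < n := by
        have := Finset.mem_Ico.mp hm
        omega
      exact hidx' m hmn
    · intro i hi
      obtain ⟨hiF, _⟩ := Finset.mem_filter.mp hi
      exact (hidx i hiF).2
    · intro m hm
      rfl
  -- breakpoint set
  set Θ : Finset ℝ := insert 0
    (((Finset.range (n+1)).image (fun m => 1 - Int.fract (Yp m))).filter (fun u => u < 1)) with hΘ
  have hΘ0 : (0:ℝ) ∈ Θ := Finset.mem_insert_self _ _
  have hΘmem : ∀ t ∈ Θ, 0 ≤ t ∧ t < 1 := by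
    intro t ht
    rw [hΘ] at ht
    rcases Finset.mem_insert.mp ht with rfl | ht
    · norm_num
    · obtain ⟨ht1, ht2⟩ := Finset.mem_filter.mp ht
      obtain ⟨m, _, rfl⟩ := Finset.mem_image.mp ht1
      have := Int.fract_lt_one (Yp m)
      exact ⟨by linarith, ht2⟩
  have hΘtop : ∀ t ∈ Θ, t ≤ 1 := fun t ht => le_of_lt (hΘmem t ht).2
  set w : ℝ → ℝ := fun t => ftNxt Θ 1 t - t with hw
  have hw0 : ∀ t ∈ Θ, 0 ≤ w t := by
    intro t ht
    have := ftNxt_ge Θ 1 t (hΘtop t ht)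
    rw [hw]
    simp only
    linarith
  have hwsum : ∑ t ∈ Θ, w t = 1 := by
    have h1 := ftaux_tele Θ 1 hΘtop 0 hΘ0
    have h2 : Θ.filter (fun v => (0:ℝ) ≤ v) = Θ := by
      apply Finset.filter_true_of_mem
      intro t ht; exact (hΘmem t ht).1
    rw [h2] at h1
    rw [hw]
    simpa using h1
  have hwsuf : ∀ c ∈ Θ, ∑ t ∈ Θ.filter (fun u => c ≤ u), w t = 1 - c := by
    intro c hc
    have h1 := ftaux_tele Θ 1 hΘtop c hc
    rw [hw]
    simpa using h1
  have hEfloor : ∀ m, m ≤ n → ∑ t ∈ Θ, w t * ((Nf t m : ℤ) : ℝ) = Yp m := by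
    intro m hm
    by_cases hfr : Int.fract (Yp m) = 0
    · have hYint : ((⌊Yp m⌋ : ℤ) : ℝ) = Yp m := by
        have := Int.floor_add_fract (Yp m)
        rw [hfr] at this
        linarith
      have hval : ∀ t ∈ Θ, ((Nf t m : ℤ) : ℝ) = Yp m := by
        intro t ht
        obtain ⟨h0, h1⟩ := hΘmem t ht
        have he : Nf t m = ⌊Yp m⌋ := by
          rw [hNf]
          simp only
          conv_lhs => rw [← hYint]
          rw [add_comm, Int.floor_add_intCast]
          have : ⌊t⌋ = 0 := by
            rw [Int.floor_eq_zero_iff]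
            exact Set.mem_Ico.mpr ⟨h0, h1⟩
          omega
        rw [he, hYint]
      calc ∑ t ∈ Θ, w t * ((Nf t m : ℤ) : ℝ) = ∑ t ∈ Θ, w t * Yp m := by
            apply Finset.sum_congr rfl
            intro t ht
            rw [hval t ht]
        _ = (∑ t ∈ Θ, w t) * Yp m := by rw [Finset.sum_mul]
        _ = Yp m := by rw [hwsum, one_mul]
    · set c := 1 - Int.fract (Yp m) with hc
      have hfr0 : 0 < Int.fract (Yp m) := lt_of_le_of_ne (Int.fract_nonneg _) (Ne.symm hfr)
      have hfr1 : Int.fract (Yp m) < 1 := Int.fract_lt_one _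
      have hcΘ : c ∈ Θ := by
        rw [hΘ]
        apply Finset.mem_insert_of_mem
        apply Finset.mem_filter.mpr
        refine ⟨Finset.mem_image.mpr ⟨m, Finset.mem_range.mpr (by omega), rfl⟩, by linarith⟩
      have hval : ∀ t ∈ Θ, ((Nf t m : ℤ) : ℝ) = (⌊Yp m⌋ : ℝ) + (if c ≤ t then 1 else 0) := by
        intro t ht
        obtain ⟨h0, h1⟩ := hΘmem t ht
        have hdecomp : Yp m + t = (Int.fract (Yp m) + t) + ((⌊Yp m⌋ : ℤ) : ℝ) := by
          have := Int.floor_add_fract (Yp m)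
          linarith
        rw [hNf]
        simp only
        rw [hdecomp, Int.floor_add_intCast]
        split_ifs with hct
        · have hfl : ⌊Int.fract (Yp m) + t⌋ = 1 := by
            rw [Int.floor_eq_iff]
            constructor
            · push_cast
              rw [hc] at hct
              linarith
            · push_cast
              linarith
          rw [hfl]
          push_cast
          ring
        · have hfl : ⌊Int.fract (Yp m) + t⌋ = 0 := by
            rw [Int.floor_eq_zero_iff]
            refine Set.mem_Ico.mpr ⟨by linarith, ?_⟩
            push_neg at hct
            rw [hc] at hct
            linarith
          rw [hfl]
          push_cast
          ring
      calc ∑ t ∈ Θ, w t * ((Nf t m : ℤ) : ℝ)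
          = ∑ t ∈ Θ, (w t * (⌊Yp m⌋ : ℝ) + (if c ≤ t then w t else 0)) := by
            apply Finset.sum_congr rfl
            intro t ht
            rw [hval t ht]
            split_ifs with hct <;> ring
        _ = (∑ t ∈ Θ, w t) * (⌊Yp m⌋ : ℝ) + ∑ t ∈ Θ.filter (fun u => c ≤ u), w t := by
            rw [Finset.sum_add_distrib, Finset.sum_mul, Finset.sum_filter]
        _ = (⌊Yp m⌋ : ℝ) + (1 - c) := by rw [hwsum, one_mul, hwsuf c hcΘ]
        _ = Yp m := by
            have := Int.floor_add_fract (Yp m)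
            rw [hc]
            linarith
  have hNfeq : ∀ (t : ℝ) (mm : ℕ), Nf t mm = ⌊Yp mm + t⌋ := fun _ _ => rfl
  -- cardinalities
  have hYnk : Yp n ≤ (I.k : ℝ) := by rw [hYptot]; exact hysum
  have hYnr : ∀ j ∈ I.C, (I.req j : ℝ) ≤ Yp n := by
    intro j hj
    rw [hYptot, ← hxsum j hj]
    apply Finset.sum_le_sum
    intro i hi
    exact hxy i hi j hj
  have hScard : ∀ t ∈ Θ, ((SS t).card : ℤ) = ⌊Yp n + t⌋ := by
    intro t ht
    obtain ⟨h0, h1⟩ := hΘmem t ht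
    have h2 := hcount t h0 (fun _ => True) 0 n (Nat.zero_le n) le_rfl
      (by intro m hm; simpa using hm)
    have h3 : (SS t).filter (fun _ => True) = SS t := Finset.filter_true _
    rw [h3] at h2
    have h4 : Nf t 0 = 0 := by
      rw [hNfeq, hYp0, zero_add, Int.floor_eq_zero_iff]
      exact Set.mem_Ico.mpr ⟨h0, h1⟩
    rw [h2, h4, hNfeq]
    ring
  have hcardk : ∀ t ∈ Θ, (SS t).card ≤ I.k := by
    intro t ht
    obtain ⟨h0, h1⟩ := hΘmem t ht
    have h2 : ((SS t).card : ℤ) ≤ (I.k : ℤ) := by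
      rw [hScard t ht]
      have h3 : ⌊t⌋ = 0 := by
        rw [Int.floor_eq_zero_iff]; exact Set.mem_Ico.mpr ⟨h0, h1⟩
      calc ⌊Yp n + t⌋ ≤ ⌊t + ((I.k : ℤ) : ℝ)⌋ := Int.floor_le_floor (by push_cast; linarith)
        _ = ⌊t⌋ + I.k := Int.floor_add_intCast _ _
        _ = I.k := by omega
    exact_mod_cast h2
  have hcardr : ∀ t ∈ Θ, ∀ j ∈ I.C, I.req j ≤ (SS t).card := by
    intro t ht j hj
    obtain ⟨h0, h1⟩ := hΘmem t ht
    have h2 : ((I.req j : ℤ)) ≤ ((SS t).card : ℤ) := by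
      rw [hScard t ht, Int.le_floor]
      have := hYnr j hj
      push_cast
      linarith
    exact_mod_cast h2
  -- per-client inequality
  have hclient : ∀ j ∈ I.C, ∑ t ∈ Θ, w t * FTMedInstance.kSmallestSum j (SS t) (I.req j)
      ≤ ∑ i ∈ I.F, dist i j * x i j := by
    intro j hj
    set r := I.req j with hr
    set V := I.F.image (fun i => dist j i) with hV
    have hVne : V.Nonempty := hFne.image _
    set v0 := V.min' hVne with hv0
    set vtop := V.max' hVne with hvtop
    have hVtop : ∀ v ∈ V, v ≤ vtop := fun v hv => Finset.le_max' V v hv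
    set gap : ℝ → ℝ := fun v => ftNxt V vtop v - v with hgap
    have hgap0 : ∀ v ∈ V, 0 ≤ gap v := by
      intro v hv
      have := ftNxt_ge V vtop v (hVtop v hv)
      rw [hgap]
      simp only
      linarith
    have hdec : ∀ u ∈ V, u = v0 + ∑ v ∈ V.filter (fun v => v < u), gap v := by
      intro u hu
      have h1 := ftaux_tele V vtop hVtop u hu
      have h2 := ftaux_tele V vtop hVtop v0 (V.min'_mem hVne)
      have h3 : V.filter (fun v => v0 ≤ v) = V := by
        apply Finset.filter_true_of_mem
        intro v hv
        exact V.min'_le v hv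
      rw [h3] at h2
      have h4 : ∑ v ∈ V.filter (fun v => ¬ v < u), gap v = vtop - u := by
        rw [← h1]
        apply Finset.sum_congr
        · apply Finset.filter_congr
          intro v hv
          simp [not_lt]
        · intro v _
          rfl
      have h5 := Finset.sum_filter_add_sum_filter_not V (fun v => v < u) gap
      rw [h4] at h5
      have h6 : ∑ v ∈ V, gap v = vtop - v0 := h2
      rw [h6] at h5
      linarith
    have hX : ∀ v : ℝ, ∑ i ∈ I.F.filter (fun i => dist j i ≤ v), x i j ≤ (r:ℝ) := by
      intro v
      rw [← hxsum j hj]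
      apply Finset.sum_le_sum_of_subset_of_nonneg (Finset.filter_subset _ _)
      intro i hi _
      exact (hx01 i hi j hj).1
    have hkey : ∀ v ∈ V, ∑ i ∈ I.F.filter (fun i => dist j i ≤ v), x i j ≤
        ∑ t ∈ Θ, w t * min (r:ℝ) (((SS t).filter (fun i => dist j i ≤ v)).card : ℝ) := by
      intro v hv
      obtain ⟨i1, hi1F, hi1v⟩ := Finset.mem_image.mp hv
      obtain ⟨a, b, hab, hbn, hiff, hmass⟩ := hball j hj v ⟨i1, hi1F, le_of_eq hi1v⟩
      have hcnt : ∀ t ∈ Θ, (((SS t).filter (fun i => dist j i ≤ v)).card : ℤ) =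
          Nf t b - Nf t a := by
        intro t ht
        exact hcount t (hΘmem t ht).1 (fun i => dist j i ≤ v) a b hab hbn hiff
      have hXY : ∑ i ∈ I.F.filter (fun i => dist j i ≤ v), x i j ≤ Yp b - Yp a := by
        rw [hmass]
        apply Finset.sum_le_sum
        intro i hi
        exact hxy i (Finset.mem_of_mem_filter i hi) j hj
      by_cases hDr : (r:ℝ) ≤ Yp b - Yp a
      · have hpt : ∀ t ∈ Θ, min (r:ℝ) (((SS t).filter (fun i => dist j i ≤ v)).card : ℝ)
            = (r:ℝ) := by
          intro t ht
          have e1 : ⌊Yp a + t + ((r:ℤ) : ℝ)⌋ = Nf t a + (r:ℤ) := by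
            rw [hNfeq]
            exact Int.floor_add_intCast _ _
          have e2 : ⌊Yp a + t + ((r:ℤ) : ℝ)⌋ ≤ Nf t b := by
            rw [hNfeq t b]
            apply Int.floor_le_floor
            push_cast
            linarith
          have h1 : (r:ℤ) ≤ Nf t b - Nf t a := by omega
          have h2 : (r:ℤ) ≤ (((SS t).filter (fun i => dist j i ≤ v)).card : ℤ) := by
            rw [hcnt t ht]
            omega
          have h3 : (r:ℝ) ≤ (((SS t).filter (fun i => dist j i ≤ v)).card : ℝ) := by
            exact_mod_cast h2
          exact min_eq_left h3
        calc ∑ i ∈ I.F.filter (fun i => dist j i ≤ v), x i j ≤ (r:ℝ) := hX v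
          _ = (∑ t ∈ Θ, w t) * (r:ℝ) := by rw [hwsum, one_mul]
          _ = ∑ t ∈ Θ, w t * (r:ℝ) := by rw [Finset.sum_mul]
          _ = ∑ t ∈ Θ, w t * min (r:ℝ) (((SS t).filter (fun i => dist j i ≤ v)).card : ℝ) := by
              apply Finset.sum_congr rfl
              intro t ht
              rw [hpt t ht]
      · push_neg at hDr
        have hpt : ∀ t ∈ Θ, min (r:ℝ) (((SS t).filter (fun i => dist j i ≤ v)).card : ℝ)
            = ((Nf t b : ℤ) : ℝ) - ((Nf t a : ℤ) : ℝ) := by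
          intro t ht
          have e1 : ⌊Yp a + t + ((r:ℤ) : ℝ)⌋ = Nf t a + (r:ℤ) := by
            rw [hNfeq]
            exact Int.floor_add_intCast _ _
          have e2 : Nf t b ≤ ⌊Yp a + t + ((r:ℤ) : ℝ)⌋ := by
            rw [hNfeq t b]
            apply Int.floor_le_floor
            push_cast
            linarith
          have h1 : Nf t b - Nf t a ≤ (r:ℤ) := by omega
          have h2 : (((SS t).filter (fun i => dist j i ≤ v)).card : ℤ) ≤ (r:ℤ) := by
            rw [hcnt t ht]
            omega
          have h3 : (((SS t).filter (fun i => dist j i ≤ v)).card : ℝ) ≤ (r:ℝ) := by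
            exact_mod_cast h2
          rw [min_eq_right h3]
          exact_mod_cast hcnt t ht
        calc ∑ i ∈ I.F.filter (fun i => dist j i ≤ v), x i j ≤ Yp b - Yp a := hXY
          _ = ∑ t ∈ Θ, w t * ((Nf t b : ℤ) : ℝ) - ∑ t ∈ Θ, w t * ((Nf t a : ℤ) : ℝ) := by
              rw [hEfloor b hbn, hEfloor a (le_trans hab hbn)]
          _ = ∑ t ∈ Θ, (w t * ((Nf t b : ℤ) : ℝ) - w t * ((Nf t a : ℤ) : ℝ)) := by
              rw [Finset.sum_sub_distrib]
          _ = ∑ t ∈ Θ, w t * min (r:ℝ) (((SS t).filter (fun i => dist j i ≤ v)).card : ℝ) := by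
              apply Finset.sum_congr rfl
              intro t ht
              rw [hpt t ht]
              ring
    -- the kSmallestSum identity
    have hkss : ∀ t ∈ Θ, FTMedInstance.kSmallestSum j (SS t) r =
        v0 * (r:ℝ) + ∑ v ∈ V, gap v *
          ((r:ℝ) - min (r:ℝ) (((SS t).filter (fun i => dist j i ≤ v)).card : ℝ)) := by
      intro t ht
      have hrcard : r ≤ (SS t).card := hcardr t ht j hj
      set DS := ((SS t).val.map (fun i => dist j i)).sort (· ≤ ·) with hDS
      have hDSlen : DS.length = (SS t).card := by
        rw [hDS, Multiset.length_sort, Multiset.card_map]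
        rfl
      have hDSsorted : DS.Pairwise (· ≤ ·) := Multiset.pairwise_sort _ _
      have hDSmem : ∀ s, s < r → DS.getD s 0 ∈ V := by
        intro s hs
        have hslen : s < DS.length := by omega
        rw [List.getD_eq_getElem?_getD, List.getElem?_eq_getElem hslen]
        simp only [Option.getD_some]
        have hmem2 : DS[s] ∈ DS := List.getElem_mem hslen
        have hmem3 : DS[s] ∈ (SS t).val.map (fun i => dist j i) := by
          rw [← Multiset.mem_sort (· ≤ ·)]
          exact hmem2
        obtain ⟨i, hiS, hieq⟩ := Multiset.mem_map.mp hmem3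
        rw [← hieq]
        exact Finset.mem_image.mpr ⟨i, hSsub t hiS, rfl⟩
      have hcountP : ∀ v : ℝ, DS.countP (fun u => decide (u ≤ v)) =
          ((SS t).filter (fun i => dist j i ≤ v)).card := by
        intro v
        have h1 : DS.countP (fun u => decide (u ≤ v)) =
            Multiset.countP (fun u => u ≤ v) ((SS t).val.map (fun i => dist j i)) := by
          rw [← Multiset.coe_countP, hDS, Multiset.sort_eq]
        rw [h1, Multiset.countP_map]
        rfl
      have hgetle : ∀ s, s < r → ∀ v : ℝ,
          (DS.getD s 0 ≤ v ↔ s < ((SS t).filter (fun i => dist j i ≤ v)).card) := by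
        intro s hs v
        rw [← hcountP v]
        exact ftaux_sorted_getD_le hDSsorted (by omega) v
      have hstart : FTMedInstance.kSmallestSum j (SS t) r = (DS.take r).sum := rfl
      rw [hstart, ftaux_sum_take DS r (by omega)]
      calc ∑ s ∈ Finset.range r, DS.getD s 0
          = ∑ s ∈ Finset.range r, (v0 + ∑ v ∈ V, (if v < DS.getD s 0 then gap v else 0)) := by
            apply Finset.sum_congr rfl
            intro s hs
            have hsr := Finset.mem_range.mp hs
            conv_lhs => rw [hdec (DS.getD s 0) (hDSmem s hsr)]
            congr 1
            rw [Finset.sum_filter]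
        _ = (r:ℝ) * v0 + ∑ s ∈ Finset.range r, ∑ v ∈ V, (if v < DS.getD s 0 then gap v else 0) := by
            rw [Finset.sum_add_distrib, Finset.sum_const, Finset.card_range, nsmul_eq_mul]
        _ = (r:ℝ) * v0 + ∑ v ∈ V, ∑ s ∈ Finset.range r, (if v < DS.getD s 0 then gap v else 0) := by
            rw [Finset.sum_comm]
        _ = (r:ℝ) * v0 + ∑ v ∈ V, gap v *
              ((r:ℝ) - min (r:ℝ) (((SS t).filter (fun i => dist j i ≤ v)).card : ℝ)) := by
            congr 1
            apply Finset.sum_congr rfl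
            intro v hv
            have hcnt1 : ((Finset.range r).filter (fun s => DS.getD s 0 ≤ v)).card =
                min r (((SS t).filter (fun i => dist j i ≤ v)).card) := by
              have he : (Finset.range r).filter (fun s => DS.getD s 0 ≤ v) =
                  (Finset.range r).filter
                    (fun s => s < ((SS t).filter (fun i => dist j i ≤ v)).card) := by
                apply Finset.filter_congr
                intro s hs
                have hsr := Finset.mem_range.mp hs
                exact hgetle s hsr v
              rw [he, ftaux_count_min]
            have hcnt2 : ((Finset.range r).filter (fun s => v < DS.getD s 0)).card =
                r - min r (((SS t).filter (fun i => dist j i ≤ v)).card) := by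
              have h1 := Finset.card_filter_add_card_filter_not
                (s := Finset.range r) (p := fun s => DS.getD s 0 ≤ v)
              have h2 : (Finset.range r).filter (fun s => ¬ DS.getD s 0 ≤ v) =
                  (Finset.range r).filter (fun s => v < DS.getD s 0) := by
                apply Finset.filter_congr
                intro s _
                simp [not_le]
              rw [hcnt1, h2, Finset.card_range] at h1
              omega
            calc ∑ s ∈ Finset.range r, (if v < DS.getD s 0 then gap v else 0)
                = ∑ s ∈ (Finset.range r).filter (fun s => v < DS.getD s 0), gap v :=
                  (Finset.sum_filter _ _).symm
              _ = ((Finset.range r).filter (fun s => v < DS.getD s 0)).card • gap v :=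
                  Finset.sum_const _
              _ = ((r - min r (((SS t).filter (fun i => dist j i ≤ v)).card) : ℕ) : ℝ) * gap v := by
                  rw [hcnt2, nsmul_eq_mul]
              _ = gap v * ((r:ℝ) - min (r:ℝ)
                    (((SS t).filter (fun i => dist j i ≤ v)).card : ℝ)) := by
                  have hminle : min r (((SS t).filter (fun i => dist j i ≤ v)).card) ≤ r :=
                    min_le_left _ _
                  rw [Nat.cast_sub hminle, Nat.cast_min]
                  ring
        _ = v0 * (r:ℝ) + ∑ v ∈ V, gap v *
              ((r:ℝ) - min (r:ℝ) (((SS t).filter (fun i => dist j i ≤ v)).card : ℝ)) := by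
            rw [mul_comm]
    -- LP identity
    have hdF : ∀ i ∈ I.F, dist i j = v0 + ∑ v ∈ V.filter (fun v => v < dist j i), gap v := by
      intro i hi
      rw [dist_comm]
      exact hdec (dist j i) (Finset.mem_image.mpr ⟨i, hi, rfl⟩)
    have hLP : ∑ i ∈ I.F, dist i j * x i j =
        v0 * (r:ℝ) + ∑ v ∈ V, gap v *
          ((r:ℝ) - ∑ i ∈ I.F.filter (fun i => dist j i ≤ v), x i j) := by
      have hsplit : ∀ v : ℝ, ∑ i ∈ I.F.filter (fun i => v < dist j i), x i j
          = (r:ℝ) - ∑ i ∈ I.F.filter (fun i => dist j i ≤ v), x i j := by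
        intro v
        have h1 := Finset.sum_filter_add_sum_filter_not I.F (fun i => dist j i ≤ v)
          (fun i => x i j)
        have h2 : I.F.filter (fun i => ¬ dist j i ≤ v) = I.F.filter (fun i => v < dist j i) := by
          apply Finset.filter_congr
          intro i _
          simp [not_le]
        rw [h2, hxsum j hj] at h1
        linarith
      calc ∑ i ∈ I.F, dist i j * x i j
          = ∑ i ∈ I.F, (v0 * x i j + ∑ v ∈ V, (if v < dist j i then gap v * x i j else 0)) := by
            apply Finset.sum_congr rfl
            intro i hi
            rw [hdF i hi, add_mul, Finset.sum_mul, Finset.sum_filter]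
        _ = v0 * (∑ i ∈ I.F, x i j) +
              ∑ i ∈ I.F, ∑ v ∈ V, (if v < dist j i then gap v * x i j else 0) := by
            rw [Finset.sum_add_distrib, Finset.mul_sum]
        _ = v0 * (r:ℝ) + ∑ v ∈ V, ∑ i ∈ I.F, (if v < dist j i then gap v * x i j else 0) := by
            rw [hxsum j hj, Finset.sum_comm]
        _ = v0 * (r:ℝ) + ∑ v ∈ V, gap v *
              ((r:ℝ) - ∑ i ∈ I.F.filter (fun i => dist j i ≤ v), x i j) := by
            congr 1
            apply Finset.sum_congr rfl
            intro v hv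
            calc ∑ i ∈ I.F, (if v < dist j i then gap v * x i j else 0)
                = ∑ i ∈ I.F.filter (fun i => v < dist j i), gap v * x i j :=
                  (Finset.sum_filter _ _).symm
              _ = gap v * ∑ i ∈ I.F.filter (fun i => v < dist j i), x i j := by
                  rw [Finset.mul_sum]
              _ = gap v * ((r:ℝ) - ∑ i ∈ I.F.filter (fun i => dist j i ≤ v), x i j) := by
                  rw [hsplit v]
    -- combine
    calc ∑ t ∈ Θ, w t * FTMedInstance.kSmallestSum j (SS t) r
        = ∑ t ∈ Θ, (w t * (v0 * (r:ℝ)) + ∑ v ∈ V, gap v * (w t *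
            ((r:ℝ) - min (r:ℝ) (((SS t).filter (fun i => dist j i ≤ v)).card : ℝ)))) := by
          apply Finset.sum_congr rfl
          intro t ht
          rw [hkss t ht, mul_add, Finset.mul_sum]
          congr 1
          apply Finset.sum_congr rfl
          intro v hv
          ring
      _ = (∑ t ∈ Θ, w t) * (v0 * (r:ℝ)) + ∑ v ∈ V, gap v * (∑ t ∈ Θ, w t *
            ((r:ℝ) - min (r:ℝ) (((SS t).filter (fun i => dist j i ≤ v)).card : ℝ))) := by
          rw [Finset.sum_add_distrib, Finset.sum_mul, Finset.sum_comm]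
          congr 1
          apply Finset.sum_congr rfl
          intro v hv
          rw [Finset.mul_sum]
      _ = v0 * (r:ℝ) + ∑ v ∈ V, gap v * ((r:ℝ) - ∑ t ∈ Θ, w t *
            min (r:ℝ) (((SS t).filter (fun i => dist j i ≤ v)).card : ℝ)) := by
          rw [hwsum, one_mul]
          congr 1
          apply Finset.sum_congr rfl
          intro v hv
          congr 1
          calc ∑ t ∈ Θ, w t * ((r:ℝ) - min (r:ℝ)
                (((SS t).filter (fun i => dist j i ≤ v)).card : ℝ))
              = ∑ t ∈ Θ, (w t * (r:ℝ) - w t * min (r:ℝ)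
                (((SS t).filter (fun i => dist j i ≤ v)).card : ℝ)) := by
                apply Finset.sum_congr rfl
                intro t ht
                ring
            _ = (∑ t ∈ Θ, w t) * (r:ℝ) - ∑ t ∈ Θ, w t * min (r:ℝ)
                (((SS t).filter (fun i => dist j i ≤ v)).card : ℝ) := by
                rw [Finset.sum_sub_distrib, Finset.sum_mul]
            _ = (r:ℝ) - ∑ t ∈ Θ, w t * min (r:ℝ)
                (((SS t).filter (fun i => dist j i ≤ v)).card : ℝ) := by
                rw [hwsum, one_mul]
      _ ≤ v0 * (r:ℝ) + ∑ v ∈ V, gap v *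
            ((r:ℝ) - ∑ i ∈ I.F.filter (fun i => dist j i ≤ v), x i j) := by
          apply add_le_add_right
          apply Finset.sum_le_sum
          intro v hv
          apply mul_le_mul_of_nonneg_left _ (hgap0 v hv)
          have := hkey v hv
          linarith
      _ = ∑ i ∈ I.F, dist i j * x i j := hLP.symm
  -- final assembly
  have hEcost : ∑ t ∈ Θ, w t * I.cost (SS t) ≤ I.LPObj x := by
    calc ∑ t ∈ Θ, w t * I.cost (SS t)
        = ∑ t ∈ Θ, ∑ j ∈ I.C, w t * FTMedInstance.kSmallestSum j (SS t) (I.req j) := by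
          apply Finset.sum_congr rfl
          intro t ht
          rw [FTMedInstance.cost, Finset.mul_sum]
      _ = ∑ j ∈ I.C, ∑ t ∈ Θ, w t * FTMedInstance.kSmallestSum j (SS t) (I.req j) :=
          Finset.sum_comm
      _ ≤ ∑ j ∈ I.C, ∑ i ∈ I.F, dist i j * x i j :=
          Finset.sum_le_sum (fun j hj => hclient j hj)
      _ = I.LPObj x := rfl
  have hex : ∃ t ∈ Θ, I.cost (SS t) ≤ I.LPObj x := by
    by_contra hcon
    push_neg at hcon
    have hpos : ∃ t0 ∈ Θ, 0 < w t0 := by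
      by_contra h'
      push_neg at h'
      have h0 : ∑ t ∈ Θ, w t = 0 :=
        Finset.sum_eq_zero (fun t ht => le_antisymm (h' t ht) (hw0 t ht))
      rw [hwsum] at h0
      norm_num at h0
    obtain ⟨t0, ht0, hwt0⟩ := hpos
    have hlt := Finset.sum_lt_sum (f := fun t => w t * I.LPObj x)
      (g := fun t => w t * I.cost (SS t))
      (fun t ht => mul_le_mul_of_nonneg_left (le_of_lt (hcon t ht)) (hw0 t ht))
      ⟨t0, ht0, mul_lt_mul_of_pos_left (hcon t0 ht0) hwt0⟩
    rw [← Finset.sum_mul, hwsum, one_mul] at hlt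
    linarith [hEcost]
  obtain ⟨t, ht, hct⟩ := hex
  exact ⟨SS t, hSsub t, fun j hj => hcardr t ht j hj, hcardk t ht, hct⟩
end

section
/- Let n ≥ 1, let 0 = c_0 ≤ c_1 ≤ ⋯ ≤ c_n be real numbers, let z_0 ≤ z_1 ≤ ⋯ ≤ z_n be a nondecreasing sequence in [0,1], let α ∈ (0,1), and suppose there exists t with z_t ≥ α; let t* be the smallest such index. Then c_{t*} ≤ (1/(1−α)) · ∑_{t=0}^{n−1} (1 − z_t)(c_{t+1} − c_t). -/
open scoped BigOperators

/-- Lemma `lm:cjt` of the paper: given nondecreasing `0 = c_0 ≤ c_1 ≤ ⋯ ≤ c_n`, a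
nondecreasing sequence `z_0 ≤ ⋯ ≤ z_n` in `[0,1]`, `α ∈ (0,1)`, and `t*` the smallest index
with `z_{t*} ≥ α`, we have `c_{t*} ≤ (1/(1-α)) ∑_{t=0}^{n-1} (1-z_t)(c_{t+1} - c_t)`. -/
theorem cjt_bound (n : ℕ) (hn : 1 ≤ n) (c z : ℕ → ℝ)
    (hc0 : c 0 = 0) (hcmono : ∀ t : ℕ, t < n → c t ≤ c (t + 1))
    (hz01 : ∀ t : ℕ, t ≤ n → 0 ≤ z t ∧ z t ≤ 1)
    (hzmono : ∀ t : ℕ, t < n → z t ≤ z (t + 1))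
    (α : ℝ) (hα0 : 0 < α) (hα1 : α < 1)
    (tstar : ℕ) (htn : tstar ≤ n) (htge : α ≤ z tstar)
    (htmin : ∀ t : ℕ, t < tstar → z t < α) :
    c tstar ≤ (1 / (1 - α)) * ∑ t ∈ Finset.range n, (1 - z t) * (c (t + 1) - c t) := by
  have hpos : (0:ℝ) < 1 - α := by linarith
  have h1 : (1 - α) * c tstar ≤ ∑ t ∈ Finset.range n, (1 - z t) * (c (t + 1) - c t) := by
    have hsub : Finset.range tstar ⊆ Finset.range n := Finset.range_subset_range.mpr htn
    have htel : ∑ t ∈ Finset.range tstar, (c (t + 1) - c t) = c tstar := by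
      rw [Finset.sum_range_sub, hc0, sub_zero]
    calc (1 - α) * c tstar
        = ∑ t ∈ Finset.range tstar, (1 - α) * (c (t + 1) - c t) := by
          rw [← Finset.mul_sum, htel]
      _ ≤ ∑ t ∈ Finset.range tstar, (1 - z t) * (c (t + 1) - c t) := by
          apply Finset.sum_le_sum
          intro i hi
          have hi' := Finset.mem_range.mp hi
          have hzi := htmin i hi'
          have hci : 0 ≤ c (i + 1) - c i :=
            sub_nonneg.mpr (hcmono i (lt_of_lt_of_le hi' htn))
          nlinarith
      _ ≤ ∑ t ∈ Finset.range n, (1 - z t) * (c (t + 1) - c t) := by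
          apply Finset.sum_le_sum_of_subset_of_nonneg hsub
          intro i hi _
          have hi' := Finset.mem_range.mp hi
          have hci : 0 ≤ c (i + 1) - c i := sub_nonneg.mpr (hcmono i hi')
          have hz := hz01 i (le_of_lt hi')
          nlinarith [hz.2]
  rw [one_div, inv_mul_eq_div, le_div_iff₀ hpos]
  linarith
end

section
/- Let N be a finite set, r a positive integer, α ∈ (0,1], and let x, y : N → [0,1] satisfy x_i ≤ y_i for every i ∈ N and the knapsack-cover inequalities ∑_{i∈N∖A} x_i ≥ α·(r − |A|) for every subset A ⊆ N. Define ỹ_i = 1 if y_i ≥ α and ỹ_i = y_i/α otherwise. Then ∑_{i∈N} ỹ_i ≥ r. -/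
open scoped BigOperators

/-- The scaled openings cover the requirement: if `x ≤ y` pointwise on `N` and the
knapsack-cover inequalities `∑_{i∈N∖A} x_i ≥ α (r - |A|)` hold for all `A ⊆ N`, then the
scaled vector `ỹ_i = 1` (if `y_i ≥ α`) or `y_i/α` (otherwise) satisfies `∑_{i∈N} ỹ_i ≥ r`. -/
theorem scaled_openings_cover {ι : Type*} [DecidableEq ι]
    (N : Finset ι) (r : ℕ) (hr : 0 < r)
    (α : ℝ) (hα0 : 0 < α) (hα1 : α ≤ 1)
    (x y : ι → ℝ)
    (hx : ∀ i ∈ N, 0 ≤ x i ∧ x i ≤ 1) (hy : ∀ i ∈ N, 0 ≤ y i ∧ y i ≤ 1)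
    (hxy : ∀ i ∈ N, x i ≤ y i)
    (hkc : ∀ A ⊆ N, α * ((r : ℝ) - (A.card : ℝ)) ≤ ∑ i ∈ N \ A, x i) :
    (r : ℝ) ≤ ∑ i ∈ N, (if α ≤ y i then (1 : ℝ) else y i / α) := by
  classical
  set A : Finset ι := N.filter (fun i => α ≤ y i) with hA
  have hAsub : A ⊆ N := Finset.filter_subset _ _
  have hsplit : ∑ i ∈ N, (if α ≤ y i then (1 : ℝ) else y i / α)
      = ∑ i ∈ A, (if α ≤ y i then (1 : ℝ) else y i / α)
        + ∑ i ∈ N \ A, (if α ≤ y i then (1 : ℝ) else y i / α) := by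
    rw [Finset.sum_filter_add_sum_filter_not N (fun i => α ≤ y i)
      (fun i => if α ≤ y i then (1 : ℝ) else y i / α) |>.symm]
    congr 1
    apply Finset.sum_congr
    · ext i; simp [hA, Finset.mem_sdiff, Finset.mem_filter]; tauto
    · intro _ _; rfl
  have hA1 : ∑ i ∈ A, (if α ≤ y i then (1 : ℝ) else y i / α) = A.card := by
    rw [Finset.sum_congr rfl (fun i hi => if_pos (Finset.mem_filter.mp hi).2)]
    simp
    rfl
  have hkcA := hkc A hAsub
  have hxyN : ∑ i ∈ N \ A, x i ≤ ∑ i ∈ N \ A, y i :=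
    Finset.sum_le_sum (fun i hi => hxy i (Finset.mem_sdiff.mp hi).1)
  have hB : ∑ i ∈ N \ A, (if α ≤ y i then (1 : ℝ) else y i / α)
      = (∑ i ∈ N \ A, y i) / α := by
    rw [Finset.sum_div]
    refine Finset.sum_congr rfl (fun i hi => ?_)
    have : ¬ α ≤ y i := by
      have := Finset.mem_sdiff.mp hi
      simp only [hA, Finset.mem_filter] at this
      tauto
    rw [if_neg this]
  have hge : (r : ℝ) - A.card ≤ (∑ i ∈ N \ A, y i) / α := by
    rw [le_div_iff₀ hα0]
    calc ((r : ℝ) - A.card) * α = α * ((r : ℝ) - A.card) := by ring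
    _ ≤ ∑ i ∈ N \ A, x i := hkcA
    _ ≤ ∑ i ∈ N \ A, y i := hxyN
  rw [hsplit, hA1, hB]
  linarith
end

section
/- Let (X,d) be a metric space, F ⊆ X a finite set of facilities with opening costs f_i ≥ 0, and C a finite set of clients, each client j ∈ C having a point of X, a requirement r_j ∈ ℕ₊, and a radius c_j ≥ 0. Let ỹ : F → [0,1] satisfy ∑_{i∈F : d(i,j) ≤ c_j} ỹ_i ≥ r_j for every client j. Then there exists a set S ⊆ F such that (1) ∑_{i∈S} f_i ≤ ∑_{i∈F} f_i·ỹ_i, and (2) for every client j, |{i ∈ S : d(i,j) ≤ 3·c_j}| ≥ r_j. -/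
open scoped BigOperators
open Finset

lemma ftfl_exists_cheapest {X : Type*} [DecidableEq X] (f : X → ℝ) :
    ∀ (k : ℕ) (A : Finset X), k ≤ A.card →
    ∃ O, O ⊆ A ∧ O.card = k ∧ ∀ i ∈ O, ∀ i' ∈ A \ O, f i ≤ f i' := by
  intro k
  induction k with
  | zero =>
    intro A _
    exact ⟨∅, empty_subset _, card_empty, by simp⟩
  | succ k ih =>
    intro A hk
    obtain ⟨O, hOA, hcard, hch⟩ := ih A (le_trans (Nat.le_succ k) hk)
    have hne : (A \ O).Nonempty := by
      rw [← card_pos, card_sdiff_of_subset hOA, hcard]; omega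
    obtain ⟨i0, hi0, hmin⟩ := Finset.exists_min_image (A \ O) f hne
    have hi0A : i0 ∈ A := (mem_sdiff.1 hi0).1
    have hi0O : i0 ∉ O := (mem_sdiff.1 hi0).2
    refine ⟨insert i0 O, ?_, ?_, ?_⟩
    · exact insert_subset hi0A hOA
    · rw [card_insert_of_notMem hi0O, hcard]
    · intro i hi i' hi'
      have hi'AO : i' ∈ A \ O := by
        rcases mem_sdiff.1 hi' with ⟨h1, h2⟩
        exact mem_sdiff.2 ⟨h1, fun h => h2 (mem_insert_of_mem h)⟩
      rcases mem_insert.1 hi with rfl | hiO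
      · exact hmin i' hi'AO
      · exact hch i hiO i' hi'AO

lemma ftfl_main_ind {X : Type*} [MetricSpace X] [DecidableEq X]
    (F : Finset X) (f : X → ℝ) (hf : ∀ i ∈ F, 0 ≤ f i)
    (r : X → ℕ) (c : X → ℝ) :
    ∀ (n : ℕ) (C : Finset X), C.card = n →
    ∀ (y : X → ℝ) (S : Finset X), S ⊆ F →
    (∀ i ∈ F, 0 ≤ y i ∧ y i ≤ 1) →
    (∀ j ∈ C, 0 ≤ c j) →
    (∀ j ∈ C, (r j : ℝ) ≤ (∑ i ∈ (F \ S).filter (fun i => dist i j ≤ c j), y i)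
        + ((S.filter (fun i => dist i j ≤ 3 * c j)).card : ℝ)) →
    ∃ S', S ⊆ S' ∧ S' ⊆ F ∧ (∑ i ∈ S' \ S, f i ≤ ∑ i ∈ F \ S, f i * y i) ∧
      ∀ j ∈ C, r j ≤ ((S'.filter (fun i => dist i j ≤ 3 * c j)).card) := by
  intro n
  induction n with
  | zero =>
    intro C hC y S hSF hy _ _
    refine ⟨S, le_refl _, hSF, ?_, ?_⟩
    · simp only [sdiff_self, Finset.bot_eq_empty, Finset.sum_empty]
      refine Finset.sum_nonneg ?_
      intro i hi
      have hiF : i ∈ F := (mem_sdiff.1 hi).1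
      exact mul_nonneg (hf i hiF) (hy i hiF).1
    · intro j hj
      rw [card_eq_zero.1 hC] at hj
      exact absurd hj (Finset.notMem_empty j)
  | succ n ih =>
    intro C hC y S hSF hy hc hinv
    have hCne : C.Nonempty := by
      rw [← card_pos, hC]; omega
    obtain ⟨j, hjC, hjmin⟩ := Finset.exists_min_image C c hCne
    have hCe : (C.erase j).card = n := by
      rw [card_erase_of_mem hjC, hC]
      omega
    set A : Finset X := (F \ S).filter (fun i => dist i j ≤ c j) with hA
    set nn : ℕ := (S.filter (fun i => dist i j ≤ 3 * c j)).card with hnn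
    by_cases hcase : r j ≤ nn
    · -- client j already satisfied
      obtain ⟨S', hSS', hS'F, hcost, hcov⟩ :=
        ih (C.erase j) hCe y S hSF hy (fun j' hj' => hc j' (mem_of_mem_erase hj'))
          (fun j' hj' => hinv j' (mem_of_mem_erase hj'))
      refine ⟨S', hSS', hS'F, hcost, ?_⟩
      intro j' hj'
      by_cases hjj : j' = j
      · subst hjj
        calc r j' ≤ nn := hcase
          _ ≤ _ := card_le_card (filter_subset_filter _ hSS')
      · exact hcov j' (mem_erase.2 ⟨hjj, hj'⟩)
    · -- need to open more facilities near j
      push_neg at hcase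
      set k : ℕ := r j - nn with hk
      have hkpos : 0 < k := by omega
      have hkrn : (k : ℝ) = (r j : ℝ) - nn := by
        rw [hk, Nat.cast_sub hcase.le]
      have hkR : (k : ℝ) ≤ ∑ i ∈ A, y i := by
        have := hinv j hjC
        rw [hkrn]; linarith
      have hAF : ∀ i ∈ A, i ∈ F := fun i hi => (mem_sdiff.1 (mem_filter.1 hi).1).1
      have hAS : ∀ i ∈ A, i ∉ S := fun i hi => (mem_sdiff.1 (mem_filter.1 hi).1).2
      have hkcard : k ≤ A.card := by
        have h1 : ∑ i ∈ A, y i ≤ (A.card : ℝ) := by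
          calc ∑ i ∈ A, y i ≤ ∑ _i ∈ A, (1 : ℝ) :=
                Finset.sum_le_sum (fun i hi => (hy i (hAF i hi)).2)
            _ = (A.card : ℝ) := by simp
        exact_mod_cast hkR.trans h1
      obtain ⟨O, hOA, hOcard, hch⟩ := ftfl_exists_cheapest f k A hkcard
      have hOF : ∀ i ∈ O, i ∈ F := fun i hi => hAF i (hOA hi)
      have hOS : ∀ i ∈ O, i ∉ S := fun i hi => hAS i (hOA hi)
      set T : Finset X := A \ O with hT
      set σO : ℝ := ∑ i ∈ O, y i with hσO
      set σT : ℝ := ∑ i ∈ T, y i with hσT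
      have hsplit : σT + σO = ∑ i ∈ A, y i := Finset.sum_sdiff hOA
      have hσO₁ : σO ≤ (k : ℝ) := by
        calc σO ≤ ∑ _i ∈ O, (1 : ℝ) :=
              Finset.sum_le_sum (fun i hi => (hy i (hOF i hi)).2)
          _ = (k : ℝ) := by simp [hOcard]
      have hσO₀ : 0 ≤ σO := Finset.sum_nonneg (fun i hi => (hy i (hOF i hi)).1)
      have hσT₀ : 0 ≤ σT :=
        Finset.sum_nonneg (fun i hi => (hy i (hAF i (mem_sdiff.1 hi).1)).1)
      set θ : ℝ := ((k : ℝ) - σO) / σT with hθ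
      have hθ₀ : 0 ≤ θ := div_nonneg (by linarith) hσT₀
      have hθσT : θ * σT = (k : ℝ) - σO := by
        by_cases hTz : σT = 0
        · have h1 : (k : ℝ) ≤ σO := by rw [← hsplit] at hkR; linarith
          have h2 : σO = (k : ℝ) := le_antisymm hσO₁ h1
          rw [hTz, h2]; ring
        · rw [hθ]; field_simp
      have hθ1 : θ ≤ 1 := by
        by_cases hTz : σT = 0
        · rw [hθ, hTz, div_zero]; norm_num
        · rw [hθ, div_le_one (lt_of_le_of_ne hσT₀ (Ne.symm hTz))]
          rw [← hsplit] at hkR; linarith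
      set δ : X → ℝ := fun i => if i ∈ O then y i else if i ∈ A then θ * y i else 0
        with hδdef
      set y' : X → ℝ := fun i => y i - δ i with hy'def
      have hδ₀ : ∀ i, 0 ≤ δ i := by
        intro i
        rw [hδdef]
        by_cases h1 : i ∈ O
        · simp only [h1, if_true]; exact (hy i (hOF i h1)).1
        · by_cases h2 : i ∈ A
          · simp only [h1, h2, if_false, if_true]
            exact mul_nonneg hθ₀ (hy i (hAF i h2)).1
          · simp [h1, h2]
      have hδy : ∀ i ∈ F, δ i ≤ y i := by
        intro i hiF
        rw [hδdef]
        by_cases h1 : i ∈ O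
        · simp [h1]
        · by_cases h2 : i ∈ A
          · simp only [h1, h2, if_false, if_true]
            exact mul_le_of_le_one_left (hy i hiF).1 hθ1
          · simp only [h1, h2, if_false]
            exact (hy i hiF).1
      have hδout : ∀ i, i ∉ A → δ i = 0 := by
        intro i hiA
        have h1 : i ∉ O := fun h => hiA (hOA h)
        rw [hδdef]
        simp [h1, hiA]
      have hy'prop : ∀ i ∈ F, 0 ≤ y' i ∧ y' i ≤ 1 := by
        intro i hiF
        constructor
        · rw [hy'def]; simp only []; linarith [hδy i hiF]
        · rw [hy'def]; simp only []; linarith [(hy i hiF).2, hδ₀ i]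
      have hsumδO : ∑ i ∈ O, δ i = σO := by
        refine Finset.sum_congr rfl ?_
        intro i hi
        rw [hδdef]; simp [hi]
      have hsumδT : ∑ i ∈ T, δ i = θ * σT := by
        rw [hσT, Finset.mul_sum]
        refine Finset.sum_congr rfl ?_
        intro i hi
        rcases mem_sdiff.1 hi with ⟨hiA, hiO⟩
        rw [hδdef]; simp [hiA, hiO]
      have hsumδA : ∑ i ∈ A, δ i = (k : ℝ) := by
        rw [← Finset.sum_sdiff hOA, ← hT, hsumδO, hsumδT, hθσT]; ring
      -- cost of the newly opened facilities
      have hOne : O.Nonempty := by rw [← card_pos, hOcard]; omega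
      obtain ⟨im, him, hmax⟩ := Finset.exists_max_image O f hOne
      have hcost : ∑ i ∈ O, f i ≤ ∑ i ∈ A, f i * δ i := by
        have e0 : ∑ i ∈ A, f i * δ i
            = θ * (∑ i ∈ T, f i * y i) + ∑ i ∈ O, f i * y i := by
          rw [← Finset.sum_sdiff hOA, ← hT, Finset.mul_sum]
          congr 1
          · refine Finset.sum_congr rfl ?_
            intro i hi
            rcases mem_sdiff.1 hi with ⟨hiA, hiO⟩
            rw [hδdef]; simp [hiA, hiO]; ring
          · refine Finset.sum_congr rfl ?_
            intro i hi
            rw [hδdef]; simp [hi]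
        have e1 : ∑ i ∈ O, f i * (1 - y i) ≤ f im * ((k : ℝ) - σO) := by
          calc ∑ i ∈ O, f i * (1 - y i) ≤ ∑ i ∈ O, f im * (1 - y i) := by
                refine Finset.sum_le_sum ?_
                intro i hi
                exact mul_le_mul_of_nonneg_right (hmax i hi)
                  (by linarith [(hy i (hOF i hi)).2])
            _ = f im * ((k : ℝ) - σO) := by
                rw [← Finset.mul_sum, Finset.sum_sub_distrib, Finset.sum_const,
                  hOcard, ← hσO]
                simp
        have e2 : f im * ((k : ℝ) - σO) ≤ θ * ∑ i ∈ T, f i * y i := by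
          rw [← hθσT, ← mul_assoc, mul_comm (f im) θ, mul_assoc]
          refine mul_le_mul_of_nonneg_left ?_ hθ₀
          calc f im * σT = ∑ i ∈ T, f im * y i := by rw [hσT, Finset.mul_sum]
            _ ≤ ∑ i ∈ T, f i * y i := by
                refine Finset.sum_le_sum ?_
                intro i hi
                exact mul_le_mul_of_nonneg_right (hch im him i (hT ▸ hi))
                  (hy i (hAF i (mem_sdiff.1 hi).1)).1
        have e3 : ∑ i ∈ O, f i = ∑ i ∈ O, f i * y i + ∑ i ∈ O, f i * (1 - y i) := by
          rw [← Finset.sum_add_distrib]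
          refine Finset.sum_congr rfl ?_
          intro i _; ring
        rw [e0, e3]; linarith
      set S' : Finset X := S ∪ O with hS'
      have hSS' : S ⊆ S' := subset_union_left
      have hOsubS' : O ⊆ S' := subset_union_right
      have hS'F : S' ⊆ F := union_subset hSF (fun i hi => hOF i hi)
      have hdisj : Disjoint S O := by
        rw [Finset.disjoint_right]
        exact hOS
      -- new invariant
      have hinv' : ∀ j' ∈ C.erase j, (r j' : ℝ) ≤
          (∑ i ∈ (F \ S').filter (fun i => dist i j' ≤ c j'), y' i)
            + ((S'.filter (fun i => dist i j' ≤ 3 * c j')).card : ℝ) := by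
        intro j' hj'e
        have hj'C : j' ∈ C := mem_of_mem_erase hj'e
        set Aold : Finset X := (F \ S).filter (fun i => dist i j' ≤ c j') with hAold
        set Anew : Finset X := (F \ S').filter (fun i => dist i j' ≤ c j') with hAnew
        have hAnewEq : Anew = Aold \ O := by
          ext i
          simp only [hAnew, hAold, hS', mem_filter, mem_sdiff, mem_union]
          tauto
        have hcard' : ((S'.filter (fun i => dist i j' ≤ 3 * c j')).card : ℝ)
            = ((S.filter (fun i => dist i j' ≤ 3 * c j')).card : ℝ)
              + ((O.filter (fun i => dist i j' ≤ 3 * c j')).card : ℝ) := by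
          rw [hS', filter_union, card_union_of_disjoint
            (disjoint_filter_filter hdisj)]
          push_cast; ring
        have hkey : ∑ i ∈ Aold, y i ≤ ∑ i ∈ Anew, y' i
            + ((O.filter (fun i => dist i j' ≤ 3 * c j')).card : ℝ) := by
          by_cases hsep : ∀ i ∈ A, ¬ dist i j' ≤ c j'
          · -- separated case: nothing changes
            have hdisjAO : ∀ i ∈ Aold, i ∉ O := by
              intro i hi hiO
              exact hsep i (hOA hiO) (mem_filter.1 hi).2
            have hEq : Anew = Aold := by
              rw [hAnewEq]
              refine sdiff_eq_self_of_disjoint ?_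
              rw [Finset.disjoint_left]
              exact hdisjAO
            have hEq2 : ∑ i ∈ Anew, y' i = ∑ i ∈ Aold, y i := by
              rw [hEq]
              refine Finset.sum_congr rfl ?_
              intro i hi
              have hiA : i ∉ A := fun h => hsep i h (mem_filter.1 hi).2
              rw [hy'def]; simp [hδout i hiA]
            rw [hEq2]
            simp [Nat.cast_nonneg]
          · push_neg at hsep
            obtain ⟨i0, hi0A, hi0d⟩ := hsep
            have hcjj' : c j ≤ c j' := hjmin j' hj'C
            have h3 : ∀ i ∈ A, dist i j' ≤ 3 * c j' := by
              intro i hi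
              have h1 : dist i j ≤ c j := (mem_filter.1 hi).2
              have h2 : dist i0 j ≤ c j := (mem_filter.1 hi0A).2
              calc dist i j' ≤ dist i i0 + dist i0 j' := dist_triangle _ _ _
                _ ≤ (dist i j + dist j i0) + dist i0 j' := by
                    linarith [dist_triangle i j i0]
                _ ≤ 3 * c j' := by
                    rw [dist_comm j i0]; linarith
            have hOfilt : O.filter (fun i => dist i j' ≤ 3 * c j') = O :=
              filter_true_of_mem (fun i hi => h3 i (hOA hi))
            rw [hOfilt, hOcard]
            have hAnsub : Anew ⊆ Aold := by rw [hAnewEq]; exact sdiff_subset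
            have e1 : ∑ i ∈ Aold \ Anew, y i + ∑ i ∈ Anew, y i
                = ∑ i ∈ Aold, y i := Finset.sum_sdiff hAnsub
            have h2 : Aold \ Anew ⊆ O := by
              intro i hi
              rcases mem_sdiff.1 hi with ⟨h1, h2⟩
              rw [hAnewEq] at h2
              by_contra hO
              exact h2 (mem_sdiff.2 ⟨h1, hO⟩)
            have e2 : ∑ i ∈ Aold \ Anew, y i ≤ σO := by
              refine Finset.sum_le_sum_of_subset_of_nonneg h2 ?_
              intro i hi _
              exact (hy i (hOF i hi)).1
            have e3 : ∑ i ∈ Anew, y i = ∑ i ∈ Anew, y' i + ∑ i ∈ Anew, δ i := by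
              rw [← Finset.sum_add_distrib]
              refine Finset.sum_congr rfl ?_
              intro i _
              rw [hy'def]; ring
            have e4 : ∑ i ∈ Anew, δ i ≤ θ * σT := by
              have h5 : ∑ i ∈ Anew, δ i = ∑ i ∈ Anew ∩ A, δ i := by
                refine (Finset.sum_subset inter_subset_left ?_).symm
                intro i _ hiA
                exact hδout i (fun h => hiA (mem_inter.2 ⟨‹i ∈ Anew›, h⟩))
              have h6 : Anew ∩ A ⊆ T := by
                intro i hi
                rcases mem_inter.1 hi with ⟨h7, h8⟩
                have hiO : i ∉ O := by
                  intro hO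
                  exact (mem_sdiff.1 (mem_filter.1 h7).1).2 (hOsubS' hO)
                exact mem_sdiff.2 ⟨h8, hiO⟩
              rw [h5, ← hsumδT]
              exact Finset.sum_le_sum_of_subset_of_nonneg h6 (fun i _ _ => hδ₀ i)
            rw [hθσT] at e4
            linarith
        have := hinv j' hj'C
        rw [← hAold] at this
        rw [hcard']
        linarith
      obtain ⟨S'', hS'S'', hS''F, hcost'', hcov''⟩ :=
        ih (C.erase j) hCe y' S' hS'F hy'prop
          (fun j' hj' => hc j' (mem_of_mem_erase hj')) hinv'
      refine ⟨S'', hSS'.trans hS'S'', hS''F, ?_, ?_⟩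
      · -- cost bound
        have hOsubS'' : O ⊆ S'' := fun i hi => hS'S'' (hOsubS' hi)
        have hsplitS : S'' \ S = (S'' \ S') ∪ O := by
          ext i
          have h1 : i ∈ O → i ∈ S'' := fun h => hOsubS'' h
          have h2 : i ∈ O → i ∉ S := hOS i
          simp only [hS', mem_union, mem_sdiff]
          by_cases hiO : i ∈ O <;> simp [hiO] <;> tauto
        have hdisj2 : Disjoint (S'' \ S') O := by
          rw [Finset.disjoint_left]
          intro i hi hiO
          exact (mem_sdiff.1 hi).2 (hOsubS' hiO)
        have c1 : ∑ i ∈ S'' \ S, f i = ∑ i ∈ S'' \ S', f i + ∑ i ∈ O, f i := by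
          rw [hsplitS, Finset.sum_union hdisj2]
        have c2 : ∑ i ∈ F \ S, f i * δ i = ∑ i ∈ A, f i * δ i := by
          refine (Finset.sum_subset (filter_subset _ _) ?_).symm
          intro i _ hiA
          rw [hδout i hiA]; ring
        have c3 : ∑ i ∈ F \ S', f i * y' i ≤ ∑ i ∈ F \ S, f i * y' i := by
          refine Finset.sum_le_sum_of_subset_of_nonneg ?_ ?_
          · exact sdiff_subset_sdiff (le_refl F) hSS'
          · intro i hi _
            have hiF : i ∈ F := (mem_sdiff.1 hi).1
            exact mul_nonneg (hf i hiF) (hy'prop i hiF).1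
        have c4 : ∑ i ∈ F \ S, f i * y i
            = ∑ i ∈ F \ S, f i * y' i + ∑ i ∈ F \ S, f i * δ i := by
          rw [← Finset.sum_add_distrib]
          refine Finset.sum_congr rfl ?_
          intro i _
          rw [hy'def]; ring
        rw [c1, c4, c2]
        linarith
      · -- coverage
        intro j' hj'
        by_cases hjj : j' = j
        · subst hjj
          have hOfj : O.filter (fun i => dist i j' ≤ 3 * c j') = O := by
            refine filter_true_of_mem ?_
            intro i hi
            have h1 : dist i j' ≤ c j' := (mem_filter.1 (hOA hi)).2
            have h2 : 0 ≤ c j' := hc j' hjC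
            linarith
          have hcardS' : (S'.filter (fun i => dist i j' ≤ 3 * c j')).card
              = nn + k := by
            rw [hS', filter_union, card_union_of_disjoint
              (disjoint_filter_filter hdisj), hOfj, hOcard]
          calc r j' = nn + k := by omega
            _ = (S'.filter (fun i => dist i j' ≤ 3 * c j')).card := hcardS'.symm
            _ ≤ _ := card_le_card (filter_subset_filter _ hS'S'')
        · exact hcov'' j' (mem_erase.2 ⟨hjj, hj'⟩)


/-- Lemma `lm:rounding` of the paper (clustered rounding for fault-tolerant facility
location): if `ỹ : F → [0,1]` fractionally opens at least `r_j` volume within distance `c_j`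
of every client `j`, then there is a set `S ⊆ F` of facilities with total opening cost at
most `∑_i f_i ỹ_i` such that every client `j` has at least `r_j` open facilities within
distance `3 c_j`. -/
theorem ftfl_clustered_rounding {X : Type*} [MetricSpace X]
    (F : Finset X) (f : X → ℝ) (hf : ∀ i ∈ F, 0 ≤ f i)
    (C : Finset X) (r : X → ℕ) (hr : ∀ j ∈ C, 0 < r j)
    (c : X → ℝ) (hc : ∀ j ∈ C, 0 ≤ c j)
    (ty : X → ℝ) (hty : ∀ i ∈ F, 0 ≤ ty i ∧ ty i ≤ 1)
    (hcov : ∀ j ∈ C, (r j : ℝ) ≤ ∑ i ∈ F.filter (fun i => dist i j ≤ c j), ty i) :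
    ∃ S ⊆ F, (∑ i ∈ S, f i ≤ ∑ i ∈ F, f i * ty i) ∧
      (∀ j ∈ C, r j ≤ (S.filter (fun i => dist i j ≤ 3 * c j)).card) := by
  classical
  have hinv0 : ∀ j ∈ C, (r j : ℝ) ≤
      (∑ i ∈ (F \ (∅ : Finset X)).filter (fun i => dist i j ≤ c j), ty i)
        + (((∅ : Finset X).filter (fun i => dist i j ≤ 3 * c j)).card : ℝ) := by
    intro j hj
    simpa [Finset.sdiff_empty] using hcov j hj
  obtain ⟨S, hS0, hSF, hcost, hcovS⟩ :=
    ftfl_main_ind F f hf r c C.card C rfl ty ∅ (Finset.empty_subset F) hty hc hinv0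
  refine ⟨S, hSF, ?_, hcovS⟩
  simpa [Finset.sdiff_empty] using hcost
end

section
/- For every fault-tolerant facility location (FTFL) instance and every feasible solution (x, y, z) of the knapsack-cover-strengthened LP relaxation, there exists a feasible set S ⊆ F (with |{i ∈ S}| ≥ r_j for every client j) whose total cost ∑_{i∈S} f_i + ∑_{j∈C} w_j · (distance from j to its r_j-th closest facility in S) is at most 3.16 · (∑_{i∈F} f_i·y_i + ∑_{j∈C} w_j · ∑_{t=0}^{n−1} (1 − z_{jt})(c_{j(t+1)} − c_{jt})). -/
open scoped BigOperators

/-- The distance `c_{jt}` from client `j` to its `t`-th closest facility (given by the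
ordering `π`), with `c_{j0} = 0`. -/
noncomputable def cDist {X : Type*} [MetricSpace X] (π : X → ℕ → X) (j : X) (t : ℕ) : ℝ :=
  if t = 0 then 0 else dist j (π j t)

/-- `N(j,t) = {π(j,1), …, π(j,t)}`, the set of the `t` closest facilities to `j`. -/
noncomputable def Nset {X : Type*} [MetricSpace X] [DecidableEq X]
    (π : X → ℕ → X) (j : X) (t : ℕ) : Finset X :=
  (Finset.Icc 1 t).image (π j)

lemma exists_fill {X : Type*} [DecidableEq X] (Q : Finset X) (cap : X → ℝ)
    (hcap : ∀ i ∈ Q, 0 ≤ cap i) :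
    ∀ m : ℝ, 0 ≤ m → m ≤ ∑ i ∈ Q, cap i →
    ∃ g : X → ℝ, (∀ i, 0 ≤ g i) ∧ (∀ i ∈ Q, g i ≤ cap i) ∧ (∀ i ∉ Q, g i = 0) ∧
      ∑ i ∈ Q, g i = m := by
  classical
  induction Q using Finset.induction_on with
  | empty =>
    intro m hm0 hm
    simp only [Finset.sum_empty] at hm
    exact ⟨fun _ => 0, fun _ => le_rfl, by simp, by simp, by simp [le_antisymm hm hm0]⟩
  | @insert a Q ha ih =>
    intro m hm0 hm
    have hcapQ : ∀ i ∈ Q, 0 ≤ cap i := fun i hi => hcap i (Finset.mem_insert_of_mem hi)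
    have hcapa : 0 ≤ cap a := hcap a (Finset.mem_insert_self a Q)
    set m1 := min m (cap a) with hm1
    have hm10 : 0 ≤ m1 := le_min hm0 hcapa
    have hm2 : m - m1 ≤ ∑ i ∈ Q, cap i := by
      rcases le_total m (cap a) with h | h
      · have : m1 = m := min_eq_left h
        rw [this]; simpa using Finset.sum_nonneg hcapQ
      · have : m1 = cap a := min_eq_right h
        rw [this]
        rw [Finset.sum_insert ha] at hm
        linarith
    obtain ⟨g, hg0, hgc, hgz, hgs⟩ := ih hcapQ (m - m1) (by simp [hm1]) hm2
    refine ⟨fun i => if i = a then m1 else g i, ?_, ?_, ?_, ?_⟩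
    · intro i; by_cases h : i = a <;> simp [h, hm10, hg0 i]
    · intro i hi; by_cases h : i = a
      · subst h; simp only [if_pos rfl]; exact min_le_right _ _
      · simp only [if_neg h]
        exact hgc i (Finset.mem_insert.mp hi |>.resolve_left h)
    · intro i hi
      have h1 : ¬ i = a := fun h => hi (h ▸ Finset.mem_insert_self a Q)
      simp only [if_neg h1]
      exact hgz i (fun h => hi (Finset.mem_insert_of_mem h))
    · rw [Finset.sum_insert ha, if_pos rfl]
      have : ∑ i ∈ Q, (if i = a then m1 else g i) = ∑ i ∈ Q, g i :=
        Finset.sum_congr rfl (fun i hi => if_neg (fun h : i = a => ha (h ▸ hi)))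
      rw [this, hgs]; ring


lemma exists_cheapest {X : Type*} [DecidableEq X] (f : X → ℝ) :
    ∀ (k : ℕ) (P : Finset X), k ≤ P.card →
    ∃ T ⊆ P, T.card = k ∧ ∀ i ∈ P \ T, ∀ i' ∈ T, f i' ≤ f i := by
  intro k
  induction k with
  | zero => intro P _; exact ⟨∅, Finset.empty_subset _, rfl, by simp⟩
  | succ k ih =>
    intro P hk
    have hne : P.Nonempty := Finset.card_pos.mp (lt_of_lt_of_le (Nat.succ_pos k) hk)
    obtain ⟨a, haP, hamin⟩ := Finset.exists_min_image P f hne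
    have hcard : k ≤ (P.erase a).card := by
      rw [Finset.card_erase_of_mem haP]; omega
    obtain ⟨T, hTsub, hTcard, hTmin⟩ := ih (P.erase a) hcard
    have haT : a ∉ T := fun h => (Finset.mem_erase.mp (hTsub h)).1 rfl
    refine ⟨insert a T, ?_, ?_, ?_⟩
    · intro i hi
      rcases Finset.mem_insert.mp hi with h | h
      · exact h ▸ haP
      · exact (Finset.mem_erase.mp (hTsub h)).2
    · rw [Finset.card_insert_of_notMem haT, hTcard]
    · intro i hi i' hi'
      have hiP : i ∈ P := (Finset.mem_sdiff.mp hi).1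
      have hiT : i ∉ insert a T := (Finset.mem_sdiff.mp hi).2
      rcases Finset.mem_insert.mp hi' with h | h
      · exact h ▸ hamin i hiP
      · refine hTmin i ?_ i' h
        refine Finset.mem_sdiff.mpr ⟨Finset.mem_erase.mpr ⟨?_, hiP⟩, ?_⟩
        · exact fun hia => hiT (hia ▸ Finset.mem_insert_self a T)
        · exact fun hiT' => hiT (Finset.mem_insert_of_mem hiT')

lemma sorted_getD_le {X : Type*} [MetricSpace X] [DecidableEq X]
    (S : Finset X) (j : X) (R : ℝ) (r : ℕ) (hr : 1 ≤ r)
    (h : r ≤ (S.filter (fun i => dist j i ≤ R)).card) :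
    ((S.val.map fun i => dist j i).sort (· ≤ ·)).getD (r - 1) 0 ≤ R := by
  classical
  set l : List ℝ := (S.val.map fun i => dist j i).sort (· ≤ ·) with hl
  have hsorted : l.Pairwise (· ≤ ·) := Multiset.pairwise_sort _ _
  have hperm : (l : Multiset ℝ) = S.val.map fun i => dist j i := Multiset.sort_eq _ _
  have hcount : r ≤ l.countP (fun d => decide (d ≤ R)) := by
    have h1 : Multiset.countP (fun d => d ≤ R) (S.val.map fun i => dist j i)
        = (S.filter (fun i => dist j i ≤ R)).card := by
      rw [Multiset.countP_map]; rfl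
    have h2 : Multiset.countP (fun d => d ≤ R) (l : Multiset ℝ) = l.countP (fun d => decide (d ≤ R)) := by
      rw [Multiset.coe_countP]
    rw [hperm, h1] at h2
    omega
  have hlen : r - 1 < l.length := by
    have := List.countP_le_length (p := fun d => decide (d ≤ R)) (l := l)
    omega
  rw [List.getD_eq_getElem l 0 hlen]
  by_contra hgt
  push_neg at hgt
  have hsplit : l = l.take (r-1) ++ l.drop (r-1) := (List.take_append_drop _ l).symm
  have hc2 : (l.drop (r-1)).countP (fun d => decide (d ≤ R)) = 0 := by
    rw [List.countP_eq_zero]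
    intro d hd
    obtain ⟨i, hi, rfl⟩ := List.getElem_of_mem hd
    have hlt : r - 1 + i < l.length := by
      have := List.length_drop (i := r-1) (l := l)
      omega
    have heq : (List.drop (r-1) l)[i] = l[r - 1 + i]'hlt := List.getElem_drop
    rw [heq]
    have hmono : l[r-1] ≤ l[r - 1 + i]'hlt := by
      rcases Nat.eq_zero_or_pos i with h0 | h0
      · subst h0; simp
      · exact List.Pairwise.rel_get_of_le hsorted (a := ⟨r-1, by omega⟩)
          (b := ⟨r-1+i, hlt⟩) (by simp)
    simp only [decide_eq_true_eq]
    intro hdR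
    exact absurd (le_trans hmono hdR) (not_le.mpr hgt)
  have hc1 : (l.take (r-1)).countP (fun d => decide (d ≤ R)) ≤ r - 1 := by
    calc _ ≤ (l.take (r-1)).length := List.countP_le_length
    _ ≤ r - 1 := by simp
  have : l.countP (fun d => decide (d ≤ R)) ≤ r - 1 := by
    conv_lhs => rw [hsplit]
    rw [List.countP_append]
    omega
  omega

lemma core_round {X : Type*} [MetricSpace X] [DecidableEq X]
    (F : Finset X) (f yh : X → ℝ) (hf : ∀ i ∈ F, 0 ≤ f i)
    (hy0 : ∀ i ∈ F, 0 ≤ yh i) (hy1 : ∀ i ∈ F, yh i ≤ 1) :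
    ∀ L : List (X × ℝ × ℕ × Finset X),
      L.Pairwise (fun c c' => c.2.1 ≤ c'.2.1) →
      (∀ c ∈ L, c.2.2.2 ⊆ F ∧ (∀ i ∈ c.2.2.2, dist c.1 i ≤ c.2.1) ∧
        ((c.2.2.1 : ℝ) ≤ ∑ i ∈ c.2.2.2, yh i)) →
      ∀ S : Finset X, ∀ u : X → ℝ, S ⊆ F →
      (∀ i ∈ F, 0 ≤ u i) → (∀ i ∈ F, u i ≤ yh i) → (∀ i ∈ S, u i = yh i) →
      (∀ c ∈ L, (∑ i ∈ c.2.2.2, u i) ≤ ((S.filter (fun i => dist c.1 i ≤ 3 * c.2.1)).card : ℝ)) →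
      ∃ S' : Finset X, S ⊆ S' ∧ S' ⊆ F ∧
        (∑ i ∈ S' \ S, f i) ≤ ∑ i ∈ F, f i * (yh i - u i) ∧
        ∀ c ∈ L, c.2.2.1 ≤ (S'.filter (fun i => dist c.1 i ≤ 3 * c.2.1)).card := by
  classical
  intro L
  induction L with
  | nil =>
    intro _ _ S u hSF hu0 huy huS _
    refine ⟨S, subset_rfl, hSF, ?_, by simp⟩
    rw [Finset.sdiff_self, Finset.sum_empty]
    exact Finset.sum_nonneg (fun i hi => mul_nonneg (hf i hi) (by linarith [huy i hi]))
  | cons c L ih =>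
    intro hpair hcond S u hSF hu0 huy huS hinv
    obtain ⟨hρ, hpairL⟩ := List.pairwise_cons.mp hpair
    obtain ⟨hNF, hNdist, hNy⟩ := hcond c List.mem_cons_self
    set j := c.1
    set ρ := c.2.1
    set rr := c.2.2.1
    set N := c.2.2.2
    set a := (S.filter (fun i => dist j i ≤ 3 * ρ)).card with ha
    by_cases hcase : rr ≤ a
    · obtain ⟨S', hSS', hS'F, hbud, hreq⟩ :=
        ih hpairL (fun c' hc' => hcond c' (List.mem_cons_of_mem c hc')) S u hSF hu0 huy huS
          (fun c' hc' => hinv c' (List.mem_cons_of_mem c hc'))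
      refine ⟨S', hSS', hS'F, hbud, ?_⟩
      intro c' hc'
      rcases List.mem_cons.mp hc' with rfl | hc'
      · exact le_trans hcase (Finset.card_le_card
          (Finset.filter_subset_filter _ hSS'))
      · exact hreq c' hc'
    · -- main case
      push_neg at hcase
      set k := rr - a with hk
      have hk1 : 1 ≤ k := by omega
      have hkcast : (k : ℝ) = (rr : ℝ) - a := by
        rw [hk]; push_cast [Nat.cast_sub (le_of_lt hcase)]; ring
      set P := N.filter (fun i => u i < yh i) with hP
      have hPN : P ⊆ N := Finset.filter_subset _ _
      have hPF : P ⊆ F := hPN.trans hNF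
      have hNPzero : ∀ i ∈ N, i ∉ P → yh i - u i = 0 := by
        intro i hiN hiP
        have : ¬ u i < yh i := by
          intro h; exact hiP (Finset.mem_filter.mpr ⟨hiN, h⟩)
        have := huy i (hNF hiN)
        linarith [this, not_lt.mp ‹¬ u i < yh i›]
      have hsplitN : ∑ i ∈ N, (yh i - u i) = ∑ i ∈ P, (yh i - u i) := by
        rw [← Finset.sum_filter_add_sum_filter_not N (fun i => u i < yh i)]
        have : ∑ i ∈ N.filter (fun i => ¬ u i < yh i), (yh i - u i) = 0 := by
          apply Finset.sum_eq_zero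
          intro i hi
          obtain ⟨hiN, hi2⟩ := Finset.mem_filter.mp hi
          exact hNPzero i hiN (fun hP' => hi2 (Finset.mem_filter.mp hP').2)
        rw [this, add_zero]
      have havail : (k : ℝ) ≤ ∑ i ∈ P, (yh i - u i) := by
        rw [← hsplitN, Finset.sum_sub_distrib]
        have h1 : (rr : ℝ) ≤ ∑ i ∈ N, yh i := hNy
        have h2 : ∑ i ∈ N, u i ≤ (a : ℝ) := hinv c List.mem_cons_self
        rw [hkcast]; linarith
      have hPcard : k ≤ P.card := by
        have h1 : ∑ i ∈ P, (yh i - u i) ≤ (P.card : ℝ) := by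
          calc ∑ i ∈ P, (yh i - u i) ≤ ∑ i ∈ P, 1 := by
                apply Finset.sum_le_sum
                intro i hi
                have := hy1 i (hPF hi); have := hu0 i (hPF hi); linarith
          _ = (P.card : ℝ) := by simp
        have h2 : (k:ℝ) ≤ (P.card : ℝ) := le_trans havail h1
        exact_mod_cast h2
      obtain ⟨T, hTP, hTcard, hTcheap⟩ := exists_cheapest f k P hPcard
      have hTF : T ⊆ F := hTP.trans hPF
      have hTS : ∀ i ∈ T, i ∉ S := by
        intro i hiT hiS
        have h1 := (Finset.mem_filter.mp (hTP hiT)).2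
        rw [huS i hiS] at h1; exact lt_irrefl _ h1
      have hTne : T.Nonempty := Finset.card_pos.mp (by omega)
      set m := (k : ℝ) - ∑ i ∈ T, (yh i - u i) with hm
      have hm0 : 0 ≤ m := by
        rw [hm]
        have : ∑ i ∈ T, (yh i - u i) ≤ ∑ i ∈ T, 1 := by
          apply Finset.sum_le_sum
          intro i hi
          have := hy1 i (hTF hi); have := hu0 i (hTF hi); linarith
        simp only [Finset.sum_const, nsmul_eq_mul, mul_one] at this
        rw [← hTcard]; linarith
      have hmle : m ≤ ∑ i ∈ P \ T, (yh i - u i) := by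
        have := Finset.sum_sdiff hTP (f := fun i => yh i - u i)
        rw [hm]; linarith [havail]
      obtain ⟨g, hg0, hgc, hgz, hgs⟩ := exists_fill (P \ T) (fun i => yh i - u i)
        (fun i hi => by
          have hiF : i ∈ F := hPF (Finset.mem_sdiff.mp hi).1
          show (0:ℝ) ≤ yh i - u i
          linarith [huy i hiF]) m hm0 hmle
      set u' := fun i => if i ∈ T then yh i else u i + g i with hu'
      have hu'eq : ∀ i, u' i = u i + (if i ∈ T then yh i - u i else 0) + (if i ∈ P \ T then g i else 0) := by
        intro i
        by_cases hiT : i ∈ T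
        · have : i ∉ P \ T := fun h => (Finset.mem_sdiff.mp h).2 hiT
          simp [hu', hiT, this]
        · by_cases hiPT : i ∈ P \ T
          · simp [hu', hiT, hiPT]
          · simp [hu', hiT, hiPT, hgz i hiPT]
      have hg_out : ∀ i, i ∉ P \ T → g i = 0 := hgz
      have hSTdisj : Disjoint S T := Finset.disjoint_right.mpr hTS
      set S2 := S ∪ T with hS2
      have hS2F : S2 ⊆ F := Finset.union_subset hSF hTF
      have hu'0 : ∀ i ∈ F, 0 ≤ u' i := by
        intro i hiF
        by_cases hiT : i ∈ T
        · simp [hu', hiT]; exact hy0 i hiF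
        · simp [hu', hiT]; exact add_nonneg (hu0 i hiF) (hg0 i)
      have hu'y : ∀ i ∈ F, u' i ≤ yh i := by
        intro i hiF
        by_cases hiT : i ∈ T
        · simp [hu', hiT]
        · simp only [hu', if_neg hiT]
          by_cases hiPT : i ∈ P \ T
          · linarith [hgc i hiPT]
          · rw [hgz i hiPT]; linarith [huy i hiF]
      have hu'S2 : ∀ i ∈ S2, u' i = yh i := by
        intro i hi
        rcases Finset.mem_union.mp hi with hiS | hiT
        · have hiT : i ∉ T := fun h => hTS i h hiS
          have hiP : i ∉ P := fun h => by
            have := (Finset.mem_filter.mp h).2; rw [huS i hiS] at this; exact lt_irrefl _ this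
          have : i ∉ P \ T := fun h => hiP (Finset.mem_sdiff.mp h).1
          simp [hu', hiT, hgz i this, huS i hiS]
        · simp [hu', hiT]
      -- increments
      have hsum_incr : ∀ (N' : Finset X), ∑ i ∈ N', (u' i - u i)
          = ∑ i ∈ N' ∩ T, (yh i - u i) + ∑ i ∈ N' ∩ (P \ T), g i := by
        intro N'
        have : ∀ i, u' i - u i = (if i ∈ T then yh i - u i else 0) + (if i ∈ P \ T then g i else 0) := by
          intro i; rw [hu'eq i]; ring
        rw [Finset.sum_congr rfl (fun i _ => this i), Finset.sum_add_distrib,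
          Finset.sum_ite_mem, Finset.sum_ite_mem]
      have hTposS : ∀ i ∈ T, 0 ≤ yh i - u i := by
        intro i hi
        have := (Finset.mem_filter.mp (hTP hi)).2; linarith
      have hincr_le : ∀ (N' : Finset X), ∑ i ∈ N', (u' i - u i) ≤ (k : ℝ) := by
        intro N'
        rw [hsum_incr N']
        have h1 : ∑ i ∈ N' ∩ T, (yh i - u i) ≤ ∑ i ∈ T, (yh i - u i) :=
          Finset.sum_le_sum_of_subset_of_nonneg (Finset.inter_subset_right)
            (fun i hi _ => hTposS i hi)
        have h2 : ∑ i ∈ N' ∩ (P \ T), g i ≤ ∑ i ∈ P \ T, g i :=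
          Finset.sum_le_sum_of_subset_of_nonneg (Finset.inter_subset_right)
            (fun i _ _ => hg0 i)
        rw [hgs] at h2
        rw [hm] at h2
        linarith
      have hTB : ∀ i ∈ T, dist j i ≤ 3 * ρ := by
        intro i hiT
        have hdij := hNdist i (hPN (hTP hiT))
        have h0 : (0:ℝ) ≤ dist j i := dist_nonneg
        linarith
      -- apply IH
      have hinv' : ∀ c' ∈ L, (∑ i ∈ c'.2.2.2, u' i)
          ≤ (((S2.filter (fun i => dist c'.1 i ≤ 3 * c'.2.1)).card : ℕ) : ℝ) := by
        intro c' hc'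
        have hcard2 : (S2.filter (fun i => dist c'.1 i ≤ 3 * c'.2.1)).card
            = (S.filter (fun i => dist c'.1 i ≤ 3 * c'.2.1)).card
              + (T.filter (fun i => dist c'.1 i ≤ 3 * c'.2.1)).card := by
          rw [hS2, Finset.filter_union]
          exact Finset.card_union_of_disjoint (Finset.disjoint_filter_filter hSTdisj)
        by_cases hov : (c'.2.2.2 ∩ N).Nonempty
        · -- overlapping
          obtain ⟨p, hp⟩ := hov
          obtain ⟨hpN', hpN⟩ := Finset.mem_inter.mp hp
          obtain ⟨hN'F, hN'dist, _⟩ := hcond c' (List.mem_cons_of_mem c hc')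
          have hρ' : ρ ≤ c'.2.1 := hρ c' hc'
          have hTB' : ∀ i ∈ T, dist c'.1 i ≤ 3 * c'.2.1 := by
            intro i hiT
            have h1 : dist c'.1 i ≤ dist c'.1 p + dist p j + dist j i := by
              calc dist c'.1 i ≤ dist c'.1 p + dist p i := dist_triangle _ _ _
              _ ≤ dist c'.1 p + (dist p j + dist j i) := by linarith [dist_triangle p j i]
              _ = _ := by ring
            have h2 : dist c'.1 p ≤ c'.2.1 := hN'dist p hpN'
            have h3 : dist p j ≤ ρ := by rw [dist_comm]; exact hNdist p hpN
            have h4 : dist j i ≤ ρ := hNdist i (hPN (hTP hiT))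
            linarith
          have hTfull : (T.filter (fun i => dist c'.1 i ≤ 3 * c'.2.1)).card = k := by
            rw [Finset.filter_true_of_mem hTB', hTcard]
          have := hinv c' (List.mem_cons_of_mem c hc')
          have hle := hincr_le c'.2.2.2
          rw [hcard2, hTfull]
          push_cast
          have : ∑ i ∈ c'.2.2.2, u' i = ∑ i ∈ c'.2.2.2, u i + ∑ i ∈ c'.2.2.2, (u' i - u i) := by
            rw [← Finset.sum_add_distrib]; apply Finset.sum_congr rfl; intro i _; ring
          rw [this]
          have h5 := hinv c' (List.mem_cons_of_mem c hc')
          linarith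
        · -- disjoint
          have hdisj : ∀ i ∈ c'.2.2.2, i ∉ N := by
            intro i hi hiN
            have hmem : i ∈ c'.2.2.2 ∩ N := Finset.mem_inter.mpr ⟨hi, hiN⟩
            rw [Finset.not_nonempty_iff_eq_empty.mp hov] at hmem
            exact absurd hmem (Finset.notMem_empty i)
          have hsame : ∑ i ∈ c'.2.2.2, u' i = ∑ i ∈ c'.2.2.2, u i := by
            apply Finset.sum_congr rfl
            intro i hi
            have hiT : i ∉ T := fun h => hdisj i hi (hPN (hTP h))
            have hiPT : i ∉ P \ T := fun h => hdisj i hi (hPN (Finset.mem_sdiff.mp h).1)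
            simp [hu', hiT, hgz i hiPT]
          rw [hsame]
          calc ∑ i ∈ c'.2.2.2, u i ≤ _ := hinv c' (List.mem_cons_of_mem c hc')
          _ ≤ _ := by
            have : (S.filter (fun i => dist c'.1 i ≤ 3 * c'.2.1)).card
                ≤ (S2.filter (fun i => dist c'.1 i ≤ 3 * c'.2.1)).card :=
              Finset.card_le_card (Finset.filter_subset_filter _ Finset.subset_union_left)
            exact_mod_cast this
      obtain ⟨S', hS2S', hS'F, hbud, hreq⟩ :=
        ih hpairL (fun c' hc' => hcond c' (List.mem_cons_of_mem c hc')) S2 u' hS2F hu'0 hu'y hu'S2 hinv'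
      refine ⟨S', Finset.subset_union_left.trans hS2S', hS'F, ?_, ?_⟩
      · -- budget
        have hsplitS : S' \ S = (S' \ S2) ∪ T := by
          ext i
          simp only [Finset.mem_sdiff, Finset.mem_union, hS2, Finset.mem_union]
          constructor
          · rintro ⟨hiS', hiS⟩
            by_cases hiT : i ∈ T
            · right; exact hiT
            · left; exact ⟨hiS', fun h => by rcases h with h | h; exact hiS h; exact hiT h⟩
          · rintro (⟨hiS', hiS⟩ | hiT)
            · exact ⟨hiS', fun h => hiS (Or.inl h)⟩
            · exact ⟨hS2S' (Finset.mem_union_right _ hiT), hTS i hiT⟩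
        have hdisj2 : Disjoint (S' \ S2) T := by
          rw [Finset.disjoint_right]
          intro i hiT h
          exact (Finset.mem_sdiff.mp h).2 (Finset.mem_union_right _ hiT)
        rw [hsplitS, Finset.sum_union hdisj2]
        -- key cost inequality
        obtain ⟨i0, hi0T, hi0max⟩ := Finset.exists_max_image T f hTne
        have hfi0 : 0 ≤ f i0 := hf i0 (hTF hi0T)
        have hcost : ∑ i ∈ T, f i ≤ ∑ i ∈ T, f i * (yh i - u i) + f i0 * m := by
          have h1 : ∀ i ∈ T, f i ≤ f i * (yh i - u i) + f i0 * (1 - (yh i - u i)) := by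
            intro i hiT
            have hfi : f i ≤ f i0 := hi0max i hiT
            have h2 : 0 ≤ 1 - (yh i - u i) := by
              have := hy1 i (hTF hiT); have := hu0 i (hTF hiT); linarith
            nlinarith [hTposS i hiT]
          calc ∑ i ∈ T, f i ≤ ∑ i ∈ T, (f i * (yh i - u i) + f i0 * (1 - (yh i - u i))) :=
                Finset.sum_le_sum h1
          _ = ∑ i ∈ T, f i * (yh i - u i) + f i0 * ((T.card : ℝ) - ∑ i ∈ T, (yh i - u i)) := by
                rw [Finset.sum_add_distrib, ← Finset.mul_sum]
                congr 1
                rw [Finset.sum_sub_distrib]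
                simp
          _ = _ := by rw [hTcard, hm]
        have hmcost : f i0 * m ≤ ∑ i ∈ P \ T, f i * g i := by
          calc f i0 * m = ∑ i ∈ P \ T, f i0 * g i := by rw [← Finset.mul_sum, hgs]
          _ ≤ ∑ i ∈ P \ T, f i * g i := by
            apply Finset.sum_le_sum
            intro i hi
            exact mul_le_mul_of_nonneg_right (hTcheap i hi i0 hi0T) (hg0 i)
        have hbudeq : ∑ i ∈ F, f i * (yh i - u' i)
            = ∑ i ∈ F, f i * (yh i - u i) - ∑ i ∈ T, f i * (yh i - u i) - ∑ i ∈ P \ T, f i * g i := by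
          have hsub : ∀ i, f i * (yh i - u' i) = f i * (yh i - u i)
              - f i * (if i ∈ T then yh i - u i else 0) - f i * (if i ∈ P \ T then g i else 0) := by
            intro i; rw [hu'eq i]; ring
          rw [Finset.sum_congr rfl (fun i _ => hsub i), Finset.sum_sub_distrib, Finset.sum_sub_distrib]
          congr 1
          · congr 1
            have : ∀ i, f i * (if i ∈ T then yh i - u i else 0) = if i ∈ T then f i * (yh i - u i) else 0 := by
              intro i; by_cases h : i ∈ T <;> simp [h]
            rw [Finset.sum_congr rfl (fun i _ => this i), Finset.sum_ite_mem,
              Finset.inter_eq_right.mpr hTF]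
          · have : ∀ i, f i * (if i ∈ P \ T then g i else 0) = if i ∈ P \ T then f i * g i else 0 := by
              intro i; by_cases h : i ∈ P \ T <;> simp [h]
            rw [Finset.sum_congr rfl (fun i _ => this i), Finset.sum_ite_mem,
              Finset.inter_eq_right.mpr (fun i hi => hPF (Finset.mem_sdiff.mp hi).1)]
        linarith [hbud, hcost, hmcost, hbudeq.symm.le, hbudeq.le]
      · -- requirements
        intro c' hc'
        rcases List.mem_cons.mp hc' with rfl | hc'
        · have hTBfull : (T.filter (fun i => dist c'.1 i ≤ 3 * c'.2.1)).card = k := by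
            rw [Finset.filter_true_of_mem hTB, hTcard]
          have hcard2 : (S2.filter (fun i => dist c'.1 i ≤ 3 * c'.2.1)).card = a + k := by
            rw [hS2, Finset.filter_union,
              Finset.card_union_of_disjoint (Finset.disjoint_filter_filter hSTdisj), hTBfull]
          have : (S2.filter (fun i => dist c'.1 i ≤ 3 * c'.2.1)).card
              ≤ (S'.filter (fun i => dist c'.1 i ≤ 3 * c'.2.1)).card :=
            Finset.card_le_card (Finset.filter_subset_filter _ hS2S')
          omega
        · exact hreq c' hc'

set_option maxHeartbeats 2000000 in
/-- The `3.16`-approximation for fault-tolerant facility location via the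
knapsack-cover-strengthened LP: for every feasible solution `(x, y, z)` of the strengthened
LP relaxation, there exists a feasible set `S ⊆ F` of facilities whose total cost (opening
costs plus each client's weight times the distance to its `r_j`-th closest open facility) is
at most `3.16` times the LP objective.  Here `π j` enumerates `F` in nondecreasing order of
distance to `j`; `z j 0 = 0` is the knapsack-cover constraint at `t = 0` (with `N(j,0) = ∅`
and `r_j ≥ 1`). -/
theorem ftfl_constant_approximation {X : Type*} [MetricSpace X] [DecidableEq X]
    (F : Finset X) (n : ℕ) (hcard : F.card = n) (hn : 1 ≤ n)
    (f : X → ℝ) (hf : ∀ i ∈ F, 0 ≤ f i)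
    (C : Finset X) (r : X → ℕ) (hr : ∀ j ∈ C, 1 ≤ r j ∧ r j ≤ n)
    (w : X → ℝ) (hw : ∀ j ∈ C, 0 < w j)
    (π : X → ℕ → X)
    (hπmem : ∀ j ∈ C, ∀ t : ℕ, 1 ≤ t → t ≤ n → π j t ∈ F)
    (hπinj : ∀ j ∈ C, ∀ t t' : ℕ, 1 ≤ t → t ≤ n → 1 ≤ t' → t' ≤ n →
      π j t = π j t' → t = t')
    (hπsorted : ∀ j ∈ C, ∀ t t' : ℕ, 1 ≤ t → t ≤ t' → t' ≤ n →
      dist j (π j t) ≤ dist j (π j t'))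
    (y : X → ℝ) (x : X → X → ℝ) (z : X → ℕ → ℝ)
    (hy : ∀ i ∈ F, 0 ≤ y i ∧ y i ≤ 1)
    (hx : ∀ i ∈ F, ∀ j ∈ C, 0 ≤ x i j ∧ x i j ≤ 1)
    (hz : ∀ j ∈ C, ∀ t : ℕ, t ≤ n → 0 ≤ z j t ∧ z j t ≤ 1)
    (hserve : ∀ j ∈ C, (r j : ℝ) ≤ ∑ i ∈ F, x i j)
    (hxy : ∀ i ∈ F, ∀ j ∈ C, x i j ≤ y i)
    (hkc : ∀ j ∈ C, ∀ t : ℕ, 1 ≤ t → t ≤ n → ∀ A ⊆ Nset π j t,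
      ((r j : ℝ) - (A.card : ℝ)) * z j t ≤ ∑ i ∈ Nset π j t \ A, x i j)
    (hz0 : ∀ j ∈ C, z j 0 = 0)
    (hzn : ∀ j ∈ C, z j n = 1) :
    ∃ S ⊆ F, (∀ j ∈ C, r j ≤ S.card) ∧
      (∑ i ∈ S, f i) +
        (∑ j ∈ C, w j * (((S.val.map fun i => dist j i).sort (· ≤ ·)).getD (r j - 1) 0))
      ≤ 3.16 * ((∑ i ∈ F, f i * y i) +
        ∑ j ∈ C, w j * ∑ t ∈ Finset.range n,
          (1 - z j t) * (cDist π j (t + 1) - cDist π j t)) := by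
  classical
  -- abbreviations
  set Fac : ℝ := ∑ i ∈ F, f i * y i with hFacDef
  set G : X → ℝ := fun j => ∑ t ∈ Finset.range n, (1 - z j t) * (cDist π j (t + 1) - cDist π j t)
    with hGdef
  set LP : ℝ := Fac + ∑ j ∈ C, w j * G j with hLPdef
  -- nonnegativity of increments
  have hD0 : ∀ j ∈ C, ∀ t, t < n → 0 ≤ cDist π j (t + 1) - cDist π j t := by
    intro j hj t ht
    rcases Nat.eq_zero_or_pos t with rfl | htpos
    · simp [cDist]
    · have h1 : cDist π j t = dist j (π j t) := if_neg (by omega)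
      have h2 : cDist π j (t + 1) = dist j (π j (t + 1)) := if_neg (by omega)
      rw [h1, h2]
      have := hπsorted j hj t (t + 1) htpos (by omega) (by omega)
      linarith
  have hG0 : ∀ j ∈ C, 0 ≤ G j := by
    intro j hj
    apply Finset.sum_nonneg
    intro t ht
    have htn := Finset.mem_range.mp ht
    have h1 := hz j hj t (Nat.le_of_lt htn)
    exact mul_nonneg (by linarith [h1.2]) (hD0 j hj t htn)
  have hFac0 : 0 ≤ Fac := by
    apply Finset.sum_nonneg
    intro i hi
    exact mul_nonneg (hf i hi) (hy i hi).1
  have hLP0 : 0 ≤ LP := by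
    rw [hLPdef]
    have : 0 ≤ ∑ j ∈ C, w j * G j :=
      Finset.sum_nonneg (fun j hj => mul_nonneg (hw j hj).le (hG0 j hj))
    linarith
  -- threshold function
  have hex : ∀ (β : ℝ) (j : X), ∃ t, n ≤ t ∨ β ≤ z j t := fun β j => ⟨n, Or.inl le_rfl⟩
  set tj : ℝ → X → ℕ := fun β j => Nat.find (hex β j) with htjdef
  have htj_le : ∀ β j, tj β j ≤ n := fun β j => Nat.find_le (Or.inl le_rfl)
  have htj_z : ∀ β j, j ∈ C → β ≤ 1 → β ≤ z j (tj β j) := by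
    intro β j hj hβ
    rcases Nat.find_spec (hex β j) with h | h
    · have : tj β j = n := le_antisymm (htj_le β j) h
      rw [htjdef] at this ⊢
      rw [this, hzn j hj]; exact hβ
    · exact h
  have htj_pos : ∀ β j, j ∈ C → 0 < β → 1 ≤ tj β j := by
    intro β j hj hβ
    by_contra h
    push_neg at h
    have hdef : tj β j = Nat.find (hex β j) := rfl
    have h0 : Nat.find (hex β j) = 0 := by omega
    have h1 := Nat.find_spec (hex β j)
    rw [h0] at h1
    rcases h1 with h1 | h1
    · omega
    · rw [hz0 j hj] at h1; linarith
  have htj_min : ∀ β j t, t < tj β j → t < n ∧ z j t < β := by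
    intro β j t ht
    have := Nat.find_min (hex β j) ht
    push_neg at this
    exact ⟨by omega, by linarith [this.2]⟩
  -- breakpoints
  set V : Finset ℝ := insert (1/20) (insert 1
    (((C ×ˢ Finset.range (n+1)).image (fun p => z p.1 p.2)).filter
      (fun v => 1/20 ≤ v ∧ v ≤ 1))) with hVdef
  have hVmem : ∀ v ∈ V, 1/20 ≤ v ∧ v ≤ 1 := by
    intro v hv
    rw [hVdef] at hv
    rcases Finset.mem_insert.mp hv with rfl | hv
    · norm_num
    rcases Finset.mem_insert.mp hv with rfl | hv
    · norm_num
    · exact (Finset.mem_filter.mp hv).2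
  have h1V : (1:ℝ) ∈ V := by rw [hVdef]; simp
  have h20V : (1/20:ℝ) ∈ V := by rw [hVdef]; simp
  have hzV : ∀ j ∈ C, ∀ t ≤ n, 1/20 ≤ z j t → z j t ∈ V := by
    intro j hj t htn hv
    rw [hVdef]
    apply Finset.mem_insert_of_mem
    apply Finset.mem_insert_of_mem
    refine Finset.mem_filter.mpr ⟨?_, hv, (hz j hj t htn).2⟩
    exact Finset.mem_image.mpr ⟨(j, t), Finset.mem_product.mpr
      ⟨hj, Finset.mem_range.mpr (by omega)⟩, rfl⟩
  set b : List ℝ := V.sort (· ≤ ·) with hbdef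
  set m : ℕ := b.length with hmdef
  set bf : ℕ → ℝ := fun l => b.getD l 0 with hbfdef
  have hbmem : ∀ l, l < m → bf l ∈ V := by
    intro l hl
    have : bf l = b.get ⟨l, hl⟩ := List.getD_eq_getElem b 0 hl
    rw [this]
    exact (Finset.mem_sort _).mp (List.get_mem b ⟨l, hl⟩)
  have hmono : ∀ p q, p < q → q < m → bf p < bf q := by
    intro p q hpq hq
    have hsl : List.Pairwise (· < ·) b := (Finset.sortedLT_sort V).pairwise
    have h1 : bf p = b.get ⟨p, by omega⟩ := List.getD_eq_getElem b 0 (by omega)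
    have h2 : bf q = b.get ⟨q, hq⟩ := List.getD_eq_getElem b 0 hq
    rw [h1, h2]
    exact List.Pairwise.rel_get_of_lt hsl (by simpa using hpq)
  have hmono' : ∀ p q, p ≤ q → q < m → bf p ≤ bf q := by
    intro p q hpq hq
    rcases eq_or_lt_of_le hpq with rfl | h
    · exact le_rfl
    · exact (hmono p q h hq).le
  have hVindex : ∀ v ∈ V, ∃ i, i < m ∧ bf i = v := by
    intro v hv
    have : v ∈ b := (Finset.mem_sort _).mpr hv
    obtain ⟨⟨i, hi⟩, hgi⟩ := List.mem_iff_get.mp this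
    refine ⟨i, hi, ?_⟩
    rw [hbfdef]
    simp only []
    rw [List.getD_eq_getElem b 0 hi]
    exact hgi
  have hm2 : 2 ≤ m := by
    have : 1 < V.card := Finset.one_lt_card.mpr ⟨1/20, h20V, 1, h1V, by norm_num⟩
    rw [hmdef, hbdef, Finset.length_sort]
    omega
  have hbf0 : bf 0 = 1/20 := by
    obtain ⟨i, hi, hbi⟩ := hVindex _ h20V
    rcases Nat.eq_zero_or_pos i with rfl | hpos
    · exact hbi
    · have h1 := hmono 0 i hpos hi
      have h2 := (hVmem _ (hbmem 0 (by omega))).1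
      rw [hbi] at h1
      linarith
  have hbflast : bf (m - 1) = 1 := by
    obtain ⟨i, hi, hbi⟩ := hVindex _ h1V
    rcases eq_or_lt_of_le (Nat.le_sub_one_of_lt hi) with heq | hlt
    · rw [heq] at hbi; exact hbi
    · have h1 := hmono i (m-1) hlt (by omega)
      have h2 := (hVmem _ (hbmem (m-1) (by omega))).2
      rw [hbi] at h1
      linarith
  have htele : ∑ l ∈ Finset.range (m - 1), (bf (l+1) - bf l) = 19/20 := by
    rw [Finset.sum_range_sub bf (m-1), hbflast, hbf0]
    norm_num
  have hbfpos : ∀ l, l < m → 0 < bf l := by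
    intro l hl
    have := (hVmem _ (hbmem l hl)).1
    linarith
  -- facility averaging
  have hfacavg : ∑ l ∈ Finset.range (m - 1), (bf (l+1) - bf l) / bf (l+1) ≤ 3 := by
    have hlog : ∀ l ∈ Finset.range (m - 1),
        (bf (l+1) - bf l) / bf (l+1) ≤ Real.log (bf (l+1)) - Real.log (bf l) := by
      intro l hl
      have hlm := Finset.mem_range.mp hl
      have hp1 : 0 < bf l := hbfpos l (by omega)
      have hp2 : 0 < bf (l+1) := hbfpos (l+1) (by omega)
      have h1 : Real.log (bf l / bf (l+1)) ≤ bf l / bf (l+1) - 1 :=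
        Real.log_le_sub_one_of_pos (by positivity)
      rw [Real.log_div (ne_of_gt hp1) (ne_of_gt hp2)] at h1
      have h2 : (bf (l+1) - bf l) / bf (l+1) = 1 - bf l / bf (l+1) := by
        field_simp
      rw [h2]
      linarith
    calc ∑ l ∈ Finset.range (m - 1), (bf (l+1) - bf l) / bf (l+1)
        ≤ ∑ l ∈ Finset.range (m - 1), (Real.log (bf (l+1)) - Real.log (bf l)) :=
          Finset.sum_le_sum hlog
    _ = Real.log (bf (m-1)) - Real.log (bf 0) := Finset.sum_range_sub (fun l => Real.log (bf l)) (m-1)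
    _ = Real.log 20 := by
        rw [hbflast, hbf0, Real.log_one]
        rw [show (1:ℝ)/20 = 20⁻¹ by norm_num, Real.log_inv]
        ring
    _ ≤ 3 := by
        rw [Real.log_le_iff_le_exp (by norm_num)]
        have h1 : (20:ℝ) ≤ 2.7182818283 ^ (3:ℕ) := by norm_num
        have h2 : (2.7182818283:ℝ) ^ (3:ℕ) ≤ (Real.exp 1) ^ (3:ℕ) := by
          apply pow_le_pow_left₀ (by norm_num) (le_of_lt Real.exp_one_gt_d9)
        have h3 : (Real.exp 1) ^ (3:ℕ) = Real.exp 3 := by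
          rw [← Real.exp_nat_mul]; norm_num
        linarith
  -- key sub-claim for connection averaging
  have hkey : ∀ v : ℝ, 0 ≤ v → (v < 1/20 ∨ v ∈ V) →
      ∑ l ∈ (Finset.range (m - 1)).filter (fun l => v < bf (l+1)), (bf (l+1) - bf l)
        ≤ 1 - v := by
    intro v hv0 hvcase
    by_cases hsmall : v < 1/20
    · have : (Finset.range (m - 1)).filter (fun l => v < bf (l+1)) = Finset.range (m - 1) := by
        apply Finset.filter_true_of_mem
        intro l hl
        have := (hVmem _ (hbmem (l+1) (by have := Finset.mem_range.mp hl; omega))).1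
        linarith
      rw [this, htele]; linarith
    · push_neg at hsmall
      have hvV : v ∈ V := by
        rcases hvcase with h | h
        · linarith
        · exact h
      obtain ⟨i, hi, hbi⟩ := hVindex v hvV
      have hfeq : (Finset.range (m - 1)).filter (fun l => v < bf (l+1)) = Finset.Ico i (m-1) := by
        ext l
        simp only [Finset.mem_filter, Finset.mem_range, Finset.mem_Ico]
        constructor
        · rintro ⟨hl, hvl⟩
          refine ⟨?_, hl⟩
          by_contra hil
          push_neg at hil
          have : bf (l+1) ≤ bf i := hmono' (l+1) i hil hi
          rw [hbi] at this
          linarith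
        · rintro ⟨hil, hl⟩
          refine ⟨hl, ?_⟩
          have : bf i < bf (l+1) := hmono i (l+1) (by omega) (by omega)
          rw [hbi] at this
          linarith
      rw [hfeq, Finset.sum_Ico_eq_sub _ (by omega),
        Finset.sum_range_sub bf (m-1), Finset.sum_range_sub bf i, hbflast, hbi]
      linarith [hbfpos 0 (by omega)]
  -- cDist as partial sums
  have hcD : ∀ j (T : ℕ), cDist π j T = ∑ t ∈ Finset.range T, (cDist π j (t+1) - cDist π j t) := by
    intro j T
    rw [Finset.sum_range_sub (fun t => cDist π j t) T]
    simp [cDist]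
  -- connection averaging
  have hconnavg : ∀ j ∈ C,
      ∑ l ∈ Finset.range (m - 1), (bf (l+1) - bf l) * cDist π j (tj (bf (l+1)) j) ≤ G j := by
    intro j hj
    have hstep : ∀ l ∈ Finset.range (m - 1),
        (bf (l+1) - bf l) * cDist π j (tj (bf (l+1)) j)
          = ∑ t ∈ Finset.range n, (if t < tj (bf (l+1)) j then (bf (l+1) - bf l) * (cDist π j (t+1) - cDist π j t) else 0) := by
      intro l hl
      rw [hcD j (tj (bf (l+1)) j), Finset.mul_sum]
      have hTn : tj (bf (l+1)) j ≤ n := htj_le _ _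
      rw [show Finset.range (tj (bf (l+1)) j) = (Finset.range n).filter (fun t => t < tj (bf (l+1)) j) by
        ext t; simp only [Finset.mem_range, Finset.mem_filter]; omega]
      rw [Finset.sum_filter]
    rw [Finset.sum_congr rfl hstep, Finset.sum_comm]
    apply Finset.sum_le_sum
    intro t ht
    have htn := Finset.mem_range.mp ht
    have hDt : 0 ≤ cDist π j (t+1) - cDist π j t := hD0 j hj t htn
    have hzt := hz j hj t (Nat.le_of_lt htn)
    calc ∑ l ∈ Finset.range (m - 1), (if t < tj (bf (l+1)) j then (bf (l+1) - bf l) * (cDist π j (t+1) - cDist π j t) else 0)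
        = (∑ l ∈ (Finset.range (m - 1)).filter (fun l => t < tj (bf (l+1)) j), (bf (l+1) - bf l)) * (cDist π j (t+1) - cDist π j t) := by
          rw [Finset.sum_mul, ← Finset.sum_filter]
    _ ≤ (1 - z j t) * (cDist π j (t+1) - cDist π j t) := by
          apply mul_le_mul_of_nonneg_right _ hDt
          calc ∑ l ∈ (Finset.range (m - 1)).filter (fun l => t < tj (bf (l+1)) j), (bf (l+1) - bf l)
              ≤ ∑ l ∈ (Finset.range (m - 1)).filter (fun l => z j t < bf (l+1)), (bf (l+1) - bf l) := by
                apply Finset.sum_le_sum_of_subset_of_nonneg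
                · intro l hl
                  obtain ⟨hl1, hl2⟩ := Finset.mem_filter.mp hl
                  exact Finset.mem_filter.mpr ⟨hl1, (htj_min _ _ _ hl2).2⟩
                · intro l hl _
                  have hlm := Finset.mem_range.mp (Finset.mem_filter.mp hl).1
                  have := hmono l (l+1) (by omega) (by omega)
                  linarith
          _ ≤ 1 - z j t := by
                apply hkey (z j t) hzt.1
                by_cases hc : z j t < 1/20
                · exact Or.inl hc
                · exact Or.inr (hzV j hj t (Nat.le_of_lt htn) (by linarith [not_lt.mp hc]))
  -- choose a good threshold
  set Phi : ℝ → ℝ := fun β => Fac / β + 3 * ∑ j ∈ C, w j * cDist π j (tj β j) with hPhidef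
  have hgood : ∃ l ∈ Finset.range (m - 1), Phi (bf (l+1)) ≤ 3.16 * LP := by
    by_contra hno
    push_neg at hno
    have hlow : 3.16 * LP * (19/20) < ∑ l ∈ Finset.range (m - 1), (bf (l+1) - bf l) * Phi (bf (l+1)) := by
      have h1 : ∑ l ∈ Finset.range (m - 1), (bf (l+1) - bf l) * (3.16 * LP)
          < ∑ l ∈ Finset.range (m - 1), (bf (l+1) - bf l) * Phi (bf (l+1)) := by
        apply Finset.sum_lt_sum_of_nonempty
        · refine ⟨0, Finset.mem_range.mpr (by omega)⟩
        · intro l hl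
          have hlm := Finset.mem_range.mp hl
          have hδ : 0 < bf (l+1) - bf l := by
            have := hmono l (l+1) (by omega) (by omega); linarith
          exact (mul_lt_mul_iff_right₀ hδ).mpr (hno l hl)
      rw [← Finset.sum_mul, htele] at h1
      linarith
    have hup : ∑ l ∈ Finset.range (m - 1), (bf (l+1) - bf l) * Phi (bf (l+1)) ≤ 3 * LP := by
      have hexpand : ∀ l ∈ Finset.range (m - 1), (bf (l+1) - bf l) * Phi (bf (l+1))
          = Fac * ((bf (l+1) - bf l) / bf (l+1))
            + 3 * ∑ j ∈ C, w j * ((bf (l+1) - bf l) * cDist π j (tj (bf (l+1)) j)) := by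
        intro l hl
        have hlm := Finset.mem_range.mp hl
        have hp : bf (l+1) ≠ 0 := ne_of_gt (hbfpos (l+1) (by omega))
        have hS : ∑ j ∈ C, w j * ((bf (l+1) - bf l) * cDist π j (tj (bf (l+1)) j))
            = (bf (l+1) - bf l) * ∑ j ∈ C, w j * cDist π j (tj (bf (l+1)) j) := by
          rw [Finset.mul_sum]
          exact Finset.sum_congr rfl (fun j _ => by ring)
        rw [hPhidef]
        simp only []
        rw [hS]
        field_simp
      rw [Finset.sum_congr rfl hexpand, Finset.sum_add_distrib]
      have hpart1 : ∑ l ∈ Finset.range (m - 1), Fac * ((bf (l+1) - bf l) / bf (l+1)) ≤ 3 * Fac := by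
        rw [← Finset.mul_sum]
        calc Fac * ∑ l ∈ Finset.range (m - 1), (bf (l+1) - bf l) / bf (l+1)
            ≤ Fac * 3 := mul_le_mul_of_nonneg_left hfacavg hFac0
        _ = 3 * Fac := by ring
      have hpart2 : ∑ l ∈ Finset.range (m - 1), 3 * ∑ j ∈ C, w j * ((bf (l+1) - bf l) * cDist π j (tj (bf (l+1)) j))
          ≤ 3 * ∑ j ∈ C, w j * G j := by
        rw [← Finset.mul_sum]
        apply mul_le_mul_of_nonneg_left _ (by norm_num : (0:ℝ) ≤ 3)
        rw [Finset.sum_comm]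
        apply Finset.sum_le_sum
        intro j hj
        rw [show ∀ s : Finset ℕ, ∑ l ∈ s, w j * ((bf (l+1) - bf l) * cDist π j (tj (bf (l+1)) j))
            = w j * ∑ l ∈ s, (bf (l+1) - bf l) * cDist π j (tj (bf (l+1)) j) from fun s => by rw [Finset.mul_sum]]
        exact mul_le_mul_of_nonneg_left (hconnavg j hj) (hw j hj).le
      rw [hLPdef]
      linarith
    nlinarith [hLP0]
  obtain ⟨l0, hl0, hPhil0⟩ := hgood
  set β : ℝ := bf (l0 + 1) with hβdef
  have hl0m := Finset.mem_range.mp hl0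
  have hβmem := hVmem _ (hbmem (l0+1) (by omega))
  have hβlow : 1/20 ≤ β := hβmem.1
  have hβ1 : β ≤ 1 := hβmem.2
  have hβpos : 0 < β := by linarith
  -- rounded opening variables
  set yh : X → ℝ := fun i => min (y i / β) 1 with hyhdef
  have hyh0 : ∀ i ∈ F, 0 ≤ yh i := by
    intro i hi
    exact le_min (div_nonneg (hy i hi).1 hβpos.le) zero_le_one
  have hyh1 : ∀ i ∈ F, yh i ≤ 1 := fun i _ => min_le_right _ _
  -- per-client data
  set ρc : X → ℝ := fun j => cDist π j (tj β j) with hρcdef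
  set Nc : X → Finset X := fun j => Nset π j (tj β j) with hNcdef
  have hTj1 : ∀ j ∈ C, 1 ≤ tj β j := fun j hj => htj_pos β j hj hβpos
  have hTjn : ∀ j, tj β j ≤ n := fun j => htj_le β j
  have hρceq : ∀ j ∈ C, ρc j = dist j (π j (tj β j)) := by
    intro j hj
    rw [hρcdef]
    simp only [cDist]
    rw [if_neg (by have := hTj1 j hj; omega)]
  have hNcF : ∀ j ∈ C, Nc j ⊆ F := by
    intro j hj i hi
    obtain ⟨s, hs, rfl⟩ := Finset.mem_image.mp hi
    obtain ⟨hs1, hs2⟩ := Finset.mem_Icc.mp hs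
    exact hπmem j hj s hs1 (le_trans hs2 (hTjn j))
  have hNcdist : ∀ j ∈ C, ∀ i ∈ Nc j, dist j i ≤ ρc j := by
    intro j hj i hi
    obtain ⟨s, hs, rfl⟩ := Finset.mem_image.mp hi
    obtain ⟨hs1, hs2⟩ := Finset.mem_Icc.mp hs
    rw [hρceq j hj]
    exact hπsorted j hj s (tj β j) hs1 hs2 (hTjn j)
  -- mass lemma
  have hmass : ∀ j ∈ C, (r j : ℝ) ≤ ∑ i ∈ Nc j, yh i := by
    intro j hj
    set A : Finset X := (Nc j).filter (fun i => β ≤ x i j) with hAdef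
    have hAN : A ⊆ Nc j := Finset.filter_subset _ _
    have hAyh : ∀ i ∈ A, yh i = 1 := by
      intro i hi
      obtain ⟨hiN, hix⟩ := Finset.mem_filter.mp hi
      have hiF : i ∈ F := hNcF j hj hiN
      have : β ≤ y i := le_trans hix (hxy i hiF j hj)
      rw [hyhdef]
      simp only []
      rw [min_eq_right]
      exact (one_le_div hβpos).mpr this
    have hAsum : ∑ i ∈ A, yh i = (A.card : ℝ) := by
      rw [Finset.sum_congr rfl hAyh]
      simp
    have hyh0' : ∀ i ∈ Nc j, 0 ≤ yh i := fun i hi => hyh0 i (hNcF j hj hi)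
    by_cases hA : (r j : ℝ) ≤ (A.card : ℝ)
    · calc (r j : ℝ) ≤ (A.card : ℝ) := hA
      _ = ∑ i ∈ A, yh i := hAsum.symm
      _ ≤ ∑ i ∈ Nc j, yh i :=
          Finset.sum_le_sum_of_subset_of_nonneg hAN (fun i hi _ => hyh0' i hi)
    · push_neg at hA
      have hkcA := hkc j hj (tj β j) (hTj1 j hj) (hTjn j) A hAN
      have hzβ : β ≤ z j (tj β j) := htj_z β j hj hβ1
      have hxsmall : ∀ i ∈ Nc j \ A, x i j / β ≤ yh i := by
        intro i hi
        obtain ⟨hiN, hiA⟩ := Finset.mem_sdiff.mp hi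
        have hiF : i ∈ F := hNcF j hj hiN
        have hxb : x i j < β := by
          by_contra hcon
          push_neg at hcon
          exact hiA (Finset.mem_filter.mpr ⟨hiN, hcon⟩)
        rw [hyhdef]
        apply le_min
        · gcongr
          exact hxy i hiF j hj
        · rw [div_le_one hβpos]; exact hxb.le
      have hsum2 : ((r j : ℝ) - A.card) ≤ ∑ i ∈ Nc j \ A, x i j / β := by
        rw [← Finset.sum_div]
        have hra : (0:ℝ) ≤ (r j : ℝ) - A.card := by linarith
        have h1 : ((r j : ℝ) - A.card) * β ≤ ((r j : ℝ) - A.card) * z j (tj β j) :=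
          mul_le_mul_of_nonneg_left hzβ hra
        rw [le_div_iff₀ hβpos]
        linarith [hkcA]
      have hsplit : ∑ i ∈ Nc j \ A, yh i + ∑ i ∈ A, yh i = ∑ i ∈ Nc j, yh i :=
        Finset.sum_sdiff hAN
      have h3 : ∑ i ∈ Nc j \ A, x i j / β ≤ ∑ i ∈ Nc j \ A, yh i :=
        Finset.sum_le_sum hxsmall
      linarith [hAsum]
  -- sorted list of clients
  set lst : List X := C.toList.mergeSort (fun j j' => decide (ρc j ≤ ρc j')) with hlstdef
  have hlstmem : ∀ j, j ∈ lst ↔ j ∈ C := by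
    intro j
    rw [hlstdef]
    rw [(List.mergeSort_perm C.toList _).mem_iff]
    exact Finset.mem_toList
  have hlstpair : lst.Pairwise (fun j j' => ρc j ≤ ρc j') := by
    have h := List.pairwise_mergeSort (le := fun j j' => decide (ρc j ≤ ρc j'))
      (fun a b c hab hbc => by
        simp only [decide_eq_true_eq] at *
        exact le_trans hab hbc)
      (fun a b => by
        simp only [Bool.or_eq_true, decide_eq_true_eq]
        exact le_total _ _)
      C.toList
    exact h.imp (fun hab => by simpa using hab)
  set L : List (X × ℝ × ℕ × Finset X) := lst.map (fun j => (j, ρc j, r j, Nc j)) with hLdef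
  have hLpair : L.Pairwise (fun c c' => c.2.1 ≤ c'.2.1) :=
    List.Pairwise.map _ (fun a b hab => hab) hlstpair
  have hLcond : ∀ c ∈ L, c.2.2.2 ⊆ F ∧ (∀ i ∈ c.2.2.2, dist c.1 i ≤ c.2.1) ∧
      ((c.2.2.1 : ℝ) ≤ ∑ i ∈ c.2.2.2, yh i) := by
    intro c hc
    obtain ⟨j, hj, rfl⟩ := List.mem_map.mp hc
    have hjC : j ∈ C := (hlstmem j).mp hj
    exact ⟨hNcF j hjC, hNcdist j hjC, hmass j hjC⟩
  obtain ⟨S, hSsub, hSF, hbud, hreq⟩ :=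
    core_round F f yh hf hyh0 hyh1 L hLpair hLcond ∅ (fun _ => 0)
      (Finset.empty_subset F) (fun i _ => le_rfl) (fun i hi => hyh0 i hi)
      (fun i hi => absurd hi (Finset.notMem_empty i))
      (fun c _ => by simp)
  have hreq' : ∀ j ∈ C, r j ≤ (S.filter (fun i => dist j i ≤ 3 * ρc j)).card := by
    intro j hj
    exact hreq (j, ρc j, r j, Nc j) (List.mem_map_of_mem ((hlstmem j).mpr hj))
  refine ⟨S, hSF, ?_, ?_⟩
  · intro j hj
    exact le_trans (hreq' j hj) (Finset.card_le_card (Finset.filter_subset _ _))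
  · -- cost bound
    have hfacility : ∑ i ∈ S, f i ≤ Fac / β := by
      have h1 : ∑ i ∈ S, f i ≤ ∑ i ∈ F, f i * (yh i - 0) := by
        have := hbud
        rwa [Finset.sdiff_empty] at this
      have h2 : ∑ i ∈ F, f i * (yh i - 0) ≤ ∑ i ∈ F, f i * y i / β := by
        apply Finset.sum_le_sum
        intro i hi
        rw [sub_zero]
        calc f i * yh i ≤ f i * (y i / β) :=
              mul_le_mul_of_nonneg_left (min_le_left _ _) (hf i hi)
        _ = f i * y i / β := by ring
      rw [hFacDef]
      calc ∑ i ∈ S, f i ≤ ∑ i ∈ F, f i * (yh i - 0) := h1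
      _ ≤ ∑ i ∈ F, f i * y i / β := h2
      _ = (∑ i ∈ F, f i * y i) / β := (Finset.sum_div _ _ _).symm
    have hconn : ∀ j ∈ C,
        w j * (((S.val.map fun i => dist j i).sort (· ≤ ·)).getD (r j - 1) 0)
          ≤ w j * (3 * ρc j) := by
      intro j hj
      apply mul_le_mul_of_nonneg_left _ (hw j hj).le
      exact sorted_getD_le S j (3 * ρc j) (r j) (hr j hj).1 (hreq' j hj)
    have hconnsum : ∑ j ∈ C, w j * (((S.val.map fun i => dist j i).sort (· ≤ ·)).getD (r j - 1) 0)
        ≤ 3 * ∑ j ∈ C, w j * ρc j := by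
      calc ∑ j ∈ C, w j * (((S.val.map fun i => dist j i).sort (· ≤ ·)).getD (r j - 1) 0)
          ≤ ∑ j ∈ C, w j * (3 * ρc j) := Finset.sum_le_sum hconn
      _ = 3 * ∑ j ∈ C, w j * ρc j := by
          rw [Finset.mul_sum]
          exact Finset.sum_congr rfl (fun j _ => by ring)
    have hPhiβ : Fac / β + 3 * ∑ j ∈ C, w j * ρc j = Phi β := by
      rw [hPhidef]
    have hfinal : ∑ i ∈ S, f i
        + ∑ j ∈ C, w j * (((S.val.map fun i => dist j i).sort (· ≤ ·)).getD (r j - 1) 0)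
        ≤ 3.16 * LP := by
      calc _ ≤ Fac / β + 3 * ∑ j ∈ C, w j * ρc j := by linarith
      _ = Phi β := hPhiβ
      _ ≤ 3.16 * LP := hPhil0
    calc ∑ i ∈ S, f i
        + ∑ j ∈ C, w j * (((S.val.map fun i => dist j i).sort (· ≤ ·)).getD (r j - 1) 0)
        ≤ 3.16 * LP := hfinal
    _ = 3.16 * ((∑ i ∈ F, f i * y i) + ∑ j ∈ C, w j * ∑ t ∈ Finset.range n,
          (1 - z j t) * (cDist π j (t + 1) - cDist π j t)) := by
        rw [hLPdef, hFacDef, hGdef]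
end

section
/- The natural LP relaxation of FTFL (without knapsack-cover constraints) has integrality gap Ω(n): for every integer n ≥ 1, consider the instance on the real line with n facilities, where facilities i_1,…,i_{n−1} are at coordinate 0 and facility i_n is at coordinate n, all opening costs are 0, and there is a single client j at coordinate 0 with requirement r_j = n and weight w_j = 1. Then every feasible integral solution has cost at least n, while the natural LP relaxation admits a feasible fractional solution of objective value at most 1 (namely y_i = 1 and x_{ij} = 1 for all i, and z_{jt} = t/n). -/
open scoped BigOperators

/-- Locations of the `n` facilities of the gap instance: facilities `i_1, …, i_{n-1}` at
coordinate `0` and facility `i_n` at coordinate `n`.  The single client sits at `0`. -/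
noncomputable def gapLoc (n : ℕ) (i : Fin n) : ℝ := if (i : ℕ) < n - 1 then 0 else n

/-- `c_t`: the distance from the client (at `0`) to its `t`-th closest facility
(`c_0 = 0`); here `c_t = 0` for `t < n` and `c_n = n`. -/
noncomputable def gapC (n t : ℕ) : ℝ := if t < n then 0 else n

lemma filter_lt_card (n t : ℕ) (ht : t ≤ n) :
    (Finset.univ.filter (fun i : Fin n => (i : ℕ) < t)).card = t := by
  have h : ∀ m ∈ Finset.range t, m < n := fun m hm => lt_of_lt_of_le (Finset.mem_range.mp hm) ht
  have : (Finset.univ.filter (fun i : Fin n => (i : ℕ) < t)) = (Finset.range t).attachFin h := by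
    ext i; simp [Finset.mem_attachFin]
  rw [this, Finset.card_attachFin, Finset.card_range]

/-- The natural LP relaxation of FTFL (without knapsack-cover constraints) has integrality
gap `Ω(n)`: on the line instance with `n - 1` facilities at `0`, one facility at `n`, all
opening costs `0`, and a single client at `0` with requirement `n` and weight `1`, every
feasible integral solution has cost at least `n`, while the natural LP admits a feasible
fractional solution of objective value at most `1` (namely `y_i = 1`, `x_{ij} = 1`,
`z_{jt} = t/n`). -/
theorem ftfl_natural_lp_gap (n : ℕ) (hn : 1 ≤ n) :
    (∀ S : Finset (Fin n), n ≤ S.card →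
      (n : ℝ) ≤ (∑ i ∈ S, (0 : ℝ)) +
        1 * (((S.val.map fun i => dist (gapLoc n i) (0 : ℝ)).sort (· ≤ ·)).getD (n - 1) 0)) ∧
    (∃ (y x : Fin n → ℝ) (z : ℕ → ℝ),
      (∀ i : Fin n, y i = 1) ∧ (∀ i : Fin n, x i = 1) ∧ (∀ t : ℕ, z t = (t : ℝ) / n) ∧
      (∀ i : Fin n, 0 ≤ y i ∧ y i ≤ 1) ∧ (∀ i : Fin n, 0 ≤ x i ∧ x i ≤ 1) ∧
      (∀ t : ℕ, t ≤ n → 0 ≤ z t ∧ z t ≤ 1) ∧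
      ((n : ℝ) ≤ ∑ i : Fin n, x i) ∧ (∀ i : Fin n, x i ≤ y i) ∧
      (∀ t : ℕ, 1 ≤ t → t ≤ n →
        (n : ℝ) * z t ≤ ∑ i ∈ Finset.univ.filter (fun i : Fin n => (i : ℕ) < t), x i) ∧
      (∑ i : Fin n, (0 : ℝ) * y i) +
        1 * (∑ t ∈ Finset.range n, (1 - z t) * (gapC n (t + 1) - gapC n t)) ≤ 1) := by
  have npos : (0 : ℝ) < n := by exact_mod_cast hn
  constructor
  · intro S hS
    have hScard : S.card = Fintype.card (Fin n) := by
      have := Finset.card_le_univ S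
      simp only [Fintype.card_fin] at *
      omega
    have hSuniv : S = Finset.univ := Finset.eq_univ_of_card S hScard
    subst hSuniv
    set m : Multiset ℝ := Finset.univ.val.map fun i : Fin n => dist (gapLoc n i) (0 : ℝ) with hm
    set L := m.sort (· ≤ ·) with hL
    have hlen : L.length = n := by
      rw [hL, Multiset.length_sort, hm, Multiset.card_map]
      simp
    have hmemm : (n : ℝ) ∈ m := by
      rw [hm, Multiset.mem_map]
      refine ⟨⟨n - 1, by omega⟩, by simp, ?_⟩
      have : gapLoc n ⟨n - 1, by omega⟩ = n := by simp [gapLoc]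
      rw [this, Real.dist_eq, sub_zero, abs_of_nonneg (by positivity)]
    have hmemL : (n : ℝ) ∈ L := (Multiset.mem_sort _).mpr hmemm
    obtain ⟨k, hk⟩ := List.get_of_mem hmemL
    have hlt : n - 1 < L.length := by omega
    have hsorted : L.Pairwise (· ≤ ·) := Multiset.pairwise_sort m _
    have hle : L.get k ≤ L.get ⟨n - 1, hlt⟩ := by
      apply hsorted.rel_get_of_le
      have := k.2
      show (k : ℕ) ≤ n - 1
      omega
    have hgetD : L.getD (n - 1) 0 = L.get ⟨n - 1, hlt⟩ := List.getD_eq_getElem L 0 hlt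
    rw [hk] at hle
    simp only [Finset.sum_const_zero, zero_add, one_mul]
    rw [hgetD]
    exact hle
  · refine ⟨fun _ => 1, fun _ => 1, fun t => (t : ℝ) / n, fun _ => rfl, fun _ => rfl,
      fun _ => rfl, fun _ => ⟨zero_le_one, le_refl 1⟩, fun _ => ⟨zero_le_one, le_refl 1⟩,
      ?_, ?_, fun _ => le_refl 1, ?_, ?_⟩
    · intro t ht
      constructor
      · positivity
      · rw [div_le_one npos]
        exact_mod_cast ht
    · simp
    · intro t ht1 htn
      rw [mul_div_cancel₀ _ (ne_of_gt npos)]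
      rw [Finset.sum_const, filter_lt_card n t htn]
      simp
    · have hsum : ∑ t ∈ Finset.range n, (1 - (t : ℝ) / n) * (gapC n (t + 1) - gapC n t) = 1 := by
        rw [Finset.sum_eq_single_of_mem (n - 1) (Finset.mem_range.mpr (by omega))]
        · have h1 : n - 1 + 1 = n := by omega
          have h2 : gapC n (n - 1 + 1) = n := by rw [h1]; simp [gapC]
          have h3 : gapC n (n - 1) = 0 := by simp only [gapC]; rw [if_pos (by omega)]
          rw [h2, h3, sub_zero]
          have h4 : ((n - 1 : ℕ) : ℝ) = (n : ℝ) - 1 := by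
            rw [Nat.cast_sub hn]; simp
          rw [h4]
          field_simp
          ring
        · intro t htr htne
          have ht : t < n := Finset.mem_range.mp htr
          have h1 : gapC n (t + 1) = 0 := by simp only [gapC]; rw [if_pos (by omega)]
          have h2 : gapC n t = 0 := by simp only [gapC]; rw [if_pos (by omega)]
          rw [h1, h2]
          ring
      rw [hsum]
      simp
end
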